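/- arXiv:1304.5056 — 8 statements merged into one kernel-verified Lean document; each statement's English description precedes it below -/
import Mathlib

section
/- Let n ≥ 1 and let (j_1,…,j_n), (i_1,…,i_n) ∈ 𝒜_n be such that the multisets {j_1,…,j_n} and {i_1,…,i_n} are different. If ∫ g_{j_1}⋯g_{j_n} · conj(g_{i_1}⋯g_{i_n}) dp ≠ 0, then there exist 1 ≤ l, m ≤ n with l ≠ m such that either i_l = −i_m or j_l = −j_m. -/
open MeasureTheory ProbabilityTheory

section AuxMeasure

lemma map_withDensity_measEquiv {α β : Type*} [MeasurableSpace α] [MeasurableSpace β]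
    (μ : Measure α) (e : α ≃ᵐ β) (D : α → ENNReal) (hD : Measurable D) :
    (μ.withDensity D).map e = (μ.map e).withDensity (D ∘ e.symm) := by
  ext s hs
  rw [Measure.map_apply e.measurable hs, withDensity_apply _ (e.measurable hs),
    withDensity_apply _ hs,
    setLIntegral_map hs (hD.comp e.symm.measurable) e.measurable]
  refine setLIntegral_congr_fun (e.measurable hs) (fun x _ => ?_)
  simp

lemma gaussian_prod_withDensity :
    (gaussianReal 0 1).prod (gaussianReal 0 1) =
      (volume : Measure (ℝ × ℝ)).withDensity
        (fun q => gaussianPDF 0 1 q.1 * gaussianPDF 0 1 q.2) := by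
  have h1 : gaussianReal 0 1 = (volume : Measure ℝ).withDensity (gaussianPDF 0 1) :=
    gaussianReal_of_var_ne_zero 0 one_ne_zero
  refine Measure.prod_eq fun s t hs ht => ?_
  rw [Measure.volume_eq_prod, withDensity_apply _ (hs.prod ht), ← Measure.prod_restrict,
    lintegral_prod_mul ((measurable_gaussianPDF 0 1).aemeasurable)
      ((measurable_gaussianPDF 0 1).aemeasurable)]
  rw [h1, withDensity_apply _ hs, withDensity_apply _ ht]

lemma gaussianPDF_mul_invariant {x y x' y' : ℝ} (hxy : x^2 + y^2 = x'^2 + y'^2) :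
    gaussianPDF 0 1 x * gaussianPDF 0 1 y = gaussianPDF 0 1 x' * gaussianPDF 0 1 y' := by
  simp only [gaussianPDF]
  rw [← ENNReal.ofReal_mul (gaussianPDFReal_nonneg 0 1 x),
    ← ENNReal.ofReal_mul (gaussianPDFReal_nonneg 0 1 x')]
  congr 1
  simp only [gaussianPDFReal, NNReal.coe_one, mul_one, sub_zero]
  rw [mul_mul_mul_comm, ← Real.exp_add, mul_mul_mul_comm, ← Real.exp_add]
  congr 1
  have : -x ^ 2 / 2 + -y ^ 2 / 2 = -x' ^ 2 / 2 + -y' ^ 2 / 2 := by linarith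
  rw [this]

lemma gauss_moment_zero {Ω : Type*} [MeasurableSpace Ω] (p : Measure Ω) [IsProbabilityMeasure p]
    {h l : Ω → ℝ} (mh : Measurable h) (ml : Measurable l)
    (hh : p.map h = gaussianReal 0 1) (hl : p.map l = gaussianReal 0 1)
    (hind : IndepFun h l p) {a b : ℕ} (hab : a ≠ b) :
    ∫ ω, ((h ω : ℂ) + Complex.I * (l ω : ℂ)) ^ a *
      ((h ω : ℂ) - Complex.I * (l ω : ℂ)) ^ b ∂p = 0 := by
  classical
  set f : ℂ → ℂ := fun z => z ^ a * (star z) ^ b with hf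
  have hfc : Continuous f := (continuous_pow a).mul (continuous_star.pow b)
  set w : Ω → ℂ := fun ω => (h ω : ℂ) + Complex.I * (l ω : ℂ) with hwdef
  have mw : Measurable w :=
    (Complex.measurable_ofReal.comp mh).add
      (measurable_const.mul (Complex.measurable_ofReal.comp ml))
  set D : ℝ × ℝ → ENNReal := fun q => gaussianPDF 0 1 q.1 * gaussianPDF 0 1 q.2 with hD
  have hDmeas : Measurable D :=
    ((measurable_gaussianPDF 0 1).comp measurable_fst).mul
      ((measurable_gaussianPDF 0 1).comp measurable_snd)
  set Dc : ℂ → ENNReal := fun z => gaussianPDF 0 1 z.re * gaussianPDF 0 1 z.im with hDc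
  have hDcmeas : Measurable Dc :=
    ((measurable_gaussianPDF 0 1).comp Complex.measurable_re).mul
      ((measurable_gaussianPDF 0 1).comp Complex.measurable_im)
  -- identify the law of w
  have hpair := (indepFun_iff_map_prod_eq_prod_map_map mh.aemeasurable ml.aemeasurable).mp hind
  rw [hh, hl] at hpair
  have hwcomp : w = Complex.measurableEquivRealProd.symm ∘ (fun ω => (h ω, l ω)) := by
    funext ω
    apply Complex.ext <;>
      simp [hwdef, Complex.measurableEquivRealProd_symm_apply]
  have hwlaw : p.map w = (volume : Measure ℂ).withDensity Dc := by
    rw [hwcomp, ← Measure.map_map Complex.measurableEquivRealProd.symm.measurable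
      (mh.prodMk ml), hpair, gaussian_prod_withDensity,
      map_withDensity_measEquiv _ Complex.measurableEquivRealProd.symm D hDmeas,
      (Complex.volume_preserving_equiv_real_prod.symm _).map_eq]
    rfl
  -- rotation invariance
  have habR : ((a : ℝ) - b) ≠ 0 := by
    intro hz
    exact hab (Nat.cast_injective (by linarith : (a:ℝ) = b))
  set u : Circle := Circle.exp (Real.pi / ((a : ℝ) - b)) with hu
  set R : ℂ ≃ᵐ ℂ := (rotation u).toHomeomorph.toMeasurableEquiv with hR
  have hRinv : Dc ∘ R.symm = Dc := by
    funext z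
    have h1 : ((R.symm z).re)^2 + ((R.symm z).im)^2 = z.re^2 + z.im^2 := by
      have : Complex.normSq (R.symm z) = Complex.normSq z := by
        show Complex.normSq ((rotation u).symm z) = Complex.normSq z
        rw [rotation_symm, rotation_apply, map_mul]
        have : Complex.normSq (↑(u⁻¹) : ℂ) = 1 := by
          rw [Complex.normSq_eq_norm_sq, Circle.norm_coe]; norm_num
        rw [this, one_mul]
      simpa [Complex.normSq_apply, sq] using this
    exact gaussianPDF_mul_invariant h1
  have hrot : (p.map w).map R = p.map w := by
    rw [hwlaw, map_withDensity_measEquiv _ R Dc hDcmeas]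
    have : (volume : Measure ℂ).map R = volume := by
      show (volume : Measure ℂ).map (rotation u) = volume
      exact (rotation u).measurePreserving.map_eq
    rw [this, hRinv]
  -- the rotation identity for the integral
  set I : ℂ := ∫ z, f z ∂(p.map w) with hI
  have hfactor : (↑u : ℂ) ^ a * (star (↑u : ℂ)) ^ b = -1 := by
    rw [hu, Circle.coe_exp]
    rw [← Complex.exp_nat_mul]
    rw [show star (Complex.exp (↑(Real.pi / ((a:ℝ) - b)) * Complex.I)) =
        Complex.exp (-(↑(Real.pi / ((a:ℝ) - b)) * Complex.I)) by
      rw [Complex.star_def, ← Complex.exp_conj]; congr 1; simp]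
    rw [← Complex.exp_nat_mul, ← Complex.exp_add, ← Complex.exp_pi_mul_I]
    congr 1
    have : ((a : ℂ) - b) ≠ 0 := by
      simpa using Complex.ofReal_ne_zero.mpr habR
    push_cast
    field_simp
    ring
  have hIrot : I = -I := by
    conv_lhs => rw [hI, ← hrot]
    rw [integral_map R.measurable.aemeasurable hfc.aestronglyMeasurable]
    have : ∀ z : ℂ, f (R z) = ((↑u : ℂ) ^ a * (star (↑u : ℂ)) ^ b) * f z := by
      intro z
      show f ((rotation u) z) = _
      rw [rotation_apply]
      simp only [hf, mul_pow, star_mul']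
      ring
    simp_rw [this, hfactor]
    rw [integral_const_mul]
    simp [hI]
  have hIzero : I = 0 := by
    have h2 : (2 : ℂ) * I = 0 := by linear_combination hIrot
    simpa using h2
  -- conclude
  have hpt : ∀ ω, ((h ω : ℂ) + Complex.I * (l ω : ℂ)) ^ a *
      ((h ω : ℂ) - Complex.I * (l ω : ℂ)) ^ b = f (w ω) := by
    intro ω
    simp only [hf, hwdef]
    congr 2
    simp [Complex.ext_iff]
  calc ∫ ω, ((h ω : ℂ) + Complex.I * (l ω : ℂ)) ^ a *
      ((h ω : ℂ) - Complex.I * (l ω : ℂ)) ^ b ∂p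
      = ∫ ω, f (w ω) ∂p := by simp_rw [hpt]
    _ = ∫ z, f z ∂(p.map w) := (integral_map mw.aemeasurable hfc.aestronglyMeasurable).symm
    _ = 0 := hIzero

lemma indepFun_integral_mul_of_integrable_complex {Ω : Type*} {mΩ : MeasurableSpace Ω}
    {μ : Measure Ω} {X Y : Ω → ℂ} (hXY : IndepFun X Y μ)
    (hX : Integrable X μ) (hY : Integrable Y μ) :
    ∫ ω, X ω * Y ω ∂μ = (∫ ω, X ω ∂μ) * ∫ ω, Y ω ∂μ := by
  have hXr : Integrable (fun ω => (X ω).re) μ := by simpa using hX.re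
  have hXi : Integrable (fun ω => (X ω).im) μ := by simpa using hX.im
  have hYr : Integrable (fun ω => (Y ω).re) μ := by simpa using hY.re
  have hYi : Integrable (fun ω => (Y ω).im) μ := by simpa using hY.im
  have irr : IndepFun (fun ω => (X ω).re) (fun ω => (Y ω).re) μ :=
    hXY.comp Complex.measurable_re Complex.measurable_re
  have iri : IndepFun (fun ω => (X ω).re) (fun ω => (Y ω).im) μ :=
    hXY.comp Complex.measurable_re Complex.measurable_im
  have iir : IndepFun (fun ω => (X ω).im) (fun ω => (Y ω).re) μ :=
    hXY.comp Complex.measurable_im Complex.measurable_re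
  have iii : IndepFun (fun ω => (X ω).im) (fun ω => (Y ω).im) μ :=
    hXY.comp Complex.measurable_im Complex.measurable_im
  have h1 : Integrable (fun ω => (X ω).re * (Y ω).re) μ := irr.integrable_mul hXr hYr
  have h2 : Integrable (fun ω => (X ω).im * (Y ω).im) μ := iii.integrable_mul hXi hYi
  have h3 : Integrable (fun ω => (X ω).re * (Y ω).im) μ := iri.integrable_mul hXr hYi
  have h4 : Integrable (fun ω => (X ω).im * (Y ω).re) μ := iir.integrable_mul hXi hYr
  have hmul : Integrable (fun ω => X ω * Y ω) μ := hXY.integrable_mul hX hY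
  have e1 : ∫ ω, (X ω).re * (Y ω).re ∂μ = (∫ ω, (X ω).re ∂μ) * ∫ ω, (Y ω).re ∂μ :=
    irr.integral_fun_mul_eq_mul_integral hXr.1 hYr.1
  have e2 : ∫ ω, (X ω).im * (Y ω).im ∂μ = (∫ ω, (X ω).im ∂μ) * ∫ ω, (Y ω).im ∂μ :=
    iii.integral_fun_mul_eq_mul_integral hXi.1 hYi.1
  have e3 : ∫ ω, (X ω).re * (Y ω).im ∂μ = (∫ ω, (X ω).re ∂μ) * ∫ ω, (Y ω).im ∂μ :=
    iri.integral_fun_mul_eq_mul_integral hXr.1 hYi.1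
  have e4 : ∫ ω, (X ω).im * (Y ω).re ∂μ = (∫ ω, (X ω).im ∂μ) * ∫ ω, (Y ω).re ∂μ :=
    iir.integral_fun_mul_eq_mul_integral hXi.1 hYr.1
  have hXre : (∫ ω, X ω ∂μ).re = ∫ ω, (X ω).re ∂μ := by
    simpa [RCLike.re_to_complex] using (integral_re hX).symm
  have hXim : (∫ ω, X ω ∂μ).im = ∫ ω, (X ω).im ∂μ := by
    simpa [RCLike.im_to_complex] using (integral_im hX).symm
  have hYre : (∫ ω, Y ω ∂μ).re = ∫ ω, (Y ω).re ∂μ := by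
    simpa [RCLike.re_to_complex] using (integral_re hY).symm
  have hYim : (∫ ω, Y ω ∂μ).im = ∫ ω, (Y ω).im ∂μ := by
    simpa [RCLike.im_to_complex] using (integral_im hY).symm
  have hmulre : (∫ ω, X ω * Y ω ∂μ).re = ∫ ω, (X ω * Y ω).re ∂μ := by
    simpa [RCLike.re_to_complex] using (integral_re hmul).symm
  have hmulim : (∫ ω, X ω * Y ω ∂μ).im = ∫ ω, (X ω * Y ω).im ∂μ := by
    simpa [RCLike.im_to_complex] using (integral_im hmul).symm
  apply Complex.ext
  · rw [hmulre]
    simp only [Complex.mul_re, hXre, hXim, hYre, hYim]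
    rw [integral_sub h1 h2, e1, e2]
  · rw [hmulim]
    simp only [Complex.mul_im, hXre, hXim, hYre, hYim]
    rw [integral_add h3 h4, e3, e4]

lemma indepFun_integral_mul_complex {Ω : Type*} {mΩ : MeasurableSpace Ω}
    {μ : Measure Ω} {X Y : Ω → ℂ} (hXY : IndepFun X Y μ)
    (hX : AEStronglyMeasurable X μ) (hY : AEStronglyMeasurable Y μ) :
    ∫ ω, X ω * Y ω ∂μ = (∫ ω, X ω ∂μ) * ∫ ω, Y ω ∂μ := by
  by_cases h'X : X =ᵐ[μ] 0
  · have h' : (fun ω => X ω * Y ω) =ᵐ[μ] 0 := by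
      filter_upwards [h'X] with ω hω
      simp [hω]
    rw [integral_congr_ae h'X, integral_congr_ae h']
    simp
  by_cases h'Y : Y =ᵐ[μ] 0
  · have h' : (fun ω => X ω * Y ω) =ᵐ[μ] 0 := by
      filter_upwards [h'Y] with ω hω
      simp [hω]
    rw [integral_congr_ae h'Y, integral_congr_ae h']
    simp
  by_cases h : Integrable (X * Y) μ
  · have HX : Integrable X μ := hXY.integrable_left_of_integrable_op (· * ·) 1 one_ne_zero
      (fun x y => by simp [enorm_mul]) h hX hY h'Y
    have HY : Integrable Y μ := hXY.integrable_right_of_integrable_op (· * ·) 1 one_ne_zero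
      (fun x y => by simp [enorm_mul]) h hX hY h'X
    exact indepFun_integral_mul_of_integrable_complex hXY HX HY
  · have h' : ¬ Integrable (fun ω => X ω * Y ω) μ := h
    rw [integral_undef h']
    have I : ¬(Integrable X μ ∧ Integrable Y μ) := by
      rintro ⟨HX, HY⟩
      exact h (hXY.integrable_mul HX HY)
    rw [not_and_or] at I
    rcases I with I | I <;> simp [integral_undef I]

lemma count_ofFn_eq_card_filter (n : ℕ) (f : Fin n → ℤ) (a : ℤ) :
    Multiset.count a ((List.ofFn f : List ℤ) : Multiset ℤ)
      = (Finset.univ.filter (fun k => f k = a)).card := by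
  rw [List.ofFn_eq_map]
  show Multiset.count a (Multiset.map f ↑(List.finRange n)) = _
  rw [Multiset.count_map, Finset.card_def, Finset.filter_val]
  have huniv : (Finset.univ : Finset (Fin n)).val = ↑(List.finRange n) := rfl
  rw [huniv]
  congr 1
  exact Multiset.filter_congr (fun k _ => by constructor <;> intro <;> omega)

end AuxMeasure

/-- The family `(g_n)_{n ∈ ℤ \ {0}}` of centered complex Gaussian random
variables from the paper: `g_n = c (h_n + i l_n)` for `n > 0`, where
`(h_n)_{n>0}` and `(l_n)_{n>0}` are mutually independent standard real
Gaussians `N(0,1)`, and `g_{-n} = conj (g_n)` for `n > 0`. -/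
structure GaussianData (Ω : Type*) [MeasurableSpace Ω] (p : Measure Ω) where
  c : ℝ
  c_pos : 0 < c
  h : ℤ → Ω → ℝ
  l : ℤ → Ω → ℝ
  g : ℤ → Ω → ℂ
  g_def : ∀ n : ℤ, 0 < n → ∀ ω, g n ω = (c : ℂ) * ((h n ω : ℂ) + Complex.I * (l n ω : ℂ))
  g_neg : ∀ n : ℤ, 0 < n → ∀ ω, g (-n) ω = starRingEnd ℂ (g n ω)
  h_meas : ∀ n : ℤ, 0 < n → Measurable (h n)
  l_meas : ∀ n : ℤ, 0 < n → Measurable (l n)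
  h_law : ∀ n : ℤ, 0 < n → p.map (h n) = gaussianReal 0 1
  l_law : ∀ n : ℤ, 0 < n → p.map (l n) = gaussianReal 0 1
  indep : iIndepFun (m := fun _ => (inferInstance : MeasurableSpace ℝ))
      (fun nb : {n : ℤ // 0 < n} × Bool => if nb.2 then l nb.1.1 else h nb.1.1) p

lemma g_meas_aux {Ω : Type*} {M' : MeasurableSpace Ω} {c : ℝ}
    {h l : ℤ → Ω → ℝ} {g : ℤ → Ω → ℂ}
    (g_def : ∀ n : ℤ, 0 < n → ∀ ω, g n ω = (c : ℂ) * ((h n ω : ℂ) + Complex.I * (l n ω : ℂ)))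
    (g_neg : ∀ n : ℤ, 0 < n → ∀ ω, g (-n) ω = starRingEnd ℂ (g n ω))
    (m : ℤ) (hm : m ≠ 0)
    (hh : Measurable[M'] (h |m|)) (hl : Measurable[M'] (l |m|)) :
    Measurable[M'] (g m) := by
  rcases hm.lt_or_gt with hneg | hpos
  · have habs : |m| = -m := abs_of_neg hneg
    have hgm : g m = fun ω => starRingEnd ℂ
        ((c : ℂ) * ((h (-m) ω : ℂ) + Complex.I * (l (-m) ω : ℂ))) := by
      funext ω
      rw [← g_def (-m) (by omega) ω, ← g_neg (-m) (by omega) ω, neg_neg]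
    rw [hgm]
    rw [habs] at hh hl
    exact Complex.continuous_conj.measurable.comp
      (measurable_const.mul ((Complex.measurable_ofReal.comp hh).add
        (measurable_const.mul (Complex.measurable_ofReal.comp hl))))
  · have habs : |m| = m := abs_of_pos hpos
    have hgm : g m = fun ω => (c : ℂ) * ((h m ω : ℂ) + Complex.I * (l m ω : ℂ)) :=
      funext (g_def m hpos)
    rw [hgm]
    rw [habs] at hh hl
    exact measurable_const.mul ((Complex.measurable_ofReal.comp hh).add
      (measurable_const.mul (Complex.measurable_ofReal.comp hl)))

/-- If `(j_1,…,j_n), (i_1,…,i_n) ∈ 𝒜_n` determine different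
multisets and `∫ g_{j_1}⋯g_{j_n} conj(g_{i_1}⋯g_{i_n}) dp ≠ 0`, then some pair
of distinct indices `l ≠ m` satisfies `i_l = -i_m` or `j_l = -j_m`. -/
theorem nonvanishing_moment_implies_pair
    {Ω : Type*} [MeasurableSpace Ω] (p : Measure Ω) [IsProbabilityMeasure p]
    (G : GaussianData Ω p)
    (n : ℕ) (hn : 1 ≤ n)
    (j i : Fin n → ℤ)
    (hj0 : ∀ k, j k ≠ 0) (hi0 : ∀ k, i k ≠ 0)
    (hjsum : ∑ k, j k = 0) (hisum : ∑ k, i k = 0)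
    (hne : (List.ofFn j : Multiset ℤ) ≠ (List.ofFn i : Multiset ℤ))
    (hint : ∫ ω, (∏ k, G.g (j k) ω) * starRingEnd ℂ (∏ k, G.g (i k) ω) ∂p ≠ 0) :
    ∃ l m : Fin n, l ≠ m ∧ (i l = -(i m) ∨ j l = -(j m)) := by
  classical
  rename_i mOmega hPM
  obtain ⟨c, c_pos, h, l, g, g_def, g_neg, h_meas, l_meas, h_law, l_law, indep⟩ := G
  by_contra hcon
  push_neg at hcon
  -- counting
  set cnt : (Fin n → ℤ) → ℤ → ℕ := fun f a => (Finset.univ.filter (fun k => f k = a)).card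
    with hcnt
  obtain ⟨w, hw⟩ : ∃ a : ℤ, cnt j a ≠ cnt i a := by
    by_contra hall
    push_neg at hall
    refine hne (Multiset.ext.mpr fun a => ?_)
    rw [count_ofFn_eq_card_filter, count_ofFn_eq_card_filter]
    exact hall a
  have hzcnt : ∀ f : Fin n → ℤ, (∀ k, f k ≠ 0) → cnt f 0 = 0 := by
    intro f hf
    simp only [hcnt]
    rw [Finset.card_eq_zero, Finset.filter_eq_empty_iff]
    exact fun k _ => hf k
  have hw0 : w ≠ 0 := by
    rintro rfl
    rw [hzcnt j hj0, hzcnt i hi0] at hw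
    exact hw rfl
  set v : ℤ := |w| with hv
  have hvpos : 0 < v := abs_pos.mpr hw0
  have hcases : w = v ∨ w = -v := by rcases abs_choice w with hc | hc <;> omega
  have nonempty_of_ne : ∀ (f : Fin n → ℤ) (a : ℤ), cnt f a ≠ 0 → ∃ k, f k = a := by
    intro f a hfa
    obtain ⟨k, hk⟩ := Finset.card_ne_zero.mp hfa
    exact ⟨k, (Finset.mem_filter.mp hk).2⟩
  have oj : cnt j v = 0 ∨ cnt j (-v) = 0 := by
    by_contra hb
    push_neg at hb
    obtain ⟨k1, hk1⟩ := nonempty_of_ne j v hb.1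
    obtain ⟨k2, hk2⟩ := nonempty_of_ne j (-v) hb.2
    have hk12 : k1 ≠ k2 := by
      intro hEq
      rw [hEq, hk2] at hk1
      omega
    exact (hcon k1 k2 hk12).2 (by rw [hk1, hk2, neg_neg])
  have oi : cnt i v = 0 ∨ cnt i (-v) = 0 := by
    by_contra hb
    push_neg at hb
    obtain ⟨k1, hk1⟩ := nonempty_of_ne i v hb.1
    obtain ⟨k2, hk2⟩ := nonempty_of_ne i (-v) hb.2
    have hk12 : k1 ≠ k2 := by
      intro hEq
      rw [hEq, hk2] at hk1
      omega
    exact (hcon k1 k2 hk12).1 (by rw [hk1, hk2, neg_neg])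
  set A : ℕ := cnt j v + cnt i (-v) with hA
  set B : ℕ := cnt j (-v) + cnt i v with hB
  have habne : A ≠ B := by
    intro hEq
    have hmatch : cnt j v = cnt i v ∧ cnt j (-v) = cnt i (-v) := by
      rcases oj with h1 | h1 <;> rcases oi with h2 | h2 <;> omega
    rcases hcases with hc | hc
    · rw [hc] at hw; exact hw hmatch.1
    · rw [hc] at hw; exact hw hmatch.2
  -- σ-algebras and independence
  set F : {m : ℤ // 0 < m} × Bool → Ω → ℝ :=
    fun nb => if nb.2 then l nb.1.1 else h nb.1.1 with hF
  have hFmeas : ∀ q, Measurable (F q) := by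
    rintro ⟨⟨m, hm⟩, b⟩
    cases b
    · exact h_meas m hm
    · exact l_meas m hm
  have hle : ∀ q, MeasurableSpace.comap (F q) inferInstance ≤ mOmega :=
    fun q => (hFmeas q).comap_le
  set S : Set ({m : ℤ // 0 < m} × Bool) := {q | (q.1 : ℤ) = v} with hS
  set MS := ⨆ q ∈ S, MeasurableSpace.comap (F q) inferInstance with hMS
  set MT := ⨆ q ∈ Sᶜ, MeasurableSpace.comap (F q) inferInstance with hMT
  have hindepST : Indep MS MT p :=
    indep_iSup_of_disjoint hle ((iIndepFun_iff_iIndep _ _ _).mp indep) disjoint_compl_right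
  have hmeasF : ∀ (U : Set ({m : ℤ // 0 < m} × Bool)) (q) (_ : q ∈ U),
      Measurable[⨆ r ∈ U, MeasurableSpace.comap (F r) inferInstance] (F q) :=
    fun U q hq => measurable_iff_comap_le.mpr
      (le_biSup (fun r => MeasurableSpace.comap (F r) inferInstance) hq)
  have hmeash : ∀ (U : Set ({m : ℤ // 0 < m} × Bool)) (m : ℤ) (hm : 0 < m),
      ((⟨⟨m, hm⟩, false⟩ : {m : ℤ // 0 < m} × Bool) ∈ U) →
      Measurable[⨆ r ∈ U, MeasurableSpace.comap (F r) inferInstance] (h m) := by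
    intro U m hm hq
    have := hmeasF U _ hq
    simpa [hF] using this
  have hmeasl : ∀ (U : Set ({m : ℤ // 0 < m} × Bool)) (m : ℤ) (hm : 0 < m),
      ((⟨⟨m, hm⟩, true⟩ : {m : ℤ // 0 < m} × Bool) ∈ U) →
      Measurable[⨆ r ∈ U, MeasurableSpace.comap (F r) inferInstance] (l m) := by
    intro U m hm hq
    have := hmeasF U _ hq
    simpa [hF] using this
  -- the two factors
  set Xf : Ω → ℂ := fun ω => (g v ω) ^ A * (starRingEnd ℂ (g v ω)) ^ B with hXf
  set Kj : Finset (Fin n) := Finset.univ.filter (fun k => ¬(j k = v ∨ j k = -v)) with hKj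
  set Ki : Finset (Fin n) := Finset.univ.filter (fun k => ¬(i k = v ∨ i k = -v)) with hKi
  set Yf : Ω → ℂ := fun ω =>
    (∏ k ∈ Kj, g (j k) ω) * starRingEnd ℂ (∏ k ∈ Ki, g (i k) ω) with hYf
  have habsv : |v| = v := abs_of_pos hvpos
  have hSmemh : (⟨⟨v, hvpos⟩, false⟩ : {m : ℤ // 0 < m} × Bool) ∈ S := by simp [hS]
  have hSmeml : (⟨⟨v, hvpos⟩, true⟩ : {m : ℤ // 0 < m} × Bool) ∈ S := by simp [hS]
  have hgvS : Measurable[MS] (g v) := by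
    apply g_meas_aux g_def g_neg v (by omega)
    · rw [habsv]; exact hmeash S v hvpos hSmemh
    · rw [habsv]; exact hmeasl S v hvpos hSmeml
  have hXmeasS : Measurable[MS] Xf :=
    (hgvS.pow_const A).mul
      ((Complex.continuous_conj.measurable.comp hgvS).pow_const B)
  have hgT : ∀ (m : ℤ), m ≠ 0 → ¬(m = v ∨ m = -v) → Measurable[MT] (g m) := by
    intro m hm0 hmne
    have habs0 : (0 : ℤ) < |m| := abs_pos.mpr hm0
    have habsne : |m| ≠ v := by
      rcases abs_choice m with hc | hc <;> omega
    have hmemh : (⟨⟨|m|, habs0⟩, false⟩ : {m : ℤ // 0 < m} × Bool) ∈ Sᶜ := by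
      simp [hS, habsne]
    have hmeml : (⟨⟨|m|, habs0⟩, true⟩ : {m : ℤ // 0 < m} × Bool) ∈ Sᶜ := by
      simp [hS, habsne]
    exact g_meas_aux g_def g_neg m hm0 (hmeash Sᶜ |m| habs0 hmemh) (hmeasl Sᶜ |m| habs0 hmeml)
  have hYmeasT : Measurable[MT] Yf := by
    apply Measurable.mul
    · apply Finset.measurable_prod
      intro k hk
      exact hgT (j k) (hj0 k) (Finset.mem_filter.mp hk).2
    · apply Measurable.comp Complex.continuous_conj.measurable
      apply Finset.measurable_prod
      intro k hk
      exact hgT (i k) (hi0 k) (Finset.mem_filter.mp hk).2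
  have hMSle : MS ≤ mOmega := iSup₂_le fun q _ => hle q
  have hMTle : MT ≤ mOmega := iSup₂_le fun q _ => hle q
  have hindXY : IndepFun Xf Yf p := by
    rw [IndepFun_iff_Indep]
    exact indep_of_indep_of_le_left
      (indep_of_indep_of_le_right hindepST (measurable_iff_comap_le.mp hYmeasT))
      (measurable_iff_comap_le.mp hXmeasS)
  have hXmeas : Measurable[mOmega] Xf := hXmeasS.mono hMSle le_rfl
  have hYmeas : Measurable[mOmega] Yf := hYmeasT.mono hMTle le_rfl
  have hXaesm : @AEStronglyMeasurable _ _ _ mOmega mOmega Xf p := hXmeas.aestronglyMeasurable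
  have hYaesm : @AEStronglyMeasurable _ _ _ mOmega mOmega Yf p := hYmeas.aestronglyMeasurable
  -- pointwise factorization
  have hsplit : ∀ (f : Fin n → ℤ) (ω : Ω),
      (∏ k, g (f k) ω) =
        (g v ω) ^ (cnt f v) * (starRingEnd ℂ (g v ω)) ^ (cnt f (-v)) *
          ∏ k ∈ Finset.univ.filter (fun k => ¬(f k = v ∨ f k = -v)), g (f k) ω := by
    intro f ω
    rw [← Finset.prod_filter_mul_prod_filter_not Finset.univ
      (fun k => f k = v ∨ f k = -v) (fun k => g (f k) ω)]
    congr 1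
    rw [Finset.filter_or, Finset.prod_union (by
      rw [Finset.disjoint_left]
      intro k hk1 hk2
      have h1 := (Finset.mem_filter.mp hk1).2
      have h2 := (Finset.mem_filter.mp hk2).2
      omega)]
    congr 1
    · rw [Finset.prod_congr rfl (fun k hk => by rw [(Finset.mem_filter.mp hk).2]),
        Finset.prod_const]
    · rw [Finset.prod_congr rfl (fun k hk => ?_), Finset.prod_const]
      rw [(Finset.mem_filter.mp hk).2]
      exact g_neg v hvpos ω
  have hpoint : ∀ ω, (∏ k, g (j k) ω) * starRingEnd ℂ (∏ k, g (i k) ω)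
      = Xf ω * Yf ω := by
    intro ω
    rw [hsplit j ω, hsplit i ω]
    simp only [hXf, hYf, hKj, hKi, map_mul, map_pow, Complex.conj_conj, hA, hB, pow_add]
    ring
  -- conclude
  apply hint
  calc ∫ ω, (∏ k, g (j k) ω) * starRingEnd ℂ (∏ k, g (i k) ω) ∂p
      = ∫ ω, Xf ω * Yf ω ∂p := by simp_rw [hpoint]
    _ = (∫ ω, Xf ω ∂p) * ∫ ω, Yf ω ∂p :=
        indepFun_integral_mul_complex hindXY hXaesm hYaesm
    _ = 0 := by
        have hXzero : ∫ ω, Xf ω ∂p = 0 := by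
          have hgveq : ∀ ω, g v ω
              = (c : ℂ) * ((h v ω : ℂ) + Complex.I * (l v ω : ℂ)) := g_def v hvpos
          have hXeq : ∀ ω, Xf ω = (c : ℂ) ^ (A + B) *
              (((h v ω : ℂ) + Complex.I * (l v ω : ℂ)) ^ A *
               ((h v ω : ℂ) - Complex.I * (l v ω : ℂ)) ^ B) := by
            intro ω
            simp only [hXf, hgveq ω, map_mul, map_add, Complex.conj_ofReal, Complex.conj_I,
              mul_pow, pow_add]
            ring
          simp_rw [hXeq]
          rw [integral_const_mul]
          have hhl_indep : IndepFun (h v) (l v) p := by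
            have := indep.indepFun
              (i := (⟨v, hvpos⟩, false)) (j := (⟨v, hvpos⟩, true)) (by simp)
            simpa [hF] using this
          rw [@gauss_moment_zero Ω mOmega p hPM (h v) (l v) (h_meas v hvpos) (l_meas v hvpos)
            (h_law v hvpos) (l_law v hvpos) hhl_indep A B habne, mul_zero]
        rw [hXzero, zero_mul]
end

section
/- Let i, j > 0 be fixed and assume (j_1,…,j_5) ∈ 𝒜̃_5^{c,j} and (i_1,…,i_5) ∈ 𝒜̃_5^{c,i}, and that the multiset {j_1,…,j_5} with one copy of j and one copy of −j removed is different from the multiset {i_1,…,i_5} with one copy of i and one copy of −i removed. Then ∫ g_{j_1}g_{j_2}g_{j_3}g_{j_4}g_{j_5} · conj(g_{i_1}g_{i_2}g_{i_3}g_{i_4}g_{i_5}) dp = 0. -/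
open MeasureTheory ProbabilityTheory

section Aux
open Multiset

lemma triple_count (A : Multiset ℤ) (hcard : A.card = 3) (hsum : A.sum = 0)
    (h0 : (0:ℤ) ∉ A) (n : ℤ) (hn : n ≠ 0) :
    (A.count n = 0 ∨ A.count (-n) = 0) ∧ A.count n ≤ 2 ∧
      (A.count n = 2 → A = {n, n, -(2*n)}) := by
  refine ⟨?_, ?_, ?_⟩
  · by_contra hc
    push_neg at hc
    obtain ⟨h1, h2⟩ := hc
    have hmem : n ∈ A := count_pos.mp (Nat.pos_of_ne_zero h1)
    obtain ⟨A1, rfl⟩ := exists_cons_of_mem hmem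
    have hmem2 : (-n) ∈ A1 := by
      have := count_pos.mp (Nat.pos_of_ne_zero h2)
      rcases mem_cons.mp this with h | h
      · omega
      · exact h
    obtain ⟨A2, rfl⟩ := exists_cons_of_mem hmem2
    have hc2 : A2.card = 1 := by simpa using hcard
    obtain ⟨z, rfl⟩ := card_eq_one.mp hc2
    have : z = 0 := by simp at hsum; omega
    exact h0 (by simp [this])
  · by_contra hc
    push_neg at hc
    have h3 : A.count n = 3 := le_antisymm (hcard ▸ count_le_card n A) hc
    have hrep : replicate 3 n ≤ A := le_count_iff_replicate_le.mp h3.ge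
    have : A = replicate 3 n := (eq_of_le_of_card_le hrep (by simp [hcard])).symm
    rw [this] at hsum
    simp [sum_replicate] at hsum
    omega
  · intro h2
    have hrep : replicate 2 n ≤ A := le_count_iff_replicate_le.mp h2.ge
    obtain ⟨C, hC⟩ := exists_add_of_le hrep
    have hc1 : C.card = 1 := by
      have := congrArg card hC
      simp [hcard] at this; omega
    obtain ⟨z, rfl⟩ := card_eq_one.mp hc1
    have hz : z = -(2*n) := by
      rw [hC] at hsum; simp [sum_replicate] at hsum; omega
    rw [hC, hz]
    simp [replicate, insert_eq_cons]
    rfl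

private def Dd (A B : Multiset ℤ) (n : ℤ) : ℤ :=
  (A.count n : ℤ) - A.count (-n) - ((B.count n : ℤ) - B.count (-n))

lemma contra4 (A B : Multiset ℤ) (hA : A.card = 3) (hsA : A.sum = 0) (h0A : (0:ℤ) ∉ A)
    (hB : B.card = 3) (hsB : B.sum = 0) (h0B : (0:ℤ) ∉ B)
    (hall : ∀ m : ℤ, m ≠ 0 → (4:ℤ) ∣ Dd A B m)
    (n : ℤ) (hn : n ≠ 0) (h4 : Dd A B n = 4) : False := by
  obtain ⟨hpA, hbA, hsAn⟩ := triple_count A hA hsA h0A n hn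
  obtain ⟨hpA', hbA', _⟩ := triple_count A hA hsA h0A (-n) (by omega)
  obtain ⟨hpB, hbB, _⟩ := triple_count B hB hsB h0B n hn
  obtain ⟨hpB', hbB', hsBn⟩ := triple_count B hB hsB h0B (-n) (by omega)
  simp only [neg_neg] at hpA' hpB' hbA' hbB' hsBn
  unfold Dd at h4
  have hAn : A.count n = 2 := by omega
  have hBn : B.count (-n) = 2 := by omega
  have hAeq : A = {n, n, -(2*n)} := hsAn hAn
  have hBeq : B = {-n, -n, 2*n} := by
    have := hsBn hBn
    have h2 : -(2*(-n)) = 2*n := by ring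
    rwa [h2] at this
  have h2n := hall (2*n) (by omega)
  unfold Dd at h2n
  rw [hAeq, hBeq] at h2n
  have e1 : (2*n) ≠ n := by omega
  have e2 : (2*n) ≠ -(2*n) := by omega
  have e3 : -(2*n) ≠ n := by omega
  have e4 : (2*n) ≠ -n := by omega
  have e5 : -(2*n) ≠ -n := by omega
  simp only [insert_eq_cons, count_cons, count_singleton] at h2n
  simp only [if_neg e1, if_neg e2, if_neg e4, neg_neg] at h2n
  norm_num at h2n
  omega

lemma comb_main (A B : Multiset ℤ) (hA : A.card = 3) (hsA : A.sum = 0) (h0A : (0:ℤ) ∉ A)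
    (hB : B.card = 3) (hsB : B.sum = 0) (h0B : (0:ℤ) ∉ B) (hne : A ≠ B) :
    ∃ N : ℤ, 0 < N ∧ ¬ (4:ℤ) ∣ Dd A B N := by
  by_contra hc
  push_neg at hc
  have hall : ∀ m : ℤ, m ≠ 0 → (4:ℤ) ∣ Dd A B m := by
    intro m hm
    rcases lt_or_gt_of_ne hm with h | h
    · have := hc (-m) (by omega)
      have hD : Dd A B (-m) = - Dd A B m := by unfold Dd; rw [neg_neg]; ring
      rw [hD] at this
      omega
    · exact hc m h
  apply hne
  ext n
  rcases eq_or_ne n 0 with rfl | hn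
  · rw [count_eq_zero_of_notMem h0A, count_eq_zero_of_notMem h0B]
  obtain ⟨hpA, hbA, _⟩ := triple_count A hA hsA h0A n hn
  obtain ⟨hpA', hbA', _⟩ := triple_count A hA hsA h0A (-n) (by omega)
  obtain ⟨hpB, hbB, _⟩ := triple_count B hB hsB h0B n hn
  obtain ⟨hpB', hbB', _⟩ := triple_count B hB hsB h0B (-n) (by omega)
  simp only [neg_neg] at hpA' hpB' hbA' hbB'
  have hd := hall n hn
  have h4 : Dd A B n ≠ 4 := fun h => contra4 A B hA hsA h0A hB hsB h0B hall n hn h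
  have hm4 : Dd A B n ≠ -4 := by
    intro h
    apply contra4 A B hA hsA h0A hB hsB h0B hall (-n) (by omega)
    unfold Dd at h ⊢; rw [neg_neg]; omega
  unfold Dd at hd h4 hm4
  omega

lemma count_erase' (s : Multiset ℤ) (a b : ℤ) (hb : b ∈ s) :
    (s.erase b).count a = s.count a - (if a = b then 1 else 0) := by
  rcases eq_or_ne a b with rfl | h
  · simp [count_erase_self]
  · simp [count_erase_of_ne h, h]

lemma erased_facts (v : ℤ) (hv : 0 < v) (t : Fin 5 → ℤ) (ht0 : ∀ k, t k ≠ 0)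
    (htsum : ∑ k, t k = 0) (htmem : ∃ l m : Fin 5, l ≠ m ∧ t l = v ∧ t m = -v) :
    (((List.ofFn t : Multiset ℤ).erase v).erase (-v)).card = 3 ∧
    (((List.ofFn t : Multiset ℤ).erase v).erase (-v)).sum = 0 ∧
    (0:ℤ) ∉ (((List.ofFn t : Multiset ℤ).erase v).erase (-v)) ∧
    (∀ N : ℤ, 0 < N →
      ((((List.ofFn t : Multiset ℤ).erase v).erase (-v)).count N : ℤ)
        - ((((List.ofFn t : Multiset ℤ).erase v).erase (-v)).count (-N) : ℤ)
      = ((List.ofFn t : Multiset ℤ).count N : ℤ) - ((List.ofFn t : Multiset ℤ).count (-N) : ℤ)) := by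
  set J : Multiset ℤ := (List.ofFn t : Multiset ℤ) with hJ
  obtain ⟨lk, mk, hlm, hl, hm⟩ := htmem
  have hvmem : v ∈ J := by
    rw [hJ, Multiset.mem_coe, List.mem_ofFn]
    exact ⟨lk, hl⟩
  have hnvmem : (-v) ∈ J.erase v := by
    apply (mem_erase_of_ne (by omega)).mpr
    rw [hJ, Multiset.mem_coe, List.mem_ofFn]
    exact ⟨mk, hm⟩
  have hcardJ : J.card = 5 := by simp [hJ]
  have hsumJ : J.sum = 0 := by
    rw [hJ]
    rw [Multiset.sum_coe, List.sum_ofFn]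
    exact htsum
  refine ⟨?_, ?_, ?_, ?_⟩
  · rw [card_erase_of_mem hnvmem, card_erase_of_mem hvmem, hcardJ]
    rfl
  · have h1 : v + (J.erase v).sum = J.sum := by
      conv_rhs => rw [← cons_erase hvmem]
      simp
    have h2 : (-v) + ((J.erase v).erase (-v)).sum = (J.erase v).sum := by
      conv_rhs => rw [← cons_erase hnvmem]
      simp
    omega
  · intro hmem
    have : (0:ℤ) ∈ J := mem_of_mem_erase (mem_of_mem_erase hmem)
    rw [hJ] at this
    rw [Multiset.mem_coe, List.mem_ofFn] at this
    obtain ⟨k, hk⟩ := this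
    exact ht0 k hk
  · intro N hN
    have hvm' : 0 < J.count v := count_pos.mpr hvmem
    have hnvm' : 0 < J.count (-v) := count_pos.mpr (mem_of_mem_erase hnvmem)
    rcases eq_or_ne N v with h | hNv
    · rw [h]
      have c1 : ((J.erase v).erase (-v)).count v = (J.erase v).count v :=
        count_erase_of_ne (by omega) _
      have c2 : (J.erase v).count v = J.count v - 1 := count_erase_self _ _
      have c3 : ((J.erase v).erase (-v)).count (-v) = (J.erase v).count (-v) - 1 :=
        count_erase_self _ _
      have c4 : (J.erase v).count (-v) = J.count (-v) := count_erase_of_ne (by omega) _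
      rw [c1, c2, c3, c4]
      omega
    · have hNnv : N ≠ -v := by omega
      have hnNv : -N ≠ v := by omega
      have hnNnv : -N ≠ -v := by omega
      rw [count_erase_of_ne hNnv, count_erase_of_ne hNv,
        count_erase_of_ne hnNnv, count_erase_of_ne hnNv]

lemma exists_good_N (iv jv : ℤ) (hiv : 0 < iv) (hjv : 0 < jv)
    (jt it : Fin 5 → ℤ)
    (hjt0 : ∀ k, jt k ≠ 0) (hit0 : ∀ k, it k ≠ 0)
    (hjtsum : ∑ k, jt k = 0) (hitsum : ∑ k, it k = 0)
    (hjtmem : ∃ l m : Fin 5, l ≠ m ∧ jt l = jv ∧ jt m = -jv)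
    (hitmem : ∃ l m : Fin 5, l ≠ m ∧ it l = iv ∧ it m = -iv)
    (hne : ((List.ofFn jt : Multiset ℤ).erase jv).erase (-jv) ≠
        ((List.ofFn it : Multiset ℤ).erase iv).erase (-iv)) :
    ∃ N : ℤ, 0 < N ∧ ¬ (4:ℤ) ∣
      ((((List.ofFn jt : Multiset ℤ).count N : ℤ) - ((List.ofFn jt : Multiset ℤ).count (-N) : ℤ))
      - (((List.ofFn it : Multiset ℤ).count N : ℤ) - ((List.ofFn it : Multiset ℤ).count (-N) : ℤ))) := by
  obtain ⟨hcA, hsA, h0A, hdA⟩ := erased_facts jv hjv jt hjt0 hjtsum hjtmem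
  obtain ⟨hcB, hsB, h0B, hdB⟩ := erased_facts iv hiv it hit0 hitsum hitmem
  obtain ⟨N, hN, hdvd⟩ := comb_main _ _ hcA hsA h0A hcB hsB h0B hne
  refine ⟨N, hN, ?_⟩
  rw [← hdA N hN, ← hdB N hN]
  exact hdvd


lemma negI_zpow_four : (-Complex.I) ^ (4:ℤ) = 1 := by
  rw [show (4:ℤ) = ((4:ℕ):ℤ) from rfl, zpow_natCast, neg_pow, Complex.I_pow_four]
  norm_num

lemma negI_zpow_ne_one (e : ℤ) (h : ¬ (4:ℤ) ∣ e) : (-Complex.I) ^ e ≠ 1 := by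
  intro h1
  apply h
  have hne : (-Complex.I) ≠ 0 := by simp [Complex.I_ne_zero]
  have hdecomp : e = 4 * (e / 4) + e % 4 := (Int.mul_ediv_add_emod e 4).symm
  rw [hdecomp, zpow_add₀ hne, zpow_mul, negI_zpow_four, one_zpow, one_mul] at h1
  have hr : e % 4 = 0 ∨ e % 4 = 1 ∨ e % 4 = 2 ∨ e % 4 = 3 := by omega
  rcases hr with hr | hr | hr | hr <;> rw [hr] at h1
  · omega
  · rw [zpow_one] at h1
    exact absurd h1 (by simp [Complex.ext_iff])
  · rw [show (2:ℤ) = ((2:ℕ):ℤ) from rfl, zpow_natCast, neg_pow, Complex.I_sq] at h1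
    norm_num at h1
  · rw [show (3:ℤ) = ((3:ℕ):ℤ) from rfl, zpow_natCast] at h1
    have h3 : (-Complex.I)^(3:ℕ) = Complex.I := by
      simp [pow_succ, pow_two]
    rw [h3] at h1
    exact absurd h1 (by simp [Complex.ext_iff])

lemma prod_zpow_sum {ι : Type*} [Fintype ι] (a : ℂ) (ha : a ≠ 0) (f : ι → ℤ) :
    ∏ k, a ^ (f k) = a ^ (∑ k, f k) := by
  classical
  induction (Finset.univ : Finset ι) using Finset.induction with
  | empty => simp
  | insert a s h ih => rw [Finset.prod_insert h, Finset.sum_insert h, zpow_add₀ ha, ih]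


namespace MomAux

abbrev Idx := Bool × Fin 5 × Bool

def mval (jt it : Fin 5 → ℤ) (j : Idx) : ℤ := if j.1 then it j.2.1 else jt j.2.1

/-- sign as integer of the factor (w,k): sign of m times conj-flip -/
def sgn (jt it : Fin 5 → ℤ) (w : Bool) (k : Fin 5) : ℤ :=
  (if 0 < (if w then it k else jt k) then 1 else -1) * (if w then -1 else 1)

def fac (ct : ℝ) (jt it : Fin 5 → ℤ) (N : ℤ) (q : (ℝ × ℝ) × (Idx → ℝ))
    (w : Bool) (k : Fin 5) : ℂ :=
  (ct : ℂ) * (((if |if w then it k else jt k| = N then q.1.1 else q.2 (w, k, false) : ℝ) : ℂ)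
    + (sgn jt it w k : ℂ) * Complex.I *
      ((if |if w then it k else jt k| = N then q.1.2 else q.2 (w, k, true) : ℝ) : ℂ))

def Phi (ct : ℝ) (jt it : Fin 5 → ℤ) (N : ℤ) (q : (ℝ × ℝ) × (Idx → ℝ)) : ℂ :=
  (∏ k, fac ct jt it N q false k) * ∏ k, fac ct jt it N q true k

def eps (jt it : Fin 5 → ℤ) (N : ℤ) (w : Bool) (k : Fin 5) : ℤ :=
  if |if w then it k else jt k| = N then sgn jt it w k else 0

lemma fac_meas (ct : ℝ) (jt it : Fin 5 → ℤ) (N : ℤ) (w : Bool) (k : Fin 5) :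
    Measurable (fun q : (ℝ × ℝ) × (Idx → ℝ) => fac ct jt it N q w k) := by
  unfold fac
  by_cases h : |if w then it k else jt k| = N <;> simp only [if_pos, h, if_neg, if_false] <;>
    fun_prop

lemma Phi_meas (ct : ℝ) (jt it : Fin 5 → ℤ) (N : ℤ) :
    Measurable (Phi ct jt it N) := by
  unfold Phi
  exact Measurable.mul (Finset.measurable_prod _ fun k _ => fac_meas ct jt it N false k)
    (Finset.measurable_prod _ fun k _ => fac_meas ct jt it N true k)

lemma negI_inv : (-Complex.I)⁻¹ = Complex.I := by simp [inv_neg, Complex.inv_I]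

lemma fac_rot (ct : ℝ) (jt it : Fin 5 → ℤ) (N : ℤ) (q : (ℝ × ℝ) × (Idx → ℝ))
    (w : Bool) (k : Fin 5) :
    fac ct jt it N ((q.1.2, -q.1.1), q.2) w k
      = (-Complex.I) ^ (eps jt it N w k) * fac ct jt it N q w k := by
  unfold fac eps sgn
  cases w <;> simp only [Bool.false_eq_true, if_false, if_true]
  · by_cases h : |jt k| = N
    · simp only [if_pos h]
      by_cases h1 : 0 < jt k
      · simp only [if_pos h1]
        push_cast
        rw [zpow_one]
        linear_combination ((ct:ℂ) * (q.1.2:ℂ)) * Complex.I_sq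
      · simp only [if_neg h1]
        push_cast
        rw [zpow_neg, zpow_one, negI_inv]
        linear_combination ((ct:ℂ) * (q.1.2:ℂ)) * Complex.I_sq
    · simp only [if_neg h, zpow_zero, one_mul]
  · by_cases h : |it k| = N
    · simp only [if_pos h]
      by_cases h1 : 0 < it k
      · simp only [if_pos h1]
        push_cast
        rw [zpow_neg, zpow_one, negI_inv]
        linear_combination ((ct:ℂ) * (q.1.2:ℂ)) * Complex.I_sq
      · simp only [if_neg h1]
        push_cast
        rw [zpow_one]
        linear_combination ((ct:ℂ) * (q.1.2:ℂ)) * Complex.I_sq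
    · simp only [if_neg h, zpow_zero, one_mul]

lemma prod_zpow_sum' {ι : Type*} [Fintype ι] (a : ℂ) (ha : a ≠ 0) (f : ι → ℤ) :
    ∏ k, a ^ (f k) = a ^ (∑ k, f k) := by
  classical
  induction (Finset.univ : Finset ι) using Finset.induction with
  | empty => simp
  | insert a s h ih => rw [Finset.prod_insert h, Finset.sum_insert h, zpow_add₀ ha, ih]

lemma negI_ne_zero : (-Complex.I) ≠ 0 := by simp [Complex.I_ne_zero]

lemma Phi_rot (ct : ℝ) (jt it : Fin 5 → ℤ) (N : ℤ) (q : (ℝ × ℝ) × (Idx → ℝ)) :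
    Phi ct jt it N ((q.1.2, -q.1.1), q.2)
      = (-Complex.I) ^ ((∑ k, eps jt it N false k) + (∑ k, eps jt it N true k))
        * Phi ct jt it N q := by
  unfold Phi
  have h1 : ∀ w, ∏ k, fac ct jt it N ((q.1.2, -q.1.1), q.2) w k
      = (-Complex.I) ^ (∑ k, eps jt it N w k) * ∏ k, fac ct jt it N q w k := by
    intro w
    rw [← prod_zpow_sum' _ negI_ne_zero, ← Finset.prod_mul_distrib]
    exact Finset.prod_congr rfl fun k _ => fac_rot ct jt it N q w k
  rw [h1, h1, zpow_add₀ negI_ne_zero]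
  ring

end MomAux

namespace MomAux2

lemma count_ofFn (t : Fin 5 → ℤ) (n : ℤ) :
    ((List.ofFn t : Multiset ℤ).count n : ℤ) = ∑ k, if t k = n then (1:ℤ) else 0 := by
  rw [← Fin.univ_val_map, Multiset.count_map]
  rw [show (Multiset.filter (fun a => n = t a) Finset.univ.val).card
      = (Finset.filter (fun a => n = t a) Finset.univ).card from rfl]
  rw [Finset.card_filter]
  push_cast
  refine Finset.sum_congr rfl fun k _ => ?_
  by_cases h : t k = n
  · simp [h]
  · rw [if_neg h, if_neg (fun hh => h hh.symm)]

lemma eps_pt (m N : ℤ) (hm : m ≠ 0) (hN : 0 < N) :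
    (if |m| = N then (if 0 < m then (1:ℤ) else -1) else 0)
      = (if m = N then 1 else 0) - (if m = -N then 1 else 0) := by
  rcases lt_trichotomy m 0 with h | h | h
  · rw [abs_of_neg h]
    split_ifs <;> omega
  · omega
  · rw [abs_of_pos h]
    split_ifs <;> omega

end MomAux2

end Aux

/-- Let `i, j > 0`, `(j_1,…,j_5) ∈ 𝒜̃_5^{c,j}`,
`(i_1,…,i_5) ∈ 𝒜̃_5^{c,i}`.  If the multiset `{j_1,…,j_5}` with one copy of
`j` and one copy of `-j` removed differs from the multiset `{i_1,…,i_5}` with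
one copy of `i` and one copy of `-i` removed, then the mixed moment vanishes. -/
theorem moment_tilde_A5c_orthogonal
    {Ω : Type*} [MeasurableSpace Ω] (p : Measure Ω) [IsProbabilityMeasure p]
    (G : GaussianData Ω p)
    (iv jv : ℤ) (hiv : 0 < iv) (hjv : 0 < jv)
    (jt it : Fin 5 → ℤ)
    (hjt0 : ∀ k, jt k ≠ 0) (hit0 : ∀ k, it k ≠ 0)
    (hjtsum : ∑ k, jt k = 0) (hitsum : ∑ k, it k = 0)
    (hjtmem : ∃ l m : Fin 5, l ≠ m ∧ jt l = jv ∧ jt m = -jv)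
    (hitmem : ∃ l m : Fin 5, l ≠ m ∧ it l = iv ∧ it m = -iv)
    (hne : ((List.ofFn jt : Multiset ℤ).erase jv).erase (-jv) ≠
        ((List.ofFn it : Multiset ℤ).erase iv).erase (-iv)) :
    ∫ ω, (∏ k, G.g (jt k) ω) * starRingEnd ℂ (∏ k, G.g (it k) ω) ∂p = 0 := by
  classical
  obtain ⟨N, hN, hdvd⟩ := exists_good_N iv jv hiv hjv jt it hjt0 hit0 hjtsum hitsum
    hjtmem hitmem hne
  set γ : Measure ℝ := gaussianReal 0 1 with hγ
  set f : {n : ℤ // 0 < n} × Bool → Ω → ℝ :=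
    fun nb => if nb.2 then G.l nb.1.1 else G.h nb.1.1 with hf
  have hf_meas : ∀ i, Measurable (f i) := by
    rintro ⟨⟨n, hn⟩, b⟩
    cases b
    · simpa [hf] using G.h_meas n hn
    · simpa [hf] using G.l_meas n hn
  have habs : ∀ j : MomAux.Idx, 0 < |MomAux.mval jt it j| := by
    rintro ⟨w, k, b⟩
    cases w
    · simpa [MomAux.mval] using abs_pos.mpr (hjt0 k)
    · simpa [MomAux.mval] using abs_pos.mpr (hit0 k)
  set coordOf : MomAux.Idx → {n : ℤ // 0 < n} × Bool :=
    fun j => (⟨|MomAux.mval jt it j|, habs j⟩, j.2.2) with hcoord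
  set P : Ω → ℝ × ℝ := fun ω => (G.h N ω, G.l N ω) with hP
  set R : Ω → (MomAux.Idx → ℝ) :=
    fun ω j => if |MomAux.mval jt it j| = N then 0 else f (coordOf j) ω with hR
  have hPmeas : Measurable P := (G.h_meas N hN).prodMk (G.l_meas N hN)
  have hRmeas : Measurable R := by
    apply measurable_pi_lambda
    intro j
    by_cases hj : |MomAux.mval jt it j| = N
    · simp only [hR, if_pos hj]
      exact measurable_const
    · simp only [hR, if_neg hj]
      exact hf_meas _
  -- pointwise description of g
  have hg : ∀ m : ℤ, m ≠ 0 → ∀ ω, G.g m ω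
      = (G.c:ℂ) * ((G.h |m| ω : ℂ)
        + (((if 0 < m then (1:ℤ) else -1) : ℤ):ℂ) * Complex.I * (G.l |m| ω : ℂ)) := by
    intro m hm ω
    rcases lt_trichotomy m 0 with h | h | h
    · have h' : 0 < -m := by omega
      have hcon : G.g m ω = starRingEnd ℂ (G.g (-m) ω) := by
        have := G.g_neg (-m) h' ω
        rwa [neg_neg] at this
      rw [hcon, G.g_def (-m) h' ω, abs_of_neg h, if_neg (by omega)]
      simp only [map_mul, map_add, Complex.conj_ofReal, Complex.conj_I]
      push_cast
      ring
    · omega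
    · rw [G.g_def m h ω, abs_of_pos h, if_pos h]
      push_cast
      ring
  -- pointwise identity with Phi
  have hfacj : ∀ (k : Fin 5) ω,
      MomAux.fac G.c jt it N (P ω, R ω) false k = G.g (jt k) ω := by
    intro k ω
    rw [hg (jt k) (hjt0 k) ω]
    unfold MomAux.fac MomAux.sgn
    simp only [Bool.false_eq_true, if_false, mul_one]
    have hm : MomAux.mval jt it (false, k, false) = jt k := rfl
    have hm2 : MomAux.mval jt it (false, k, true) = jt k := rfl
    by_cases hk : |jt k| = N
    · simp only [if_pos hk, hP, hR, hm, hm2, hk, if_pos]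
      try rw [← hk]
    · simp only [if_neg hk, hR, hm, hm2, if_neg hk, hcoord]
      rfl
  have hfaci : ∀ (k : Fin 5) ω,
      MomAux.fac G.c jt it N (P ω, R ω) true k = starRingEnd ℂ (G.g (it k) ω) := by
    intro k ω
    rw [hg (it k) (hit0 k) ω]
    simp only [map_mul, map_add, Complex.conj_ofReal, Complex.conj_I, map_intCast]
    unfold MomAux.fac MomAux.sgn
    simp only [if_true]
    have hm : MomAux.mval jt it (true, k, false) = it k := rfl
    have hm2 : MomAux.mval jt it (true, k, true) = it k := rfl
    by_cases hk : |it k| = N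
    · simp only [if_pos hk, hP, hR, hm, hm2, hk, if_pos]
      rw [← hk]
      push_cast
      ring
    · simp only [if_neg hk, hR, hm, hm2, if_neg hk, hcoord]
      have : f (⟨|it k|, habs (true, k, false)⟩, false) ω = G.h |it k| ω := rfl
      rw [this]
      have : f (⟨|it k|, habs (true, k, true)⟩, true) ω = G.l |it k| ω := rfl
      rw [this]
      push_cast
      ring
  have hpoint : ∀ ω, (∏ k, G.g (jt k) ω) * starRingEnd ℂ (∏ k, G.g (it k) ω)
      = MomAux.Phi G.c jt it N (P ω, R ω) := by
    intro ω
    rw [map_prod]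
    unfold MomAux.Phi
    congr 1
    · exact Finset.prod_congr rfl fun k _ => (hfacj k ω).symm
    · exact Finset.prod_congr rfl fun k _ => (hfaci k ω).symm
  -- independence of P and R
  set Np : {n : ℤ // 0 < n} := ⟨N, hN⟩ with hNp
  set S : Finset ({n : ℤ // 0 < n} × Bool) := {(Np, false), (Np, true)} with hS
  set T : Finset ({n : ℤ // 0 < n} × Bool) :=
    (Finset.univ.filter (fun j : MomAux.Idx => ¬ |MomAux.mval jt it j| = N)).image coordOf
    with hT
  have hST : Disjoint S T := by
    rw [Finset.disjoint_left]
    intro a haS haT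
    rw [hT, Finset.mem_image] at haT
    obtain ⟨j, hj, rfl⟩ := haT
    rw [Finset.mem_filter] at hj
    have h1 : ((coordOf j).1 : ℤ) = |MomAux.mval jt it j| := rfl
    rw [hS] at haS
    rcases Finset.mem_insert.mp haS with h | h
    · exact hj.2 (by rw [← h1, h])
    · rw [Finset.mem_singleton] at h
      exact hj.2 (by rw [← h1, h])
  have base := G.indep.indepFun_finset S T hST hf_meas
  have hmemS1 : ((Np, false) : {n : ℤ // 0 < n} × Bool) ∈ S := by simp [hS]
  have hmemS2 : ((Np, true) : {n : ℤ // 0 < n} × Bool) ∈ S := by simp [hS]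
  set φP : (S → ℝ) → ℝ × ℝ := fun v => (v ⟨(Np, false), hmemS1⟩, v ⟨(Np, true), hmemS2⟩)
    with hφPd
  set φR : (T → ℝ) → (MomAux.Idx → ℝ) := fun v j =>
    if hj : |MomAux.mval jt it j| = N then 0
    else v ⟨coordOf j, Finset.mem_image.mpr
      ⟨j, Finset.mem_filter.mpr ⟨Finset.mem_univ _, hj⟩, rfl⟩⟩ with hφRd
  have hφP : Measurable φP := by
    apply Measurable.prodMk <;> exact measurable_pi_apply _
  have hφR : Measurable φR := by
    apply measurable_pi_lambda
    intro j
    by_cases hj : |MomAux.mval jt it j| = N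
    · simp only [hφRd, dif_pos hj]
      exact measurable_const
    · simp only [hφRd, dif_neg hj]
      exact measurable_pi_apply _
  have hPeq : P = φP ∘ (fun ω (i : S) => f i ω) := by
    funext ω
    rw [hP, hφPd]
    rfl
  have hReq : R = φR ∘ (fun ω (i : T) => f i ω) := by
    funext ω j
    simp only [Function.comp, hφRd, hR]
    by_cases hj : |MomAux.mval jt it j| = N
    · rw [dif_pos hj, if_pos hj]
    · rw [dif_neg hj, if_neg hj]
  have hindepPR : IndepFun P R p := by
    rw [hPeq, hReq]
    exact base.comp hφP hφR
  -- laws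
  have hlawP : p.map P = γ.prod γ := by
    have h01 : ((Np, false) : {n : ℤ // 0 < n} × Bool) ≠ (Np, true) := by simp
    have hind : IndepFun (G.h N) (G.l N) p := by
      have := G.indep.indepFun h01
      simpa [hf, hNp] using this
    have hmap := (indepFun_iff_map_prod_eq_prod_map_map
      (G.h_meas N hN).aemeasurable (G.l_meas N hN).aemeasurable).mp hind
    rw [hP, hmap, G.h_law N hN, G.l_law N hN]
  set ν : Measure (MomAux.Idx → ℝ) := p.map R with hν
  have hIPν : IsProbabilityMeasure ν := Measure.isProbabilityMeasure_map hRmeas.aemeasurable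
  have hPRmeas : Measurable (fun ω => (P ω, R ω)) := hPmeas.prodMk hRmeas
  have hlaw : p.map (fun ω => (P ω, R ω)) = (γ.prod γ).prod ν := by
    rw [(indepFun_iff_map_prod_eq_prod_map_map hPmeas.aemeasurable
      hRmeas.aemeasurable).mp hindepPR, hlawP]
  -- the exponent
  set e : ℤ := (∑ k, MomAux.eps jt it N false k) + (∑ k, MomAux.eps jt it N true k) with he
  have hedvd : ¬ (4:ℤ) ∣ e := by
    have h1 : ∑ k, MomAux.eps jt it N false k
        = ((List.ofFn jt : Multiset ℤ).count N : ℤ)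
          - ((List.ofFn jt : Multiset ℤ).count (-N) : ℤ) := by
      rw [MomAux2.count_ofFn, MomAux2.count_ofFn, ← Finset.sum_sub_distrib]
      refine Finset.sum_congr rfl fun k _ => ?_
      unfold MomAux.eps MomAux.sgn
      simp only [Bool.false_eq_true, if_false, mul_one]
      exact MomAux2.eps_pt (jt k) N (hjt0 k) hN
    have h2 : ∑ k, MomAux.eps jt it N true k
        = -(((List.ofFn it : Multiset ℤ).count N : ℤ)
          - ((List.ofFn it : Multiset ℤ).count (-N) : ℤ)) := by
      rw [MomAux2.count_ofFn, MomAux2.count_ofFn, ← Finset.sum_sub_distrib,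
        ← Finset.sum_neg_distrib]
      refine Finset.sum_congr rfl fun k _ => ?_
      unfold MomAux.eps MomAux.sgn
      simp only [if_true, mul_neg_one]
      rw [← MomAux2.eps_pt (it k) N (hit0 k) hN]
      by_cases hk : |it k| = N
      · simp [hk]
      · simp [hk]
    rw [he, h1, h2]
    intro hcon
    exact hdvd (by omega)
  -- rotation invariance
  have hγneg : γ.map (fun x : ℝ => -x) = γ := by
    have h1 := gaussianReal_map_const_mul (μ := 0) (v := 1) (-1)
    have h2 : (fun x : ℝ => (-1) * x) = (fun x : ℝ => -x) := by
      funext x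
      ring
    rw [h2] at h1
    rw [hγ, h1]
    norm_num
  set T2 : ℝ × ℝ → ℝ × ℝ := fun x => (x.2, -x.1) with hT2d
  have hT2meas : Measurable T2 := by
    apply Measurable.prodMk
    · exact measurable_snd
    · exact measurable_fst.neg
  have hT2 : (γ.prod γ).map T2 = γ.prod γ := by
    have hcomp : T2 = (Prod.map (id : ℝ → ℝ) (Neg.neg : ℝ → ℝ)) ∘ Prod.swap := by
      funext x
      simp [hT2d, Prod.map]
    rw [hcomp, ← Measure.map_map (measurable_id.prodMap measurable_neg) measurable_swap,
      Measure.prod_swap, ← Measure.map_prod_map _ _ measurable_id measurable_neg,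
      Measure.map_id]
    rw [show (Neg.neg : ℝ → ℝ) = (fun x : ℝ => -x) from rfl, hγneg]
  set rot : (ℝ × ℝ) × (MomAux.Idx → ℝ) → (ℝ × ℝ) × (MomAux.Idx → ℝ) := Prod.map T2 id
    with hrotd
  have hrotmeas : Measurable rot := hT2meas.prodMap measurable_id
  have hrot : ((γ.prod γ).prod ν).map rot = (γ.prod γ).prod ν := by
    rw [hrotd, ← Measure.map_prod_map _ _ hT2meas measurable_id, hT2, Measure.map_id]
  -- integral chain
  have hchain : ∫ ω, (∏ k, G.g (jt k) ω) * starRingEnd ℂ (∏ k, G.g (it k) ω) ∂p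
      = ∫ q, MomAux.Phi G.c jt it N q ∂((γ.prod γ).prod ν) := by
    rw [show (fun ω => (∏ k, G.g (jt k) ω) * starRingEnd ℂ (∏ k, G.g (it k) ω))
        = fun ω => MomAux.Phi G.c jt it N (P ω, R ω) from funext hpoint]
    rw [← hlaw]
    exact (integral_map hPRmeas.aemeasurable
      (MomAux.Phi_meas G.c jt it N).aestronglyMeasurable).symm
  set A : ℂ := ∫ q, MomAux.Phi G.c jt it N q ∂((γ.prod γ).prod ν) with hA
  have hid : A = (-Complex.I) ^ e * A := by
    conv_lhs => rw [hA, ← hrot]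
    rw [integral_map hrotmeas.aemeasurable
      (MomAux.Phi_meas G.c jt it N).aestronglyMeasurable]
    have hrw : ∀ q : (ℝ × ℝ) × (MomAux.Idx → ℝ),
        MomAux.Phi G.c jt it N (rot q) = (-Complex.I) ^ e * MomAux.Phi G.c jt it N q := by
      intro q
      rw [show rot q = ((q.1.2, -q.1.1), q.2) from rfl, MomAux.Phi_rot, he]
    simp_rw [hrw]
    simpa [smul_eq_mul] using integral_smul ((-Complex.I) ^ e) (MomAux.Phi G.c jt it N)
      (μ := (γ.prod γ).prod ν)
  have hA0 : A = 0 := by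
    have hne1 : (-Complex.I) ^ e ≠ 1 := negI_zpow_ne_one e hedvd
    have hmul : ((-Complex.I) ^ e - 1) * A = 0 := by
      rw [sub_mul, one_mul, ← hid, sub_self]
    rcases mul_eq_zero.mp hmul with h | h
    · exact absurd (sub_eq_zero.mp h) hne1
    · exact h
  rw [hchain]
  exact hA0
end

section
/- Let j ≥ 1 be a fixed positive integer and let (j_1,…,j_5), (i_1,…,i_5) ∈ 𝒜̃_5^{c,j} with the multisets {j_1,…,j_5} and {i_1,…,i_5} different. Then ∫ g_{j_1}g_{j_2}g_{j_3}g_{j_4}g_{j_5} · conj(g_{i_1}g_{i_2}g_{i_3}g_{i_4}g_{i_5}) dp = 0. -/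
open MeasureTheory ProbabilityTheory

section AuxiliaryLemmas
open Finset

/-- number of indices where `v` takes value `n`, as an integer -/
private def cnt (v : Fin 5 → ℤ) (n : ℤ) : ℤ :=
  ((Finset.univ.filter (fun k => v k = n)).card : ℤ)

private lemma cnt_nonneg (v : Fin 5 → ℤ) (n : ℤ) : 0 ≤ cnt v n := Int.natCast_nonneg _

private lemma cnt_eq_sum (v : Fin 5 → ℤ) (n : ℤ) :
    cnt v n = ∑ k : Fin 5, (if v k = n then (1:ℤ) else 0) := by
  rw [cnt, Finset.card_filter]
  push_cast
  rfl

private lemma cnt_pos_iff (v : Fin 5 → ℤ) (n : ℤ) : 0 < cnt v n ↔ ∃ k, v k = n := by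
  unfold cnt
  rw [Int.natCast_pos, Finset.card_pos]
  constructor
  · rintro ⟨k, hk⟩
    exact ⟨k, (Finset.mem_filter.mp hk).2⟩
  · rintro ⟨k, hk⟩
    exact ⟨k, Finset.mem_filter.mpr ⟨Finset.mem_univ _, hk⟩⟩

private lemma sum_cnt (v : Fin 5 → ℤ) (U : Finset ℤ)
    (hU : ∀ n ∈ U, 0 < n)
    (hmem : ∀ k, 0 < v k → v k ∈ U) (hmem' : ∀ k, v k < 0 → -v k ∈ U)
    (hv0 : ∀ k, v k ≠ 0) :
    (∑ n ∈ U, (cnt v n + cnt v (-n)) = 5) ∧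
    (∑ n ∈ U, n * (cnt v n - cnt v (-n)) = ∑ k, v k) := by
  have key : ∀ (F : ℤ → ℤ → ℤ),
      (∀ b ∈ U, ∀ k, v k ≠ b → v k ≠ -b → F b (v k) = 0) →
      ∑ n ∈ U, ∑ k : Fin 5, F n (v k) = ∑ k : Fin 5, F (|v k|) (v k) := by
    intro F hF
    rw [Finset.sum_comm]
    refine Finset.sum_congr rfl fun k _ => ?_
    have hm : |v k| ∈ U := by
      rcases lt_or_gt_of_ne (hv0 k) with h | h
      · rw [abs_of_neg h]; exact hmem' k h
      · rw [abs_of_pos h]; exact hmem k h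
    refine Finset.sum_eq_single_of_mem _ hm fun b hb hne => ?_
    refine hF b hb k (fun hvb => ?_) (fun hvb => ?_)
    · exact hne (by rw [hvb, abs_of_pos (hU b hb)])
    · exact hne (by rw [hvb, abs_neg, abs_of_pos (hU b hb)])
  constructor
  · have := key (fun n x => (if x = n then (1:ℤ) else 0) + (if x = -n then 1 else 0))
      (by intro b hb k h1 h2; simp [h1, h2])
    beta_reduce at this
    rw [show ∑ n ∈ U, (cnt v n + cnt v (-n))
        = ∑ n ∈ U, ∑ k : Fin 5, ((if v k = n then (1:ℤ) else 0) + (if v k = -n then 1 else 0))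
      from Finset.sum_congr rfl fun n _ => by
        rw [cnt_eq_sum, cnt_eq_sum, Finset.sum_add_distrib], this]
    have : ∀ k : Fin 5, ((if v k = |v k| then (1:ℤ) else 0) + (if v k = -|v k| then 1 else 0)) = 1 := by
      intro k
      rcases lt_or_gt_of_ne (hv0 k) with h | h
      · rw [if_neg (by rw [abs_of_neg h]; omega), if_pos (by rw [abs_of_neg h]; ring)]; ring
      · rw [if_pos (abs_of_pos h).symm, if_neg (by rw [abs_of_pos h]; omega)]; ring
    rw [Finset.sum_congr rfl (fun k _ => this k)]
    simp
  · have := key (fun n x => n * ((if x = n then (1:ℤ) else 0) - (if x = -n then 1 else 0)))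
      (by intro b hb k h1 h2; simp [h1, h2])
    beta_reduce at this
    rw [show ∑ n ∈ U, n * (cnt v n - cnt v (-n))
        = ∑ n ∈ U, ∑ k : Fin 5, (n * ((if v k = n then (1:ℤ) else 0) - (if v k = -n then 1 else 0)))
      from Finset.sum_congr rfl fun n _ => by
        rw [cnt_eq_sum, cnt_eq_sum, ← Finset.sum_sub_distrib, Finset.mul_sum], this]
    refine Finset.sum_congr rfl fun k _ => ?_
    rcases lt_or_gt_of_ne (hv0 k) with h | h
    · rw [if_neg (by rw [abs_of_neg h]; omega), if_pos (by rw [abs_of_neg h]; ring),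
        abs_of_neg h]; ring
    · rw [if_pos (abs_of_pos h).symm, if_neg (by rw [abs_of_pos h]; omega), abs_of_pos h]; ring


private lemma five_support (jv : ℤ) (hjv : 0 < jv) (v : Fin 5 → ℤ)
    (hv0 : ∀ k, v k ≠ 0) (hsum : ∑ k, v k = 0)
    (ha : ∃ k, v k = jv) (hb : ∃ k, v k = -jv)
    (n : ℤ) (hn : 0 < n) (hnjv : n ≠ jv)
    (hc : ∃ k, v k = n) (hd : ∃ k, v k = -n) : False := by
  obtain ⟨ka, hka⟩ := ha
  obtain ⟨kb, hkb⟩ := hb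
  obtain ⟨kc, hkc⟩ := hc
  obtain ⟨kd, hkd⟩ := hd
  have hab : ka ≠ kb := fun h => by rw [h, hkb] at hka; omega
  have hac : ka ≠ kc := fun h => by rw [h, hkc] at hka; omega
  have had : ka ≠ kd := fun h => by rw [h, hkd] at hka; omega
  have hbc : kb ≠ kc := fun h => by rw [h, hkc] at hkb; omega
  have hbd : kb ≠ kd := fun h => by rw [h, hkd] at hkb; omega
  have hcd : kc ≠ kd := fun h => by rw [h, hkd] at hkc; omega
  set S4 : Finset (Fin 5) := {ka, kb, kc, kd} with hS4
  have hcard : S4.card = 4 := by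
    rw [hS4, Finset.card_insert_of_notMem (by simp [hab, hac, had]),
      Finset.card_insert_of_notMem (by simp [hbc, hbd]),
      Finset.card_insert_of_notMem (by simp [hcd]), Finset.card_singleton]
  have hsplit := Finset.sum_sdiff (f := v) (Finset.subset_univ S4)
  have hS4sum : ∑ k ∈ S4, v k = 0 := by
    rw [hS4, Finset.sum_insert (by simp [hab, hac, had]),
      Finset.sum_insert (by simp [hbc, hbd]),
      Finset.sum_insert (by simp [hcd]), Finset.sum_singleton, hka, hkb, hkc, hkd]
    ring
  have hcard5 : (Finset.univ \ S4).card = 1 := by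
    rw [Finset.card_sdiff_of_subset (Finset.subset_univ S4), hcard]
    simp
  obtain ⟨k5, hk5⟩ := Finset.card_eq_one.mp hcard5
  rw [hk5, Finset.sum_singleton, hS4sum, hsum] at hsplit
  exact hv0 k5 (by omega)

private lemma combo (jv : ℤ) (hjv : 0 < jv) (jt it : Fin 5 → ℤ)
    (hjt0 : ∀ k, jt k ≠ 0) (hit0 : ∀ k, it k ≠ 0)
    (hjtsum : ∑ k, jt k = 0) (hitsum : ∑ k, it k = 0)
    (hjtmem : (∃ k, jt k = jv) ∧ (∃ k, jt k = -jv))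
    (hitmem : (∃ k, it k = jv) ∧ (∃ k, it k = -jv))
    (hcnt : ∃ m, cnt jt m ≠ cnt it m)
    (hsum_cnt : ∀ (v : Fin 5 → ℤ), (∀ k, v k ≠ 0) →
      ∀ (U : Finset ℤ), (∀ n ∈ U, 0 < n) →
      (∀ k, 0 < v k → v k ∈ U) → (∀ k, v k < 0 → -v k ∈ U) →
      (∑ n ∈ U, (cnt v n + cnt v (-n)) = 5) ∧
      (∑ n ∈ U, n * (cnt v n - cnt v (-n)) = ∑ k, v k)) :
    ∃ n : ℤ, 0 < n ∧
      ¬ ((4:ℤ) ∣ ((cnt jt n + cnt it (-n)) - (cnt jt (-n) + cnt it n))) := by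
  by_contra hcon
  push_neg at hcon
  classical
  set U : Finset ℤ := ((Finset.image jt Finset.univ ∪ Finset.image (fun k => -jt k) Finset.univ) ∪
      (Finset.image it Finset.univ ∪ Finset.image (fun k => -it k) Finset.univ)).filter
      (fun n => 0 < n) with hUdef
  have hU : ∀ n ∈ U, 0 < n := fun n hn => (Finset.mem_filter.mp hn).2
  have hmemjt : ∀ k, 0 < jt k → jt k ∈ U := fun k hk => Finset.mem_filter.mpr
    ⟨by simp only [Finset.mem_union, Finset.mem_image];
        exact Or.inl (Or.inl ⟨k, Finset.mem_univ k, rfl⟩), hk⟩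
  have hmemjt' : ∀ k, jt k < 0 → -jt k ∈ U := fun k hk => Finset.mem_filter.mpr
    ⟨by simp only [Finset.mem_union, Finset.mem_image];
        exact Or.inl (Or.inr ⟨k, Finset.mem_univ k, rfl⟩), by omega⟩
  have hmemit : ∀ k, 0 < it k → it k ∈ U := fun k hk => Finset.mem_filter.mpr
    ⟨by simp only [Finset.mem_union, Finset.mem_image];
        exact Or.inr (Or.inl ⟨k, Finset.mem_univ k, rfl⟩), hk⟩
  have hmemit' : ∀ k, it k < 0 → -it k ∈ U := fun k hk => Finset.mem_filter.mpr
    ⟨by simp only [Finset.mem_union, Finset.mem_image];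
        exact Or.inr (Or.inr ⟨k, Finset.mem_univ k, rfl⟩), by omega⟩
  obtain ⟨hs1jt, hs2jt⟩ := hsum_cnt jt hjt0 U hU hmemjt hmemjt'
  obtain ⟨hs1it, hs2it⟩ := hsum_cnt it hit0 U hU hmemit hmemit'
  -- vanishing off U
  have hvan : ∀ v : Fin 5 → ℤ, (∀ k, 0 < v k → v k ∈ U) → (∀ k, v k < 0 → -v k ∈ U) →
      (∀ k, v k ≠ 0) → ∀ n, 0 < n → n ∉ U → cnt v n = 0 ∧ cnt v (-n) = 0 := by
    intro v hm hm' h0 n hn hnU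
    constructor
    · by_contra hx
      have hpos : 0 < cnt v n := lt_of_le_of_ne (cnt_nonneg v n) (Ne.symm hx)
      obtain ⟨k, hk⟩ := (cnt_pos_iff v n).mp hpos
      exact hnU (hk ▸ hm k (hk ▸ hn))
    · by_contra hx
      have hpos : 0 < cnt v (-n) := lt_of_le_of_ne (cnt_nonneg v (-n)) (Ne.symm hx)
      obtain ⟨k, hk⟩ := (cnt_pos_iff v (-n)).mp hpos
      have : -v k ∈ U := hm' k (by omega)
      rw [hk] at this
      exact hnU (by simpa using this)
  -- sums
  have hw10 : ∑ n ∈ U, (cnt jt n + cnt jt (-n) + cnt it n + cnt it (-n)) = 10 := by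
    have : ∑ n ∈ U, (cnt jt n + cnt jt (-n) + cnt it n + cnt it (-n))
        = ∑ n ∈ U, ((cnt jt n + cnt jt (-n)) + (cnt it n + cnt it (-n))) := by
      refine Finset.sum_congr rfl fun n _ => by ring
    rw [this, Finset.sum_add_distrib, hs1jt, hs1it]
    norm_num
  have hnd0 : ∑ n ∈ U, n * ((cnt jt n - cnt it n) - (cnt jt (-n) - cnt it (-n))) = 0 := by
    have : ∑ n ∈ U, n * ((cnt jt n - cnt it n) - (cnt jt (-n) - cnt it (-n)))
        = ∑ n ∈ U, (n * (cnt jt n - cnt jt (-n)) - n * (cnt it n - cnt it (-n))) := by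
      refine Finset.sum_congr rfl fun n _ => by ring
    rw [this, Finset.sum_sub_distrib, hs2jt, hs2it, hjtsum, hitsum]
    ring
  set P : Finset ℤ := U.filter
      (fun n => (cnt jt n - cnt it n) - (cnt jt (-n) - cnt it (-n)) ≠ 0) with hPdef
  have hPsub : P ⊆ U := Finset.filter_subset _ _
  have hPfacts : ∀ n ∈ P, 0 < n ∧ ((cnt jt n - cnt it n) - (cnt jt (-n) - cnt it (-n))) ≠ 0 ∧
      (4:ℤ) ∣ ((cnt jt n - cnt it n) - (cnt jt (-n) - cnt it (-n))) := by
    intro n hn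
    have h1 := Finset.mem_filter.mp hn
    have h2 := hU n h1.1
    refine ⟨h2, h1.2, ?_⟩
    have := hcon n h2
    have heq : (cnt jt n + cnt it (-n)) - (cnt jt (-n) + cnt it n)
        = (cnt jt n - cnt it n) - (cnt jt (-n) - cnt it (-n)) := by ring
    rwa [heq] at this
  have hwP : ∑ n ∈ P, (cnt jt n + cnt jt (-n) + cnt it n + cnt it (-n)) ≤ 10 := by
    rw [← hw10]
    refine Finset.sum_le_sum_of_subset_of_nonneg hPsub fun n _ _ => ?_
    have := cnt_nonneg jt n; have := cnt_nonneg jt (-n)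
    have := cnt_nonneg it n; have := cnt_nonneg it (-n)
    omega
  have hcard2 : P.card ≤ 2 := by
    have h2 : P.card • (4:ℤ) ≤ ∑ n ∈ P, (cnt jt n + cnt jt (-n) + cnt it n + cnt it (-n)) := by
      refine Finset.card_nsmul_le_sum P _ _ fun n hn => ?_
      obtain ⟨_, hne0, hdvd⟩ := hPfacts n hn
      have := cnt_nonneg jt n; have := cnt_nonneg jt (-n)
      have := cnt_nonneg it n; have := cnt_nonneg it (-n)
      omega
    rw [nsmul_eq_mul] at h2
    have : (P.card : ℤ) ≤ 2 := by omega
    exact_mod_cast this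
  have hPsum : ∑ n ∈ P, n * ((cnt jt n - cnt it n) - (cnt jt (-n) - cnt it (-n))) = 0 := by
    rw [hPdef, Finset.sum_filter_of_ne, hnd0]
    intro x _ hx hc
    rw [hc, mul_zero] at hx
    exact hx rfl
  have hPempty : P = ∅ := by
    rcases Finset.eq_empty_or_nonempty P with h | ⟨n1, hn1⟩
    · exact h
    exfalso
    have hge1 : 1 ≤ P.card := Finset.card_pos.mpr ⟨n1, hn1⟩
    have hc1 : P.card = 1 ∨ P.card = 2 := by omega
    rcases hc1 with hc | hc
    · obtain ⟨a, ha⟩ := Finset.card_eq_one.mp hc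
      rw [ha, Finset.sum_singleton] at hPsum
      obtain ⟨hapos, hane, _⟩ := hPfacts a (by rw [ha]; exact Finset.mem_singleton_self a)
      exact (mul_ne_zero (by omega) hane) hPsum
    · obtain ⟨a, b, hab, hP2⟩ := Finset.card_eq_two.mp hc
      rw [hP2, Finset.sum_pair hab] at hPsum
      rw [hP2, Finset.sum_pair hab] at hwP
      obtain ⟨hapos, hane, hadvd⟩ := hPfacts a (by rw [hP2]; simp)
      obtain ⟨hbpos, hbne, hbdvd⟩ := hPfacts b (by rw [hP2]; simp)
      have h4a : (cnt jt a - cnt it a) - (cnt jt (-a) - cnt it (-a)) = 4 ∨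
          (cnt jt a - cnt it a) - (cnt jt (-a) - cnt it (-a)) = -4 := by
        have := cnt_nonneg jt a; have := cnt_nonneg jt (-a)
        have := cnt_nonneg it a; have := cnt_nonneg it (-a)
        have := cnt_nonneg jt b; have := cnt_nonneg jt (-b)
        have := cnt_nonneg it b; have := cnt_nonneg it (-b)
        omega
      have h4b : (cnt jt b - cnt it b) - (cnt jt (-b) - cnt it (-b)) = 4 ∨
          (cnt jt b - cnt it b) - (cnt jt (-b) - cnt it (-b)) = -4 := by
        have := cnt_nonneg jt a; have := cnt_nonneg jt (-a)
        have := cnt_nonneg it a; have := cnt_nonneg it (-a)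
        have := cnt_nonneg jt b; have := cnt_nonneg jt (-b)
        have := cnt_nonneg it b; have := cnt_nonneg it (-b)
        omega
      rcases h4a with h | h <;> rcases h4b with h' | h' <;> rw [h, h'] at hPsum <;> omega
  -- part (i) conclusion: symmetry of D
  have hDsym : ∀ n : ℤ, 0 < n → cnt jt n - cnt it n = cnt jt (-n) - cnt it (-n) := by
    intro n hn
    by_cases hnU : n ∈ U
    · by_contra hx
      have : n ∈ P := Finset.mem_filter.mpr ⟨hnU, by omega⟩
      rw [hPempty] at this
      simp at this
    · obtain ⟨e1, e2⟩ := hvan jt hmemjt hmemjt' hjt0 n hn hnU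
      obtain ⟨e3, e4⟩ := hvan it hmemit hmemit' hit0 n hn hnU
      omega
  -- part (ii): D = 0 everywhere
  obtain ⟨m0, hm0⟩ := hcnt
  have hm0ne : m0 ≠ 0 := by
    intro h
    rw [h] at hm0
    have h1 : cnt jt 0 = 0 := by
      by_contra hx
      obtain ⟨k, hk⟩ := (cnt_pos_iff jt 0).mp (lt_of_le_of_ne (cnt_nonneg jt 0) (Ne.symm hx))
      exact hjt0 k hk
    have h2 : cnt it 0 = 0 := by
      by_contra hx
      obtain ⟨k, hk⟩ := (cnt_pos_iff it 0).mp (lt_of_le_of_ne (cnt_nonneg it 0) (Ne.symm hx))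
      exact hit0 k hk
    rw [h1, h2] at hm0
    exact hm0 rfl
  have hsumD0 : ∑ n ∈ U, (cnt jt n - cnt it n) = 0 := by
    have h1 : ∑ n ∈ U, ((cnt jt n + cnt jt (-n)) - (cnt it n + cnt it (-n))) = 0 := by
      rw [Finset.sum_sub_distrib, hs1jt, hs1it]; ring
    have h2 : ∑ n ∈ U, ((cnt jt n + cnt jt (-n)) - (cnt it n + cnt it (-n)))
        = ∑ n ∈ U, 2 * (cnt jt n - cnt it n) := by
      refine Finset.sum_congr rfl fun n hn => ?_
      have := hDsym n (hU n hn)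
      omega
    rw [h2, ← Finset.mul_sum] at h1
    omega
  -- n0 with nonzero D, positive
  have hn0 : ∃ n0 : ℤ, 0 < n0 ∧ cnt jt n0 - cnt it n0 ≠ 0 := by
    rcases lt_trichotomy m0 0 with h | h | h
    · refine ⟨-m0, by omega, ?_⟩
      have := hDsym (-m0) (by omega)
      rw [neg_neg] at this
      omega
    · exact absurd h hm0ne
    · exact ⟨m0, h, by omega⟩
  obtain ⟨n0, hn0pos, hn0ne⟩ := hn0
  have hn0U : n0 ∈ U := by
    rcases (by omega : cnt jt n0 ≠ 0 ∨ cnt it n0 ≠ 0) with hx | hx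
    · obtain ⟨k, hk⟩ := (cnt_pos_iff jt n0).mp (lt_of_le_of_ne (cnt_nonneg _ _) (Ne.symm hx))
      exact hk ▸ hmemjt k (hk ▸ hn0pos)
    · obtain ⟨k, hk⟩ := (cnt_pos_iff it n0).mp (lt_of_le_of_ne (cnt_nonneg _ _) (Ne.symm hx))
      exact hk ▸ hmemit k (hk ▸ hn0pos)
  -- positive element and negative element of D on U
  have hexpos : ∃ a ∈ U, 0 < cnt jt a - cnt it a := by
    rcases lt_or_gt_of_ne hn0ne with h | h
    · by_contra hno
      push_neg at hno
      have : ∑ n ∈ U, (cnt jt n - cnt it n) < ∑ n ∈ U, (0:ℤ) :=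
        Finset.sum_lt_sum (fun i hi => hno i hi) ⟨n0, hn0U, h⟩
      simp [hsumD0] at this
    · exact ⟨n0, hn0U, h⟩
  have hexneg : ∃ b ∈ U, cnt jt b - cnt it b < 0 := by
    rcases lt_or_gt_of_ne hn0ne with h | h
    · exact ⟨n0, hn0U, h⟩
    · by_contra hno
      push_neg at hno
      have : ∑ n ∈ U, (0:ℤ) < ∑ n ∈ U, (cnt jt n - cnt it n) :=
        Finset.sum_lt_sum (fun i hi => hno i hi) ⟨n0, hn0U, h⟩
      simp [hsumD0] at this
  obtain ⟨a, haU, haD⟩ := hexpos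
  obtain ⟨b, hbU, hbD⟩ := hexneg
  have hapos := hU a haU
  have hbpos := hU b hbU
  -- a = jv via jt side
  have hajv : a = jv := by
    by_contra hx
    have h1 : 0 < cnt jt a := by have := cnt_nonneg it a; omega
    have h2 : 0 < cnt jt (-a) := by
      have := hDsym a hapos
      have := cnt_nonneg it (-a)
      omega
    exact five_support jv hjv jt hjt0 hjtsum hjtmem.1 hjtmem.2 a hapos hx
      ((cnt_pos_iff jt a).mp h1) ((cnt_pos_iff jt (-a)).mp h2)
  have hbjv : b = jv := by
    by_contra hx
    have h1 : 0 < cnt it b := by have := cnt_nonneg jt b; omega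
    have h2 : 0 < cnt it (-b) := by
      have := hDsym b hbpos
      have := cnt_nonneg jt (-b)
      omega
    exact five_support jv hjv it hit0 hitsum hitmem.1 hitmem.2 b hbpos hx
      ((cnt_pos_iff it b).mp h1) ((cnt_pos_iff it (-b)).mp h2)
  rw [hajv] at haD
  rw [hbjv] at hbD
  omega


private lemma count_ofFn (v : Fin 5 → ℤ) (m : ℤ) :
    (List.ofFn v : Multiset ℤ).count m = (Finset.univ.filter (fun k => v k = m)).card := by
  have h1 : (List.ofFn v : Multiset ℤ) = Multiset.map v (Finset.univ.val) := by
    rw [List.ofFn_eq_map]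
    rfl
  rw [h1, Multiset.count_map, Finset.card, Finset.filter_val]
  congr 1
  exact Multiset.filter_congr fun x _ => eq_comm


private lemma gauss_neg : (gaussianReal 0 1).map (fun x : ℝ => -x) = gaussianReal 0 1 := by
  have h := gaussianReal_map_const_mul (μ := 0) (v := 1) (-1)
  have h2 : (fun x : ℝ => -x) = ((-1 : ℝ) * ·) := by funext x; ring
  rw [h2, h]
  norm_num

private lemma gauss_neg_apply {A : Set ℝ} (hA : MeasurableSet A) :
    gaussianReal 0 1 ((fun x : ℝ => -x) ⁻¹' A) = gaussianReal 0 1 A := by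
  conv_rhs => rw [← gauss_neg]
  rw [Measure.map_apply measurable_neg hA]

/-- Rotation-type invariance of a finite product of standard Gaussians. -/
private lemma map_rot {κ : Type*} [Fintype κ] [DecidableEq κ] (j0 j1 : κ) (hne : j0 ≠ j1) :
    (Measure.pi fun _ : κ => gaussianReal 0 1).map
      (fun (y : κ → ℝ) (i : κ) => if i = j0 then -y j1 else if i = j1 then y j0 else y i)
      = Measure.pi fun _ : κ => gaussianReal 0 1 := by
  set ψ : (κ → ℝ) → (κ → ℝ) :=
    fun y i => if i = j0 then -y j1 else if i = j1 then y j0 else y i with hψdef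
  have hψ : Measurable ψ := by
    refine measurable_pi_lambda _ fun i => ?_
    simp only [hψdef]
    split_ifs
    · exact (measurable_pi_apply j1).neg
    · exact measurable_pi_apply j0
    · exact measurable_pi_apply i
  refine (Measure.pi_eq fun s hs => ?_).symm
  rw [Measure.map_apply hψ (MeasurableSet.univ_pi hs)]
  classical
  set s'' : κ → Set ℝ := fun i =>
    if i = j0 then s j1 else if i = j1 then (fun x : ℝ => -x) ⁻¹' (s j0) else s i with hs''def
  have hpre : ψ ⁻¹' (Set.univ.pi s) = Set.univ.pi s'' := by
    ext y
    simp only [Set.mem_preimage, Set.mem_univ_pi]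
    constructor
    · intro H i
      simp only [hs''def]
      by_cases h0 : i = j0
      · subst h0
        have := H j1
        simp only [hψdef, if_neg (Ne.symm hne), if_pos rfl] at this
        rw [if_pos rfl]
        exact this
      · by_cases h1 : i = j1
        · subst h1
          have := H j0
          simp only [hψdef, if_pos rfl] at this
          rw [if_neg h0, if_pos rfl]
          exact this
        · have := H i
          simp only [hψdef, if_neg h0, if_neg h1] at this
          rw [if_neg h0, if_neg h1]
          exact this
    · intro H i
      simp only [hψdef]
      by_cases h0 : i = j0
      · subst h0
        have := H j1
        simp only [hs''def, if_neg (Ne.symm hne), if_pos rfl] at this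
        rw [if_pos rfl]
        exact this
      · by_cases h1 : i = j1
        · subst h1
          have := H j0
          simp only [hs''def, if_pos rfl] at this
          rw [if_neg h0, if_pos rfl]
          exact this
        · have := H i
          simp only [hs''def, if_neg h0, if_neg h1] at this
          rw [if_neg h0, if_neg h1]
          exact this
  rw [hpre, Measure.pi_pi]
  rw [← Equiv.prod_comp (Equiv.swap j0 j1) (fun i => gaussianReal 0 1 (s i))]
  refine Finset.prod_congr rfl fun i _ => ?_
  simp only [hs''def]
  by_cases h0 : i = j0
  · subst h0
    rw [if_pos rfl, Equiv.swap_apply_left]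
  · by_cases h1 : i = j1
    · subst h1
      rw [if_neg h0, if_pos rfl, Equiv.swap_apply_right, gauss_neg_apply (hs j0)]
    · rw [if_neg h0, if_neg h1, Equiv.swap_apply_of_ne_of_ne h0 h1]


private lemma map_eq_pi {Ω : Type*} [MeasurableSpace Ω] {p : Measure Ω} [IsProbabilityMeasure p]
    {ι : Type*} {f : ι → Ω → ℝ}
    (hmeas : ∀ i, Measurable (f i))
    (hlaw : ∀ i, p.map (f i) = gaussianReal 0 1)
    (hindep : iIndepFun (m := fun _ => (inferInstance : MeasurableSpace ℝ)) f p)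
    (T : Finset ι) :
    p.map (fun ω (i : ↥T) => f i ω) = Measure.pi (fun _ : ↥T => gaussianReal 0 1) := by
  classical
  have hX : Measurable (fun ω (i : ↥T) => f i ω) :=
    measurable_pi_lambda _ fun i => hmeas i
  refine (Measure.pi_eq fun s hs => ?_).symm
  rw [Measure.map_apply hX (MeasurableSet.univ_pi hs)]
  set s' : ι → Set ℝ := fun j => if h : j ∈ T then s ⟨j, h⟩ else Set.univ with hs'def
  have hs'meas : ∀ j, MeasurableSet (s' j) := by
    intro j
    simp only [hs'def]
    split_ifs with h
    · exact hs ⟨j, h⟩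
    · exact MeasurableSet.univ
  have hs'pos : ∀ (j) (h : j ∈ T), s' j = s ⟨j, h⟩ := fun j h => by
    simp only [hs'def, dif_pos h]
  have hpre : (fun ω (i : ↥T) => f i ω) ⁻¹' (Set.univ.pi s) = ⋂ j ∈ T, f j ⁻¹' (s' j) := by
    ext ω
    simp only [Set.mem_preimage, Set.mem_univ_pi, Set.mem_iInter]
    constructor
    · intro H j hj
      rw [hs'pos j hj]
      exact H ⟨j, hj⟩
    · intro H i
      have := H i.1 i.2
      rwa [hs'pos i.1 i.2] at this
  rw [hpre, hindep.meas_biInter (S := T) (fun j _ => ⟨s' j, hs'meas j, rfl⟩)]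
  have hterm : ∀ j ∈ T, p (f j ⁻¹' s' j) = gaussianReal 0 1 (s' j) := fun j _ => by
    rw [← hlaw j, Measure.map_apply (hmeas j) (hs'meas j)]
  rw [Finset.prod_congr rfl hterm, ← Finset.prod_coe_sort T (fun j => gaussianReal 0 1 (s' j))]
  exact Finset.prod_congr rfl fun i _ => by rw [hs'pos i.1 i.2]


private noncomputable def wfun (m : ℤ) (x : {n : ℤ // 0 < n} × Bool → ℝ) : ℂ :=
  if hm : 0 < m then
    ((x (⟨m, hm⟩, false) : ℝ) : ℂ) + Complex.I * ((x (⟨m, hm⟩, true) : ℝ) : ℂ)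
  else if hm' : 0 < -m then
    ((x (⟨-m, hm'⟩, false) : ℝ) : ℂ) - Complex.I * ((x (⟨-m, hm'⟩, true) : ℝ) : ℂ)
  else 0

private lemma wfun_measurable (m : ℤ) : Measurable (wfun m) := by
  unfold wfun
  split_ifs with h1 h2
  · exact (Complex.measurable_ofReal.comp (measurable_pi_apply _)).add
      ((Complex.measurable_ofReal.comp (measurable_pi_apply _)).const_mul _)
  · exact (Complex.measurable_ofReal.comp (measurable_pi_apply _)).sub
      ((Complex.measurable_ofReal.comp (measurable_pi_apply _)).const_mul _)
  · exact measurable_const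

private lemma rot1 (a b : ℝ) :
    (-(b : ℂ)) + Complex.I * (a : ℂ) = Complex.I * ((a : ℂ) + Complex.I * (b : ℂ)) := by
  linear_combination (-(b : ℂ)) * Complex.I_sq

private lemma rot2 (a b : ℝ) :
    (-(b : ℂ)) - Complex.I * (a : ℂ) = (-Complex.I) * ((a : ℂ) - Complex.I * (b : ℂ)) := by
  linear_combination (-(b : ℂ)) * Complex.I_sq

private lemma zeta_ne_one (A B : ℕ) (h : ¬ ((4:ℤ) ∣ ((A : ℤ) - (B : ℤ)))) :
    Complex.I ^ A * (-Complex.I) ^ B ≠ 1 := by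
  intro hz
  apply h
  have hI3 : (-Complex.I) = Complex.I ^ 3 := by
    rw [pow_succ, Complex.I_sq]
    ring
  rw [hI3, ← pow_mul, ← pow_add] at hz
  -- I ^ (A + 3 B) = 1 → 4 ∣ A + 3B
  have horder : ∀ n : ℕ, Complex.I ^ n = 1 → 4 ∣ n := by
    intro n hn
    have h4 : Complex.I ^ 4 = 1 := Complex.I_pow_four
    have := Nat.div_add_mod n 4
    rw [← this, pow_add, pow_mul, h4, one_pow, one_mul] at hn
    have hlt : n % 4 = 0 ∨ n % 4 = 1 ∨ n % 4 = 2 ∨ n % 4 = 3 := by omega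
    rcases hlt with h0 | h0 | h0 | h0 <;> rw [h0] at hn
    · omega
    · rw [pow_one] at hn; simp [Complex.ext_iff] at hn
    · rw [Complex.I_sq] at hn; norm_num at hn
    · rw [← hI3] at hn
      have : Complex.I = -1 := by
        have := congrArg Neg.neg hn
        simpa using this
      simp [Complex.ext_iff] at this
  have := horder (A + 3 * B) hz
  omega

private lemma wfun_pos (m : ℤ) (hm : 0 < m) (x : {n : ℤ // 0 < n} × Bool → ℝ) :
    wfun m x = ((x (⟨m, hm⟩, false) : ℝ) : ℂ) + Complex.I * ((x (⟨m, hm⟩, true) : ℝ) : ℂ) := by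
  unfold wfun
  rw [dif_pos hm]

private lemma wfun_neg (m : ℤ) (hm : m < 0) (x : {n : ℤ // 0 < n} × Bool → ℝ) :
    wfun m x = ((x (⟨-m, neg_pos.mpr hm⟩, false) : ℝ) : ℂ)
      - Complex.I * ((x (⟨-m, neg_pos.mpr hm⟩, true) : ℝ) : ℂ) := by
  unfold wfun
  rw [dif_neg (by omega : ¬ 0 < m), dif_pos (neg_pos.mpr hm)]


end AuxiliaryLemmas

/-- Let `j ≥ 1` and `(j_1,…,j_5), (i_1,…,i_5) ∈ 𝒜̃_5^{c,j}`
with different multisets `{j_1,…,j_5} ≠ {i_1,…,i_5}`.  Then the mixed moment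
`∫ g_{j_1}⋯g_{j_5} conj(g_{i_1}⋯g_{i_5}) dp` vanishes. -/
theorem moment_tilde_A5c_same_j_orthogonal
    {Ω : Type*} [MeasurableSpace Ω] (p : Measure Ω) [IsProbabilityMeasure p]
    (G : GaussianData Ω p)
    (jv : ℤ) (hjv : 0 < jv)
    (jt it : Fin 5 → ℤ)
    (hjt0 : ∀ k, jt k ≠ 0) (hit0 : ∀ k, it k ≠ 0)
    (hjtsum : ∑ k, jt k = 0) (hitsum : ∑ k, it k = 0)
    (hjtmem : ∃ l m : Fin 5, l ≠ m ∧ jt l = jv ∧ jt m = -jv)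
    (hitmem : ∃ l m : Fin 5, l ≠ m ∧ it l = jv ∧ it m = -jv)
    (hne : (List.ofFn jt : Multiset ℤ) ≠ (List.ofFn it : Multiset ℤ)) :
    ∫ ω, (∏ k, G.g (jt k) ω) * starRingEnd ℂ (∏ k, G.g (it k) ω) ∂p = 0 := by
  classical
  obtain ⟨l1, m1, hlm1, hl1, hm1⟩ := hjtmem
  obtain ⟨l2, m2, hlm2, hl2, hm2⟩ := hitmem
  -- counts differ somewhere
  have hcnt : ∃ m : ℤ, cnt jt m ≠ cnt it m := by
    by_contra hx
    push_neg at hx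
    apply hne
    refine Multiset.ext.mpr fun m => ?_
    rw [count_ofFn, count_ofFn]
    have := hx m
    unfold cnt at this
    exact_mod_cast this
  obtain ⟨nst, hnstpos, hnst⟩ :=
    combo jv hjv jt it hjt0 hit0 hjtsum hitsum ⟨⟨l1, hl1⟩, ⟨m1, hm1⟩⟩ ⟨⟨l2, hl2⟩, ⟨m2, hm2⟩⟩ hcnt
      (fun v hv0 U hU hm hm' => sum_cnt v U hU hm hm' hv0)
  -- exponent data
  set e : Fin 5 ⊕ Fin 5 → ℤ := Sum.elim jt (fun k => -(it k)) with hedef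
  have he0 : ∀ k, e k ≠ 0 := by
    rintro (k | k)
    · exact hjt0 k
    · simpa [hedef] using hit0 k
  set A : ℕ := (Finset.univ.filter (fun k => e k = nst)).card with hAdef
  set B : ℕ := (Finset.univ.filter (fun k => e k = -nst)).card with hBdef
  have hA : (A : ℤ) = cnt jt nst + cnt it (-nst) := by
    have h1 : A = (Finset.univ.filter (fun k => jt k = nst)).card
        + (Finset.univ.filter (fun k => it k = -nst)).card := by
      rw [hAdef, Finset.card_filter, Fintype.sum_sum_type,
        Finset.card_filter, Finset.card_filter]
      congr 1
      refine Finset.sum_congr rfl fun k _ => ?_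
      show (if -it k = nst then (1:ℕ) else 0) = if it k = -nst then 1 else 0
      refine if_congr ⟨fun h => by omega, fun h => by omega⟩ rfl rfl
    rw [h1, cnt, cnt]
    push_cast
    ring
  have hB : (B : ℤ) = cnt jt (-nst) + cnt it nst := by
    have h1 : B = (Finset.univ.filter (fun k => jt k = -nst)).card
        + (Finset.univ.filter (fun k => it k = nst)).card := by
      rw [hBdef, Finset.card_filter, Fintype.sum_sum_type,
        Finset.card_filter, Finset.card_filter]
      congr 1
      refine Finset.sum_congr rfl fun k _ => ?_
      show (if -it k = -nst then (1:ℕ) else 0) = if it k = nst then 1 else 0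
      refine if_congr ⟨fun h => by omega, fun h => by omega⟩ rfl rfl
    rw [h1, cnt, cnt]
    push_cast
    ring
  have hAB : ¬ ((4:ℤ) ∣ ((A : ℤ) - (B : ℤ))) := by
    rw [hA, hB]
    exact hnst
  -- index sets
  set N : {n : ℤ // 0 < n} := ⟨nst, hnstpos⟩ with hNdef
  set τ : (Fin 5 ⊕ Fin 5) × Bool → {n : ℤ // 0 < n} × Bool :=
    fun kb => (⟨|e kb.1|, abs_pos.mpr (he0 kb.1)⟩, kb.2) with hτdef
  set T : Finset ({n : ℤ // 0 < n} × Bool) :=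
    Finset.image τ Finset.univ ∪ {(N, false), (N, true)} with hTdef
  have hj0T : (N, false) ∈ T := by
    rw [hTdef]; exact Finset.mem_union_right _ (by simp)
  have hj1T : (N, true) ∈ T := by
    rw [hTdef]; exact Finset.mem_union_right _ (by simp)
  have hτT : ∀ (k : Fin 5 ⊕ Fin 5) (b : Bool),
      ((⟨|e k|, abs_pos.mpr (he0 k)⟩ : {n : ℤ // 0 < n}), b) ∈ T := fun k b => by
    rw [hTdef]
    exact Finset.mem_union_left _ (Finset.mem_image.mpr ⟨(k, b), Finset.mem_univ _, rfl⟩)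
  have hwcoordT : ∀ (k : Fin 5 ⊕ Fin 5) (b : Bool) (hm : 0 < e k),
      ((⟨e k, hm⟩ : {n : ℤ // 0 < n}), b) ∈ T := by
    intro k b hm
    have h1 : (⟨e k, hm⟩ : {n : ℤ // 0 < n}) = ⟨|e k|, abs_pos.mpr (he0 k)⟩ :=
      Subtype.ext (abs_of_pos hm).symm
    rw [h1]; exact hτT k b
  have hwcoordT' : ∀ (k : Fin 5 ⊕ Fin 5) (b : Bool) (hm : 0 < -(e k)),
      ((⟨-(e k), hm⟩ : {n : ℤ // 0 < n}), b) ∈ T := by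
    intro k b hm
    have h1 : (⟨-(e k), hm⟩ : {n : ℤ // 0 < n}) = ⟨|e k|, abs_pos.mpr (he0 k)⟩ :=
      Subtype.ext (abs_of_neg (by omega : e k < 0)).symm
    rw [h1]; exact hτT k b
  -- the random vector and its law
  set f : {n : ℤ // 0 < n} × Bool → Ω → ℝ :=
    fun nb => if nb.2 then G.l nb.1.1 else G.h nb.1.1 with hfdef
  have hfmeas : ∀ i, Measurable (f i) := by
    rintro ⟨⟨n, hn⟩, b⟩
    cases b
    · exact G.h_meas n hn
    · exact G.l_meas n hn
  have hflaw : ∀ i, p.map (f i) = gaussianReal 0 1 := by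
    rintro ⟨⟨n, hn⟩, b⟩
    cases b
    · exact G.h_law n hn
    · exact G.l_law n hn
  have hindep : iIndepFun (m := fun _ => (inferInstance : MeasurableSpace ℝ)) f p := G.indep
  set V : Ω → ({n : ℤ // 0 < n} × Bool → ℝ) := fun ω j => f j ω with hVdef
  set Φ : ({n : ℤ // 0 < n} × Bool → ℝ) → ℂ :=
    fun x => ∏ k : Fin 5 ⊕ Fin 5, ((G.c : ℂ) * wfun (e k) x) with hΦdef
  have hΦmeas : Measurable Φ := by
    rw [hΦdef]
    exact Finset.measurable_prod _ fun k _ => ((wfun_measurable (e k)).const_mul _)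
  set extd : (↥T → ℝ) → ({n : ℤ // 0 < n} × Bool → ℝ) :=
    fun y j => if h : j ∈ T then y ⟨j, h⟩ else 0 with hextdef
  have hextmeas : Measurable extd := by
    rw [hextdef]
    refine measurable_pi_lambda _ fun j => ?_
    by_cases h : j ∈ T
    · simp only [dif_pos h]; exact measurable_pi_apply _
    · simp only [dif_neg h]; exact measurable_const
  set X : Ω → (↥T → ℝ) := fun ω (i : ↥T) => f i ω with hXdef
  have hXmeas : Measurable X := measurable_pi_lambda _ fun i => hfmeas i
  have hlawX : p.map X = Measure.pi (fun _ : ↥T => gaussianReal 0 1) :=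
    map_eq_pi hfmeas hflaw hindep T
  set j0 : ↥T := ⟨(N, false), hj0T⟩ with hj0def
  set j1 : ↥T := ⟨(N, true), hj1T⟩ with hj1def
  have hj01 : j0 ≠ j1 := by
    intro h
    have := congrArg (fun z : ↥T => (z : {n : ℤ // 0 < n} × Bool).2) h
    simp [hj0def, hj1def] at this
  set ψ : (↥T → ℝ) → (↥T → ℝ) :=
    fun y i => if i = j0 then -y j1 else if i = j1 then y j0 else y i with hψdef
  have hψmeas : Measurable ψ := by
    rw [hψdef]
    refine measurable_pi_lambda _ fun i => ?_
    by_cases h0 : i = j0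
    · simp only [if_pos h0]; exact (measurable_pi_apply j1).neg
    · simp only [if_neg h0]
      by_cases h1 : i = j1
      · simp only [if_pos h1]; exact measurable_pi_apply j0
      · simp only [if_neg h1]; exact measurable_pi_apply i
  set X' : Ω → (↥T → ℝ) := fun ω => ψ (X ω) with hX'def
  have hX'meas : Measurable X' := hψmeas.comp hXmeas
  have hlawX' : p.map X' = Measure.pi (fun _ : ↥T => gaussianReal 0 1) := by
    rw [hX'def, show (fun ω => ψ (X ω)) = ψ ∘ X from rfl,
      ← Measure.map_map hψmeas hXmeas, hlawX, hψdef]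
    exact map_rot j0 j1 hj01
  -- pointwise identities
  have hVh : ∀ (n : ℤ) (hn : 0 < n) (ω : Ω), V ω (⟨n, hn⟩, false) = G.h n ω := fun n hn ω => rfl
  have hVl : ∀ (n : ℤ) (hn : 0 < n) (ω : Ω), V ω (⟨n, hn⟩, true) = G.l n ω := fun n hn ω => rfl
  have hg1 : ∀ (m : ℤ), m ≠ 0 → ∀ ω, G.g m ω = (G.c : ℂ) * wfun m (V ω) := by
    intro m hm ω
    rcases lt_or_gt_of_ne hm with hneg | hpos
    · have hp : 0 < -m := by omega
      have hgm : G.g m ω = starRingEnd ℂ (G.g (-m) ω) := by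
        have := G.g_neg (-m) hp ω
        rwa [neg_neg] at this
      rw [hgm, G.g_def (-m) hp ω]
      simp only [wfun]
      rw [dif_neg (by omega : ¬ (0:ℤ) < m), dif_pos hp, hVh (-m) hp ω, hVl (-m) hp ω]
      simp only [map_mul, map_add, Complex.conj_ofReal, Complex.conj_I]
      ring
    · rw [G.g_def m hpos ω]
      simp only [wfun]
      rw [dif_pos hpos, hVh m hpos ω, hVl m hpos ω]
  have hg2 : ∀ (m : ℤ), m ≠ 0 → ∀ ω,
      starRingEnd ℂ (G.g m ω) = (G.c : ℂ) * wfun (-m) (V ω) := by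
    intro m hm ω
    rcases lt_or_gt_of_ne hm with hneg | hpos
    · have hp : 0 < -m := by omega
      have hgm : G.g m ω = starRingEnd ℂ (G.g (-m) ω) := by
        have := G.g_neg (-m) hp ω
        rwa [neg_neg] at this
      rw [hgm, Complex.conj_conj]
      exact hg1 (-m) (by omega) ω
    · rw [G.g_def m hpos ω]
      simp only [wfun, neg_neg]
      rw [dif_neg (by omega : ¬ (0:ℤ) < -m), dif_pos hpos, hVh m hpos ω, hVl m hpos ω]
      simp only [map_mul, map_add, Complex.conj_ofReal, Complex.conj_I]
      ring
  have hFeq : ∀ ω, (∏ k, G.g (jt k) ω) * starRingEnd ℂ (∏ k, G.g (it k) ω) = Φ (V ω) := by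
    intro ω
    rw [map_prod, hΦdef]
    beta_reduce
    rw [Fintype.prod_sum_type]
    congr 1
    · refine Finset.prod_congr rfl fun k _ => ?_
      simp only [hedef, Sum.elim_inl]
      exact hg1 (jt k) (hjt0 k) ω
    · refine Finset.prod_congr rfl fun k _ => ?_
      simp only [hedef, Sum.elim_inr]
      exact hg2 (it k) (hit0 k) ω
  have hΦagree : ∀ x y, (∀ j ∈ T, x j = y j) → Φ x = Φ y := by
    intro x y hxy
    rw [hΦdef]
    beta_reduce
    refine Finset.prod_congr rfl fun k _ => ?_
    congr 1
    rcases lt_or_gt_of_ne (he0 k) with hneg | hpos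
    · rw [wfun_neg (e k) hneg x, wfun_neg (e k) hneg y,
        hxy (⟨-(e k), neg_pos.mpr hneg⟩, false) (hwcoordT' k false (neg_pos.mpr hneg)),
        hxy (⟨-(e k), neg_pos.mpr hneg⟩, true) (hwcoordT' k true (neg_pos.mpr hneg))]
    · rw [wfun_pos (e k) hpos x, wfun_pos (e k) hpos y,
        hxy (⟨e k, hpos⟩, false) (hwcoordT k false hpos),
        hxy (⟨e k, hpos⟩, true) (hwcoordT k true hpos)]
  have hζprod : ∏ k : Fin 5 ⊕ Fin 5,
      (if e k = nst then Complex.I else if e k = -nst then -Complex.I else 1)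
      = Complex.I ^ A * (-Complex.I) ^ B := by
    rw [← Finset.prod_filter_mul_prod_filter_not Finset.univ (fun k => e k = nst)]
    congr 1
    · rw [Finset.prod_congr rfl (fun k hk => if_pos (Finset.mem_filter.mp hk).2),
        Finset.prod_const, hAdef]
    · rw [Finset.prod_congr rfl
        (fun k hk => if_neg ((Finset.mem_filter.mp hk).2 : ¬ e k = nst)),
        ← Finset.prod_filter_mul_prod_filter_not
          (Finset.univ.filter (fun k => ¬ e k = nst)) (fun k => e k = -nst),
        Finset.filter_filter]
      have h2 : Finset.univ.filter (fun k => ¬ e k = nst ∧ e k = -nst)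
          = Finset.univ.filter (fun k => e k = -nst) :=
        Finset.filter_congr fun k _ => ⟨fun h => h.2, fun h => ⟨by omega, h⟩⟩
      rw [h2, Finset.prod_congr rfl (fun k hk => if_pos (Finset.mem_filter.mp hk).2),
        Finset.prod_const, hBdef,
        Finset.prod_congr rfl (fun k hk =>
          if_neg ((Finset.mem_filter.mp hk).2 : ¬ e k = -nst)),
        Finset.prod_const_one, mul_one]
  have hrot : ∀ x x' : ({n : ℤ // 0 < n} × Bool → ℝ),
      x' (N, false) = -x (N, true) → x' (N, true) = x (N, false) →
      (∀ j ∈ T, j ≠ (N, false) → j ≠ (N, true) → x' j = x j) →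
      Φ x' = (Complex.I ^ A * (-Complex.I) ^ B) * Φ x := by
    intro x x' h0 h1 hrest
    have hfac : ∀ k, ((G.c : ℂ) * wfun (e k) x') =
        (if e k = nst then Complex.I else if e k = -nst then -Complex.I else 1) *
          ((G.c : ℂ) * wfun (e k) x) := by
      intro k
      rcases lt_or_gt_of_ne (he0 k) with hneg | hpos
      · by_cases hk : e k = -nst
        · have hNeq : (⟨-(e k), neg_pos.mpr hneg⟩ : {n : ℤ // 0 < n}) = N :=
            Subtype.ext (show -(e k) = nst by omega)
          rw [wfun_neg (e k) hneg x', wfun_neg (e k) hneg x, hNeq,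
            if_neg (show ¬ e k = nst by omega), if_pos hk, h0, h1,
            Complex.ofReal_neg, rot2]
          ring
        · have hsub : (⟨-(e k), neg_pos.mpr hneg⟩ : {n : ℤ // 0 < n}) ≠ N := by
            intro hEq
            have h2 : -(e k) = nst := congrArg Subtype.val hEq
            omega
          rw [wfun_neg (e k) hneg x', wfun_neg (e k) hneg x,
            hrest (⟨-(e k), neg_pos.mpr hneg⟩, false)
              (hwcoordT' k false (neg_pos.mpr hneg))
              (fun hEq => hsub (congrArg Prod.fst hEq))
              (fun hEq => hsub (congrArg Prod.fst hEq)),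
            hrest (⟨-(e k), neg_pos.mpr hneg⟩, true)
              (hwcoordT' k true (neg_pos.mpr hneg))
              (fun hEq => hsub (congrArg Prod.fst hEq))
              (fun hEq => hsub (congrArg Prod.fst hEq)),
            if_neg (show ¬ e k = nst by omega), if_neg hk, one_mul]
      · by_cases hk : e k = nst
        · have hNeq : (⟨e k, hpos⟩ : {n : ℤ // 0 < n}) = N :=
            Subtype.ext (show e k = nst by omega)
          rw [wfun_pos (e k) hpos x', wfun_pos (e k) hpos x, hNeq,
            if_pos hk, h0, h1, Complex.ofReal_neg, rot1]
          ring
        · have hsub : (⟨e k, hpos⟩ : {n : ℤ // 0 < n}) ≠ N := by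
            intro hEq
            have h2 : e k = nst := congrArg Subtype.val hEq
            omega
          rw [wfun_pos (e k) hpos x', wfun_pos (e k) hpos x,
            hrest (⟨e k, hpos⟩, false) (hwcoordT k false hpos)
              (fun hEq => hsub (congrArg Prod.fst hEq))
              (fun hEq => hsub (congrArg Prod.fst hEq)),
            hrest (⟨e k, hpos⟩, true) (hwcoordT k true hpos)
              (fun hEq => hsub (congrArg Prod.fst hEq))
              (fun hEq => hsub (congrArg Prod.fst hEq)),
            if_neg hk, if_neg (show ¬ e k = -nst by omega), one_mul]
    calc Φ x' = ∏ k : Fin 5 ⊕ Fin 5,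
        ((if e k = nst then Complex.I else if e k = -nst then -Complex.I else 1) *
          ((G.c : ℂ) * wfun (e k) x)) := by
          rw [hΦdef]; beta_reduce; exact Finset.prod_congr rfl fun k _ => hfac k
    _ = (∏ k : Fin 5 ⊕ Fin 5,
          (if e k = nst then Complex.I else if e k = -nst then -Complex.I else 1)) *
        ∏ k : Fin 5 ⊕ Fin 5, ((G.c : ℂ) * wfun (e k) x) := Finset.prod_mul_distrib
    _ = (Complex.I ^ A * (-Complex.I) ^ B) * Φ x := by rw [hζprod, hΦdef]
  -- transfer to the finite product space
  have hextX : ∀ ω, ∀ j ∈ T, extd (X ω) j = V ω j := by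
    intro ω j hj
    simp only [hextdef]
    rw [dif_pos hj]
  have hC1 : ∀ ω, Φ (extd (X ω)) = Φ (V ω) := fun ω => hΦagree _ _ (hextX ω)
  have hrotX : ∀ ω, Φ (extd (X' ω))
      = (Complex.I ^ A * (-Complex.I) ^ B) * Φ (extd (X ω)) := by
    intro ω
    refine hrot _ _ ?_ ?_ ?_
    · show extd (X' ω) (N, false) = - extd (X ω) (N, true)
      simp only [hextdef]
      rw [dif_pos hj0T, dif_pos hj1T]
      show X' ω j0 = - X ω j1
      simp only [hX'def, hψdef]
      simp
    · show extd (X' ω) (N, true) = extd (X ω) (N, false)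
      simp only [hextdef]
      rw [dif_pos hj1T, dif_pos hj0T]
      show X' ω j1 = X ω j0
      simp only [hX'def, hψdef]
      simp [Ne.symm hj01]
    · intro j hj hne0 hne1
      simp only [hextdef]
      rw [dif_pos hj, dif_pos hj]
      show X' ω ⟨j, hj⟩ = X ω ⟨j, hj⟩
      have hs0 : (⟨j, hj⟩ : ↥T) ≠ j0 := fun hEq => hne0 (congrArg Subtype.val hEq)
      have hs1 : (⟨j, hj⟩ : ↥T) ≠ j1 := fun hEq => hne1 (congrArg Subtype.val hEq)
      simp only [hX'def, hψdef]
      simp [hs0, hs1]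
  -- the main computation
  have hkey : ∫ ω, (∏ k, G.g (jt k) ω) * starRingEnd ℂ (∏ k, G.g (it k) ω) ∂p
      = (Complex.I ^ A * (-Complex.I) ^ B) *
        ∫ ω, (∏ k, G.g (jt k) ω) * starRingEnd ℂ (∏ k, G.g (it k) ω) ∂p := by
    calc ∫ ω, (∏ k, G.g (jt k) ω) * starRingEnd ℂ (∏ k, G.g (it k) ω) ∂p
        = ∫ ω, (Φ ∘ extd) (X ω) ∂p := by
          refine integral_congr_ae (Filter.Eventually.of_forall fun ω => ?_)
          beta_reduce
          rw [hFeq ω]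
          exact (hC1 ω).symm
    _ = ∫ y, (Φ ∘ extd) y ∂(p.map X) :=
        (integral_map hXmeas.aemeasurable
          ((hΦmeas.comp hextmeas).aestronglyMeasurable)).symm
    _ = ∫ y, (Φ ∘ extd) y ∂(p.map X') := by rw [hlawX, hlawX']
    _ = ∫ ω, (Φ ∘ extd) (X' ω) ∂p :=
        integral_map hX'meas.aemeasurable
          ((hΦmeas.comp hextmeas).aestronglyMeasurable)
    _ = ∫ ω, (Complex.I ^ A * (-Complex.I) ^ B) *
          ((∏ k, G.g (jt k) ω) * starRingEnd ℂ (∏ k, G.g (it k) ω)) ∂p := by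
          refine integral_congr_ae (Filter.Eventually.of_forall fun ω => ?_)
          show Φ (extd (X' ω)) = _
          rw [hrotX ω, hC1 ω, ← hFeq ω]
    _ = (Complex.I ^ A * (-Complex.I) ^ B) *
          ∫ ω, (∏ k, G.g (jt k) ω) * starRingEnd ℂ (∏ k, G.g (it k) ω) ∂p :=
        integral_const_mul _ _
  have hζne : Complex.I ^ A * (-Complex.I) ^ B ≠ 1 := zeta_ne_one A B hAB
  have hsolve : (1 - Complex.I ^ A * (-Complex.I) ^ B) *
      ∫ ω, (∏ k, G.g (jt k) ω) * starRingEnd ℂ (∏ k, G.g (it k) ω) ∂p = 0 := by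
    linear_combination hkey
  rcases mul_eq_zero.mp hsolve with h | h
  · exact absurd h (sub_ne_zero.mpr (Ne.symm hζne))
  · exact h
end

section
/- There exists a constant C > 0 such that for every integer N ≥ 2, the sum over pairs of nonzero integers j, l with 0 < |j| ≤ N, 0 < |l| ≤ N and |j + l| > N of 1/(|j|·l²) is at most C·(ln N)/N. -/
lemma sum_inv_Icc_le (N : ℕ) : ∑ m ∈ Finset.Icc (1:ℤ) (N:ℤ), 1/(m:ℝ) ≤ 1 + Real.log N := by
  have h1 : ∑ m ∈ Finset.Icc (1:ℤ) (N:ℤ), 1/(m:ℝ) = ∑ k ∈ Finset.Icc 1 N, 1/(k:ℝ) := by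
    refine Finset.sum_nbij' (fun m => m.toNat) (fun k => (k:ℤ)) ?_ ?_ ?_ ?_ ?_
    · intro a ha; simp only [Finset.mem_Icc] at *; omega
    · intro a ha; simp only [Finset.mem_Icc] at *; omega
    · intro a ha; simp only [Finset.mem_Icc] at ha; show ((a.toNat : ℕ) : ℤ) = a; omega
    · intro a ha; simp
    · intro a ha; simp only [Finset.mem_Icc] at ha
      have h0 : ((a.toNat : ℕ) : ℤ) = a := by omega
      show 1 / (a:ℝ) = 1 / ((a.toNat : ℕ) : ℝ)
      have h0' : ((a.toNat : ℕ) : ℝ) = (a:ℝ) := by exact_mod_cast h0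
      rw [h0']
  rw [h1]
  have h3 := harmonic_le_one_add_log N
  have h2 : ((harmonic N : ℚ) : ℝ) = ∑ k ∈ Finset.Icc 1 N, 1/(k:ℝ) := by
    rw [harmonic_eq_sum_Icc]; push_cast; simp [one_div]
  linarith [h2 ▸ h3]

lemma refl_sum (n : ℤ) : ∑ m ∈ Finset.Icc (1:ℤ) n, 1/(((n+1-m:ℤ)):ℝ) = ∑ m ∈ Finset.Icc (1:ℤ) n, 1/(m:ℝ) := by
  refine Finset.sum_nbij' (fun m => n+1-m) (fun m => n+1-m) ?_ ?_ ?_ ?_ ?_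
  · intro a ha; simp only [Finset.mem_Icc] at *; omega
  · intro a ha; simp only [Finset.mem_Icc] at *; omega
  · intro a ha; ring
  · intro a ha; ring
  · intro a ha; norm_num

lemma count_le (n l : ℤ) (hl : l ∈ Finset.Icc (-n) n) :
    ((Finset.Icc (-n) n).filter (fun j => l ≠ 0 ∧ n < |j| + |l|)).card ≤ (2*|l|).toNat := by
  have hsub : ((Finset.Icc (-n) n).filter (fun j => l ≠ 0 ∧ n < |j| + |l|)) ⊆
      Finset.Icc (-n) n \ Finset.Icc (-(n-|l|)) (n-|l|) := by
    intro j hj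
    simp only [Finset.mem_filter, Finset.mem_sdiff, Finset.mem_Icc] at *
    refine ⟨hj.1, ?_⟩
    rcases hj with ⟨_, _, h2⟩
    rcases abs_cases j with ⟨e, _⟩ | ⟨e, _⟩ <;> rcases abs_cases l with ⟨f, _⟩ | ⟨f, _⟩ <;> omega
  refine (Finset.card_le_card hsub).trans ?_
  rw [Finset.card_sdiff_of_subset]
  · rw [Int.card_Icc, Int.card_Icc]
    simp only [Finset.mem_Icc] at hl
    rcases abs_cases l with ⟨f, _⟩ | ⟨f, _⟩ <;> omega
  · intro x hx; simp only [Finset.mem_Icc] at *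
    rcases abs_cases l with ⟨f, _⟩ | ⟨f, _⟩ <;> omega

/-- There is `C > 0` such that for every `N ≥ 2`,
`∑_{0<|j|,|l|≤N, |j+l|>N} 1/(|j| l²) ≤ C (ln N)/N`. -/
theorem sum_inv_abs_mul_sq_le :
    ∃ C : ℝ, 0 < C ∧ ∀ N : ℕ, 2 ≤ N →
      ∑ q ∈ ((Finset.Icc (-(N : ℤ)) N ×ˢ Finset.Icc (-(N : ℤ)) N).filter
          (fun q => q.1 ≠ 0 ∧ q.2 ≠ 0 ∧ |q.1 + q.2| > (N : ℤ))),
        1 / (|(q.1 : ℝ)| * (q.2 : ℝ) ^ 2) ≤ C * Real.log N / N := by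
  refine ⟨20, by norm_num, fun N hN => ?_⟩
  set n : ℤ := (N : ℤ) with hn
  have hn2 : (2:ℤ) ≤ n := by rw [hn]; exact_mod_cast hN
  set g : ℤ → ℝ := fun l => 1 / (((n+1-|l| : ℤ) : ℝ) * (l:ℝ)^2) with hg
  -- nonnegativity of g on Icc
  have hgnn : ∀ l ∈ Finset.Icc (-n) n, 0 ≤ g l := by
    intro l hl
    simp only [Finset.mem_Icc] at hl
    apply one_div_nonneg.mpr
    apply mul_nonneg _ (sq_nonneg _)
    have : (0:ℤ) ≤ n+1-|l| := by rcases abs_cases l with ⟨e,_⟩|⟨e,_⟩ <;> omega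
    exact_mod_cast this
  set T := ((Finset.Icc (-n) n ×ˢ Finset.Icc (-n) n).filter
      (fun q => q.1 ≠ 0 ∧ q.2 ≠ 0 ∧ |q.1 + q.2| > n)) with hT
  set T' := ((Finset.Icc (-n) n ×ˢ Finset.Icc (-n) n).filter
      (fun q : ℤ × ℤ => q.2 ≠ 0 ∧ n < |q.1| + |q.2|)) with hT'
  have step1 : ∑ q ∈ T, 1 / (|(q.1 : ℝ)| * (q.2 : ℝ) ^ 2) ≤ ∑ q ∈ T, g q.2 := by
    refine Finset.sum_le_sum ?_
    rintro ⟨j, l⟩ hq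
    simp only [hT, Finset.mem_filter, Finset.mem_product, Finset.mem_Icc] at hq
    obtain ⟨⟨⟨hj1, hj2⟩, hl1, hl2⟩, hjne, hlne, habs⟩ := hq
    have htri : |j + l| ≤ |j| + |l| := abs_add_le j l
    have hkey : n + 1 - |l| ≤ |j| := by omega
    have hA : (0:ℤ) < n + 1 - |l| := by
      rcases abs_cases l with ⟨e,_⟩|⟨e,_⟩ <;> omega
    have hAr : (0:ℝ) < ((n+1-|l| : ℤ) : ℝ) := by exact_mod_cast hA
    have hlsq : (0:ℝ) < (l:ℝ)^2 := by
      have : (l:ℝ) ≠ 0 := by exact_mod_cast hlne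
      positivity
    have hjr : ((n+1-|l| : ℤ) : ℝ) ≤ |(j:ℝ)| := by
      rw [← Int.cast_abs]; exact_mod_cast hkey
    simp only [hg]
    apply one_div_le_one_div_of_le (by positivity)
    exact mul_le_mul_of_nonneg_right hjr hlsq.le
  have step2 : ∑ q ∈ T, g q.2 ≤ ∑ q ∈ T', g q.2 := by
    refine Finset.sum_le_sum_of_subset_of_nonneg ?_ ?_
    · intro q hq
      simp only [hT, hT', Finset.mem_filter] at *
      obtain ⟨hmem, hjne, hlne, habs⟩ := hq
      exact ⟨hmem, hlne, by have := abs_add_le q.1 q.2; omega⟩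
    · intro q hq _
      simp only [hT', Finset.mem_filter, Finset.mem_product] at hq
      exact hgnn q.2 hq.1.2
  have step3 : ∑ q ∈ T', g q.2 =
      ∑ l ∈ Finset.Icc (-n) n,
        (((Finset.Icc (-n) n).filter (fun j => l ≠ 0 ∧ n < |j| + |l|)).card : ℝ) * g l := by
    rw [hT', Finset.sum_filter, Finset.sum_product_right]
    refine Finset.sum_congr rfl fun l _ => ?_
    rw [← Finset.sum_filter]
    trans ∑ _a ∈ (Finset.Icc (-n) n).filter (fun j => l ≠ 0 ∧ n < |j| + |l|), g l
    · exact Finset.sum_congr rfl fun a _ => rfl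
    · rw [Finset.sum_const, nsmul_eq_mul]
  have step4 : ∑ l ∈ Finset.Icc (-n) n,
        (((Finset.Icc (-n) n).filter (fun j => l ≠ 0 ∧ n < |j| + |l|)).card : ℝ) * g l
      ≤ ∑ l ∈ Finset.Icc (-n) n, ((2*|l| : ℤ) : ℝ) * g l := by
    refine Finset.sum_le_sum fun l hl => ?_
    refine mul_le_mul_of_nonneg_right ?_ (hgnn l hl)
    have h1 := count_le n l hl
    have h2 : (((Finset.Icc (-n) n).filter (fun j => l ≠ 0 ∧ n < |j| + |l|)).card : ℝ)
        ≤ (((2*|l|).toNat : ℕ) : ℝ) := by exact_mod_cast h1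
    refine h2.trans ?_
    have : (((2*|l|).toNat : ℕ) : ℤ) = 2*|l| := Int.toNat_of_nonneg (by positivity)
    exact_mod_cast this.le
  -- split the sum over Icc (-n) n
  set F : ℤ → ℝ := fun l => ((2*|l| : ℤ) : ℝ) * g l with hF
  have hFeven : ∀ m : ℤ, F (-m) = F m := by
    intro m
    simp only [hF, hg, abs_neg, Int.cast_neg, neg_sq]
  have hsplit : Finset.Icc (-n) n = Finset.Icc (-n) (-1) ∪ Finset.Icc 0 n := by
    ext x; simp only [Finset.mem_union, Finset.mem_Icc]; omega
  have hdisj : Disjoint (Finset.Icc (-n) (-1)) (Finset.Icc (0:ℤ) n) := by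
    rw [Finset.disjoint_left]
    intro a ha hb
    simp only [Finset.mem_Icc] at *
    omega
  have hzero : Finset.Icc (0:ℤ) n = insert 0 (Finset.Icc 1 n) := by
    ext x; simp only [Finset.mem_insert, Finset.mem_Icc]; omega
  have hnegsum : ∑ l ∈ Finset.Icc (-n) (-1), F l = ∑ m ∈ Finset.Icc (1:ℤ) n, F m := by
    refine Finset.sum_nbij' (fun m => -m) (fun m => -m) ?_ ?_ ?_ ?_ ?_
    · intro a ha; simp only [Finset.mem_Icc] at *; omega
    · intro a ha; simp only [Finset.mem_Icc] at *; omega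
    · intro a ha; ring
    · intro a ha; ring
    · intro a ha; rw [← hFeven a]
  have hF0 : F 0 = 0 := by simp [hF]
  have hsum5 : ∑ l ∈ Finset.Icc (-n) n, F l = 2 * ∑ m ∈ Finset.Icc (1:ℤ) n, F m := by
    rw [hsplit, Finset.sum_union hdisj, hnegsum, hzero,
      Finset.sum_insert (by simp), hF0]
    ring
  -- evaluate F on positives
  have hpos : ∀ m ∈ Finset.Icc (1:ℤ) n,
      F m = (2/((n:ℝ)+1)) * (1/(m:ℝ) + 1/(((n+1-m:ℤ)):ℝ)) := by
    intro m hm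
    simp only [Finset.mem_Icc] at hm
    have habs : |m| = m := abs_of_pos (by omega)
    have ha : (0:ℝ) < (m:ℝ) := by exact_mod_cast hm.1.trans_lt' (by norm_num)
    have hb : (0:ℝ) < ((n+1-m : ℤ):ℝ) := by exact_mod_cast (by omega : (0:ℤ) < n+1-m)
    have hab : ((n+1-m : ℤ):ℝ) = (n:ℝ)+1-(m:ℝ) := by push_cast; ring
    have hc : (0:ℝ) < (n:ℝ)+1 := by
      have : (0:ℤ) < n+1 := by omega
      exact_mod_cast this
    simp only [hF, hg, habs]
    rw [hab] at hb ⊢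
    push_cast
    field_simp
    ring
  have hsum6 : ∑ m ∈ Finset.Icc (1:ℤ) n, F m
      ≤ (2/((n:ℝ)+1)) * (2 * (1 + Real.log N)) := by
    rw [Finset.sum_congr rfl hpos, ← Finset.mul_sum, Finset.sum_add_distrib, refl_sum]
    have hH : ∑ m ∈ Finset.Icc (1:ℤ) n, 1/(m:ℝ) ≤ 1 + Real.log N := by
      have := sum_inv_Icc_le N
      simpa [hn] using this
    have hc : (0:ℝ) < (n:ℝ)+1 := by
      have : (0:ℤ) < n+1 := by omega
      exact_mod_cast this
    have h2 : (0:ℝ) ≤ 2/((n:ℝ)+1) := by positivity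
    nlinarith [hH]
  -- final numeric bound
  have hlog2 : (0.6931471803 : ℝ) < Real.log 2 := Real.log_two_gt_d9
  have hNr : (2:ℝ) ≤ (N:ℝ) := by exact_mod_cast hN
  have hlogN : Real.log 2 ≤ Real.log N := Real.log_le_log (by norm_num) hNr
  have hlogpos : (2/3 : ℝ) ≤ Real.log N := by linarith
  have hNpos : (0:ℝ) < (N:ℝ) := by linarith
  have hfinal : 2 * ((2/((n:ℝ)+1)) * (2 * (1 + Real.log N))) ≤ 20 * Real.log N / N := by
    have hnr : (n:ℝ) = (N:ℝ) := by simp [hn]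
    rw [hnr]
    have h1 : (0:ℝ) < (N:ℝ)+1 := by linarith
    have key : 2 * (2/((N:ℝ)+1) * (2*(1+Real.log N))) = 8*(1+Real.log N)/((N:ℝ)+1) := by ring
    rw [key, div_le_div_iff₀ h1 hNpos]
    have hmul : (2/3:ℝ)*(N:ℝ) ≤ Real.log N * N := mul_le_mul_of_nonneg_right hlogpos (by linarith)
    nlinarith [hmul, hlogpos]
  calc ∑ q ∈ T, 1 / (|(q.1 : ℝ)| * (q.2 : ℝ) ^ 2)
      ≤ ∑ q ∈ T, g q.2 := step1
    _ ≤ ∑ q ∈ T', g q.2 := step2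
    _ = _ := step3
    _ ≤ ∑ l ∈ Finset.Icc (-n) n, F l := step4
    _ = 2 * ∑ m ∈ Finset.Icc (1:ℤ) n, F m := hsum5
    _ ≤ 2 * ((2/((n:ℝ)+1)) * (2 * (1 + Real.log N))) := by linarith [hsum6]
    _ ≤ 20 * Real.log N / N := hfinal
end

section
/- For every integer m ≥ 2 there exists a constant C > 0 such that for every integer N ≥ 2, the sum over m-tuples of nonzero integers (j_1,…,j_m) with 0 < |j_k| ≤ N for all k and |j_1 + ⋯ + j_m| > N of 1/(|j_1| · ∏_{k=2}^{m} |j_k|²) is at most C·(ln N)/N. -/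
open Finset

private lemma sum_union_le' {α : Type*} [DecidableEq α] (A B : Finset α) (f : α → ℝ)
    (hf : ∀ a, 0 ≤ f a) : ∑ a ∈ A ∪ B, f a ≤ ∑ a ∈ A, f a + ∑ a ∈ B, f a := by
  have h1 : ∑ a ∈ A ∪ B, f a + ∑ a ∈ A ∩ B, f a = ∑ a ∈ A, f a + ∑ a ∈ B, f a :=
    Finset.sum_union_inter
  have h2 : 0 ≤ ∑ a ∈ A ∩ B, f a := Finset.sum_nonneg fun a _ => hf a
  linarith

private lemma sum_biUnion_le' {ι α : Type*} [DecidableEq ι] [DecidableEq α] (s : Finset ι)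
    (u : ι → Finset α) (f : α → ℝ) (hf : ∀ a, 0 ≤ f a) :
    ∑ a ∈ s.biUnion u, f a ≤ ∑ i ∈ s, ∑ a ∈ u i, f a := by
  induction s using Finset.induction with
  | empty => simp
  | @insert i s hx ih =>
      rw [Finset.biUnion_insert, Finset.sum_insert hx]
      exact le_trans (sum_union_le' _ _ f hf) (by linarith)

private lemma sum_erase_zero_eq (f : ℤ → ℝ) (hf : ∀ x, f (-x) = f x) (N : ℕ) :
    ∑ x ∈ (Finset.Icc (-(N:ℤ)) N).erase 0, f x = 2 * ∑ n ∈ Finset.Icc (1:ℤ) N, f n := by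
  have h1 : (Finset.Icc (-(N:ℤ)) N).erase 0 = Finset.Icc (-(N:ℤ)) (-1) ∪ Finset.Icc 1 N := by
    ext x; simp [Finset.mem_Icc]; omega
  have h2 : Finset.Icc (-(N:ℤ)) (-1) = (Finset.Icc (1:ℤ) N).image (fun n => -n) := by
    ext x; simp [Finset.mem_Icc]
    constructor
    · intro h; exact ⟨-x, ⟨by omega, by omega⟩, by omega⟩
    · rintro ⟨n, ⟨ha, hb⟩, rfl⟩; omega
  have hdisj : Disjoint (Finset.Icc (-(N:ℤ)) (-1)) (Finset.Icc (1:ℤ) N) := by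
    rw [Finset.disjoint_left]; intro a ha hb
    simp [Finset.mem_Icc] at ha hb; omega
  rw [h1, Finset.sum_union hdisj, h2, Finset.sum_image (by intro a _ b _ h; have h' : -a = -b := h; omega)]
  simp only [hf]; ring

private lemma sum_Icc_inv_le (N : ℕ) (hN : 1 ≤ N) :
    ∑ n ∈ Finset.Icc (1:ℤ) N, (1 / (n:ℝ)) ≤ 1 + Real.log N := by
  induction N with
  | zero => omega
  | succ M ih =>
    rcases Nat.lt_or_ge 1 (M+1) with h1 | h1
    · have hM : 1 ≤ M := by omega
      have key : Finset.Icc (1:ℤ) ((M:ℤ)+1) = insert ((M:ℤ)+1) (Finset.Icc (1:ℤ) (M:ℤ)) := by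
        ext x; simp [Finset.mem_Icc]; omega
      have hnotmem : ((M:ℤ)+1) ∉ Finset.Icc (1:ℤ) M := by simp [Finset.mem_Icc]
      have hMpos : (0:ℝ) < M := by exact_mod_cast hM
      have hlog := Real.log_le_sub_one_of_pos (x := (M:ℝ)/((M:ℝ)+1)) (by positivity)
      rw [Real.log_div (by positivity) (by positivity)] at hlog
      have hstep : 1/((M:ℝ)+1) ≤ Real.log ((M:ℝ)+1) - Real.log M := by
        have h3 : (M:ℝ)/((M:ℝ)+1) - 1 = -(1/((M:ℝ)+1)) := by field_simp; ring
        rw [h3] at hlog; linarith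
      have := ih hM
      push_cast
      rw [key, Finset.sum_insert hnotmem]
      push_cast at this ⊢
      linarith
    · have hM : M = 0 := by omega
      subst hM
      norm_num

private lemma sum_Icc_sq_le (N : ℕ) : ∑ n ∈ Finset.Icc (1:ℤ) N, ((n:ℝ)^2)⁻¹ ≤ 2 := by
  suffices h : ∀ K : ℕ, 1 ≤ K → ∑ n ∈ Finset.Icc (1:ℤ) K, ((n:ℝ)^2)⁻¹ ≤ 2 - ((K:ℝ))⁻¹ by
    rcases Nat.eq_zero_or_pos N with h0 | h0
    · subst h0; simp
    · have := h N h0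
      have : (0:ℝ) ≤ ((N:ℝ))⁻¹ := by positivity
      linarith [h N h0]
  intro K hK
  induction K with
  | zero => omega
  | succ M ih =>
    rcases Nat.lt_or_ge 1 (M+1) with h1 | h1
    · have hM : 1 ≤ M := by omega
      have key : Finset.Icc (1:ℤ) ((M:ℤ)+1) = insert ((M:ℤ)+1) (Finset.Icc (1:ℤ) (M:ℤ)) := by
        ext x; simp [Finset.mem_Icc]; omega
      have hnotmem : ((M:ℤ)+1) ∉ Finset.Icc (1:ℤ) M := by simp [Finset.mem_Icc]
      have hMpos : (0:ℝ) < M := by exact_mod_cast hM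
      have := ih hM
      push_cast
      rw [key, Finset.sum_insert hnotmem]
      push_cast at this ⊢
      have hineq : (((M:ℝ)+1)^2)⁻¹ ≤ (M:ℝ)⁻¹ - ((M:ℝ)+1)⁻¹ := by
        have heq : (M:ℝ)⁻¹ - ((M:ℝ)+1)⁻¹ = ((M:ℝ)*((M:ℝ)+1))⁻¹ := by
          field_simp; ring
        rw [heq]
        apply inv_anti₀ (by positivity)
        nlinarith
      linarith
    · have hM : M = 0 := by omega
      subst hM; norm_num

private lemma sum_abs_inv_le (N : ℕ) (hN : 2 ≤ N) :
    ∑ x ∈ (Finset.Icc (-(N:ℤ)) N).erase 0, |(x:ℝ)|⁻¹ ≤ 5 * Real.log N := by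
  rw [sum_erase_zero_eq (fun x => |(x:ℝ)|⁻¹) (by intro x; push_cast; rw [abs_neg]) N]
  have h2 : ∑ n ∈ Finset.Icc (1:ℤ) N, |(n:ℝ)|⁻¹ = ∑ n ∈ Finset.Icc (1:ℤ) N, 1/(n:ℝ) := by
    apply Finset.sum_congr rfl
    intro n hn
    simp only [Finset.mem_Icc] at hn
    have : (0:ℝ) < (n:ℝ) := by exact_mod_cast hn.1
    rw [abs_of_pos this, one_div]
  have h3 := sum_Icc_inv_le N (by omega)
  have hlog2 : (0.6931471803:ℝ) < Real.log 2 := Real.log_two_gt_d9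
  have hmono : Real.log 2 ≤ Real.log N := Real.log_le_log (by norm_num) (by exact_mod_cast hN)
  rw [h2]
  linarith

private lemma sum_sq_inv_le (N : ℕ) :
    ∑ x ∈ (Finset.Icc (-(N:ℤ)) N).erase 0, ((x:ℝ)^2)⁻¹ ≤ 4 := by
  rw [sum_erase_zero_eq (fun x => ((x:ℝ)^2)⁻¹) (by intro x; push_cast; rw [neg_pow]; ring_nf) N]
  have := sum_Icc_sq_le N
  linarith

private lemma sum_sq_inv_nonneg (N : ℕ) (s : Finset ℤ) :
    (0:ℝ) ≤ ∑ x ∈ s, ((x:ℝ)^2)⁻¹ := Finset.sum_nonneg fun x _ => by positivity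

private lemma card_filter_abs_le (N s : ℤ) (hN : 0 ≤ N) :
    (((Finset.Icc (-N) N)).filter (fun x => N < |x + s|)).card ≤ s.natAbs := by
  rcases le_or_gt 0 s with hs | hs
  · have hsub : ((Finset.Icc (-N) N)).filter (fun x => N < |x + s|) ⊆ Finset.Ioc (N - s) N := by
      intro x hx
      simp only [Finset.mem_filter, Finset.mem_Icc, Finset.mem_Ioc] at hx ⊢
      rcases lt_abs.mp hx.2 with h | h <;> omega
    have := Finset.card_le_card hsub
    rw [Int.card_Ioc] at this
    omega
  · have hsub : ((Finset.Icc (-N) N)).filter (fun x => N < |x + s|) ⊆ Finset.Ico (-N) (-N - s) := by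
      intro x hx
      simp only [Finset.mem_filter, Finset.mem_Icc, Finset.mem_Ico] at hx ⊢
      rcases lt_abs.mp hx.2 with h | h <;> omega
    have := Finset.card_le_card hsub
    rw [Int.card_Ico] at this
    omega

section
variable (r N : ℕ)

private noncomputable def II (N : ℕ) : Finset ℤ := (Finset.Icc (-(N:ℤ)) N).erase 0

end

set_option maxHeartbeats 1000000 in
/-- For every `m ≥ 2` there is `C > 0` such that for every
`N ≥ 2`, the sum over `m`-tuples of nonzero integers `(j_1,…,j_m)` with
`0 < |j_k| ≤ N` and `|j_1 + ⋯ + j_m| > N` of `1/(|j_1| ∏_{k=2}^m |j_k|²)` is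
at most `C (ln N)/N`. -/
theorem sum_inv_abs_mul_prod_sq_le (m : ℕ) (hm : 2 ≤ m) :
    ∃ C : ℝ, 0 < C ∧ ∀ N : ℕ, 2 ≤ N →
      ∑ j ∈ (Fintype.piFinset (fun _ : Fin m => Finset.Icc (-(N : ℤ)) N)).filter
          (fun j => (∀ k, j k ≠ 0) ∧ |∑ k, j k| > (N : ℤ)),
        1 / (|(j ⟨0, by omega⟩ : ℝ)| *
          ∏ k ∈ Finset.univ.filter (fun k : Fin m => 1 ≤ (k : ℕ)), ((j k : ℝ)) ^ 2)
      ≤ C * Real.log N / N := by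
  obtain ⟨r, rfl⟩ : ∃ r, m = r + 2 := ⟨m - 2, by omega⟩
  refine ⟨70 * ((r:ℝ)+1)^3 * 4^r, by positivity, ?_⟩
  intro N hN
  classical
  have hN0 : (0:ℝ) < N := by exact_mod_cast Nat.lt_of_lt_of_le (by norm_num) hN
  set L := Real.log N with hLdef
  have hL2 : (0.6931471803:ℝ) < L := by
    have : Real.log 2 ≤ L := Real.log_le_log (by norm_num) (by exact_mod_cast hN)
    linarith [Real.log_two_gt_d9]
  have hL : 0 < L := by linarith
  set K : Finset (Fin (r+2)) := Finset.univ.filter (fun k : Fin (r+2) => 1 ≤ (k : ℕ)) with hK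
  set S := (Fintype.piFinset (fun _ : Fin (r+2) => Finset.Icc (-(N : ℤ)) N)).filter
      (fun j => (∀ k, j k ≠ 0) ∧ |∑ k, j k| > (N : ℤ)) with hS
  set t : (Fin (r+2) → ℤ) → ℝ := fun j => |(j 0:ℝ)|⁻¹ * ∏ k ∈ K, (((j k:ℝ))^2)⁻¹ with ht
  have ht0 : ∀ j, 0 ≤ t j := by
    intro j
    have : (0:ℝ) ≤ ∏ k ∈ K, (((j k:ℝ))^2)⁻¹ := Finset.prod_nonneg fun k _ => by positivity
    positivity
  have hKerase : K = Finset.univ.erase 0 := by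
    ext k
    simp [hK, Nat.one_le_iff_ne_zero, Fin.val_eq_zero_iff]
  have hKimage : K = Finset.univ.image Fin.succ := by
    ext k
    simp [hK, Fin.exists_succ_eq, Nat.one_le_iff_ne_zero, Fin.val_eq_zero_iff]
  have hgoalsum : ∀ j : Fin (r+2) → ℤ,
      1 / (|(j ⟨0, by omega⟩ : ℝ)| * ∏ k ∈ K, ((j k : ℝ)) ^ 2) = t j := by
    intro j
    have h0 : (⟨0, by omega⟩ : Fin (r+2)) = 0 := rfl
    rw [h0, one_div, mul_inv, ← Finset.prod_inv_distrib]
  rw [Finset.sum_congr rfl (fun j _ => hgoalsum j)]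
  -- split
  set p : (Fin (r+2) → ℤ) → Prop := fun j => ∀ k : Fin (r+2), k ≠ 0 → 2*((r:ℤ)+1)*|j k| ≤ N
    with hp
  rw [← Finset.sum_filter_add_sum_filter_not S p t]
  have hA : ∑ j ∈ S.filter p, t j ≤ 2/(N:ℝ) * (((r:ℝ)+1) * (5*L*4^r)) := by
    set F : (Fin (r+1) → ℤ) → ℝ := fun b => ∏ k, (((b k:ℝ))^2)⁻¹ with hF
    have hF0 : ∀ b, 0 ≤ F b := fun b => Finset.prod_nonneg fun k _ => by positivity
    have htail : ∀ j : Fin (r+2) → ℤ, ∏ k ∈ K, (((j k:ℝ))^2)⁻¹ = F (Fin.tail j) := by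
      intro j
      rw [hKimage, Finset.prod_image (fun a _ b _ h => Fin.succ_injective _ h)]
      rfl
    have hpoint : ∀ j ∈ S.filter p, t j ≤ 2/(N:ℝ) * F (Fin.tail j) := by
      intro j hj
      rw [Finset.mem_filter, hS, Finset.mem_filter] at hj
      obtain ⟨⟨hmem, hnz, habs⟩, hpj⟩ := hj
      have hsum0 : ∑ k, j k = j 0 + ∑ k : Fin (r+1), j k.succ := Fin.sum_univ_succ _
      have htails : |∑ k : Fin (r+1), j k.succ| ≤ ∑ k : Fin (r+1), |j k.succ| :=
        Finset.abs_sum_le_sum_abs _ _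
      have hsmall : ∑ k : Fin (r+1), 2*((r:ℤ)+1)*|j k.succ| ≤ (r+1) • (N:ℤ) := by
        have := Finset.sum_le_card_nsmul Finset.univ
          (fun k : Fin (r+1) => 2*((r:ℤ)+1)*|j k.succ|) (N:ℤ)
          (fun k _ => hpj k.succ (Fin.succ_ne_zero k))
        simpa using this
      have hsmall2 : 2*((r:ℤ)+1)*|∑ k : Fin (r+1), j k.succ| ≤ ((r:ℤ)+1)*N := by
        have h1 : 2*((r:ℤ)+1)*|∑ k : Fin (r+1), j k.succ|
            ≤ 2*((r:ℤ)+1)* ∑ k : Fin (r+1), |j k.succ| := by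
          apply mul_le_mul_of_nonneg_left htails (by positivity)
        have h2 : 2*((r:ℤ)+1)* ∑ k : Fin (r+1), |j k.succ|
            = ∑ k : Fin (r+1), 2*((r:ℤ)+1)*|j k.succ| := by
          rw [Finset.mul_sum]
        have h3 : ((r+1) : ℕ) • (N:ℤ) = ((r:ℤ)+1)*N := by
          rw [nsmul_eq_mul]; push_cast; ring
        rw [h2] at h1
        rw [h3] at hsmall
        exact le_trans h1 hsmall
      have hs2 : 2*|∑ k : Fin (r+1), j k.succ| ≤ (N:ℤ) := by
        nlinarith [abs_nonneg (∑ k : Fin (r+1), j k.succ), Int.ofNat_nonneg r]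
      have hj0 : (N:ℤ) < 2*|j 0| := by
        have htri := abs_add_le (j 0) (∑ k : Fin (r+1), j k.succ)
        rw [hsum0] at habs
        omega
      have hcast : (N:ℝ) < 2*|((j 0 : ℤ):ℝ)| := by
        rw [← Int.cast_abs]
        exact_mod_cast hj0
      have habs0 : (0:ℝ) < |((j 0 : ℤ):ℝ)| := by linarith
      have hinv : |((j 0 : ℤ):ℝ)|⁻¹ ≤ 2/(N:ℝ) := by
        rw [inv_eq_one_div, div_le_div_iff₀ habs0 hN0]
        linarith
      have htj : t j = |((j 0 : ℤ):ℝ)|⁻¹ * F (Fin.tail j) := by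
        rw [ht]; dsimp only; rw [htail]
      rw [htj]
      exact mul_le_mul_of_nonneg_right hinv (hF0 _)
    have hinner : ∑ j ∈ S.filter p, F (Fin.tail j) ≤ ((r:ℝ)+1) * (5*L*4^r) := by
      rw [Finset.sum_comp F (Fin.tail (α := fun _ : Fin (r+2) => ℤ))]
      set G : (Fin (r+1) → ℤ) → ℝ := fun b => (∑ k, |((b k : ℤ):ℝ)|) * F b with hG
      have hG0 : ∀ b, 0 ≤ G b := by
        intro b
        have h1 : (0:ℝ) ≤ ∑ k, |((b k : ℤ):ℝ)| := Finset.sum_nonneg fun k _ => abs_nonneg _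
        exact mul_nonneg h1 (hF0 b)
      have step1 : ∑ b ∈ (S.filter p).image Fin.tail,
          ((S.filter p).filter (fun a => Fin.tail a = b)).card • F b
          ≤ ∑ b ∈ (S.filter p).image Fin.tail, G b := by
        apply Finset.sum_le_sum
        intro b hb
        obtain ⟨j, hjmem, rfl⟩ := Finset.mem_image.mp hb
        have hcard : (((S.filter p)).filter (fun a => Fin.tail a = Fin.tail j)).card
            ≤ ((Finset.Icc (-(N:ℤ)) N).filter
                (fun x => (N:ℤ) < |x + ∑ k : Fin (r+1), (Fin.tail j) k|)).card := by
          apply Finset.card_le_card_of_injOn (fun a => a 0)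
          · intro a ha
            rw [Finset.mem_coe, Finset.mem_filter, Finset.mem_filter, hS, Finset.mem_filter] at ha
            obtain ⟨⟨⟨hamem, hanz, haabs⟩, _⟩, hatail⟩ := ha
            rw [Finset.mem_coe, Finset.mem_filter]
            constructor
            · exact (Fintype.mem_piFinset.mp hamem) 0
            · have : ∑ k, a k = a 0 + ∑ k : Fin (r+1), (Fin.tail a) k := Fin.sum_univ_succ _
              rw [this, hatail] at haabs
              exact haabs
          · intro a ha a' ha' h00
            simp only [Finset.coe_filter, Set.mem_setOf_eq] at ha ha'
            have e1 : a = Fin.cons (a 0) (Fin.tail a) := (Fin.cons_self_tail a).symm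
            have e2 : a' = Fin.cons (a' 0) (Fin.tail a') := (Fin.cons_self_tail a').symm
            have h00' : a 0 = a' 0 := h00
            rw [e1, e2, ha.2, ha'.2, h00']
        have hcard2 := card_filter_abs_le (N:ℤ) (∑ k : Fin (r+1), (Fin.tail j) k)
          (by positivity)
        have hcardZ : ((((S.filter p)).filter (fun a => Fin.tail a = Fin.tail j)).card : ℤ)
            ≤ |∑ k : Fin (r+1), (Fin.tail j) k| := by
          rw [Int.abs_eq_natAbs]
          exact_mod_cast le_trans hcard hcard2
        have hcardR : ((((S.filter p)).filter (fun a => Fin.tail a = Fin.tail j)).card : ℝ)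
            ≤ |((∑ k : Fin (r+1), (Fin.tail j) k : ℤ) : ℝ)| := by
          rw [← Int.cast_abs]
          exact_mod_cast hcardZ
        have habs2 : |((∑ k : Fin (r+1), (Fin.tail j) k : ℤ) : ℝ)|
            ≤ ∑ k, |(((Fin.tail j) k : ℤ):ℝ)| := by
          push_cast
          exact Finset.abs_sum_le_sum_abs _ _
        rw [nsmul_eq_mul]
        apply mul_le_mul_of_nonneg_right _ (hF0 _)
        exact le_trans hcardR habs2
      have step2 : ∑ b ∈ (S.filter p).image Fin.tail, G b
          ≤ ∑ b ∈ Fintype.piFinset (fun _ : Fin (r+1) => II N), G b := by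
        apply Finset.sum_le_sum_of_subset_of_nonneg
        · intro b hb
          obtain ⟨j, hjmem, rfl⟩ := Finset.mem_image.mp hb
          rw [Finset.mem_filter, hS, Finset.mem_filter] at hjmem
          obtain ⟨⟨hmem, hnz, _⟩, _⟩ := hjmem
          rw [Fintype.mem_piFinset]
          intro k
          rw [II, Finset.mem_erase]
          exact ⟨hnz k.succ, (Fintype.mem_piFinset.mp hmem) k.succ⟩
        · intro b _ _
          exact hG0 b
      have step3 : ∑ b ∈ Fintype.piFinset (fun _ : Fin (r+1) => II N), G b
          ≤ ((r:ℝ)+1) * (5*L*4^r) := by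
        have swap : ∑ b ∈ Fintype.piFinset (fun _ : Fin (r+1) => II N), G b
            = ∑ k0 : Fin (r+1), ∑ b ∈ Fintype.piFinset (fun _ : Fin (r+1) => II N),
                |((b k0 : ℤ):ℝ)| * F b := by
          rw [Finset.sum_comm]
          apply Finset.sum_congr rfl
          intro b _
          rw [hG]; dsimp only
          rw [Finset.sum_mul]
        rw [swap]
        have hone : ∀ k0 : Fin (r+1),
            ∑ b ∈ Fintype.piFinset (fun _ : Fin (r+1) => II N), |((b k0 : ℤ):ℝ)| * F b
            ≤ 5*L*4^r := by
          intro k0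
          set h : Fin (r+1) → ℤ → ℝ :=
            fun k x => if k = k0 then |((x : ℤ):ℝ)|⁻¹ else (((x : ℤ):ℝ)^2)⁻¹ with hh
          have hsummand : ∀ b ∈ Fintype.piFinset (fun _ : Fin (r+1) => II N),
              |((b k0 : ℤ):ℝ)| * F b = ∏ k, h k (b k) := by
            intro b hb
            have hbne : ((b k0 : ℤ):ℝ) ≠ 0 := by
              have := (Fintype.mem_piFinset.mp hb) k0
              rw [II, Finset.mem_erase] at this
              exact_mod_cast this.1
            have e1 : F b = (((b k0 : ℤ):ℝ)^2)⁻¹ *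
                ∏ k ∈ Finset.univ.erase k0, (((b k : ℤ):ℝ)^2)⁻¹ :=
              (Finset.mul_prod_erase Finset.univ _ (Finset.mem_univ k0)).symm
            have e2 : ∏ k, h k (b k) = |((b k0 : ℤ):ℝ)|⁻¹ *
                ∏ k ∈ Finset.univ.erase k0, (((b k : ℤ):ℝ)^2)⁻¹ := by
              rw [← Finset.mul_prod_erase Finset.univ (fun k => h k (b k))
                (Finset.mem_univ k0)]
              congr 1
              · rw [hh]; simp
              · apply Finset.prod_congr rfl
                intro k hk
                rw [hh]; dsimp only
                rw [if_neg (Finset.ne_of_mem_erase hk)]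
            rw [e1, e2, ← mul_assoc]
            congr 1
            rw [← sq_abs, sq, mul_inv, ← mul_assoc,
              mul_inv_cancel₀ (abs_ne_zero.mpr hbne), one_mul]
          rw [Finset.sum_congr rfl hsummand, ← Finset.prod_univ_sum]
          have efact : ∏ k : Fin (r+1), ∑ x ∈ II N, h k x
              = (∑ x ∈ II N, |((x : ℤ):ℝ)|⁻¹) *
                ∏ k ∈ Finset.univ.erase k0, ∑ x ∈ II N, (((x : ℤ):ℝ)^2)⁻¹ := by
            rw [← Finset.mul_prod_erase Finset.univ (fun k => ∑ x ∈ II N, h k x)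
              (Finset.mem_univ k0)]
            congr 1
            · apply Finset.sum_congr rfl; intro x _; rw [hh]; simp
            · apply Finset.prod_congr rfl
              intro k hk
              apply Finset.sum_congr rfl; intro x _
              rw [hh]; dsimp only
              rw [if_neg (Finset.ne_of_mem_erase hk)]
          rw [efact]
          have f1 : ∑ x ∈ II N, |((x : ℤ):ℝ)|⁻¹ ≤ 5*L := sum_abs_inv_le N hN
          have f1' : (0:ℝ) ≤ ∑ x ∈ II N, |((x : ℤ):ℝ)|⁻¹ :=
            Finset.sum_nonneg fun x _ => by positivity
          have f2 : ∏ k ∈ Finset.univ.erase k0, ∑ x ∈ II N, (((x : ℤ):ℝ)^2)⁻¹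
              ≤ 4^r := by
            have hcarde : (Finset.univ.erase k0).card = r := by
              rw [Finset.card_erase_of_mem (Finset.mem_univ k0), Finset.card_univ,
                Fintype.card_fin]
              omega
            calc ∏ k ∈ Finset.univ.erase k0, ∑ x ∈ II N, (((x : ℤ):ℝ)^2)⁻¹
                ≤ ∏ k ∈ Finset.univ.erase k0, (4:ℝ) := by
                  apply Finset.prod_le_prod
                  · intro k _; exact sum_sq_inv_nonneg N _
                  · intro k _; exact sum_sq_inv_le N
              _ = 4^r := by rw [Finset.prod_const, hcarde]
          have f2' : (0:ℝ) ≤ ∏ k ∈ Finset.univ.erase k0,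
              ∑ x ∈ II N, (((x : ℤ):ℝ)^2)⁻¹ :=
            Finset.prod_nonneg fun k _ => sum_sq_inv_nonneg N _
          calc (∑ x ∈ II N, |((x : ℤ):ℝ)|⁻¹) *
                ∏ k ∈ Finset.univ.erase k0, ∑ x ∈ II N, (((x : ℤ):ℝ)^2)⁻¹
              ≤ (5*L) * 4^r := by
                apply mul_le_mul f1 f2 f2' (by positivity)
            _ = 5*L*4^r := by ring
        calc ∑ k0 : Fin (r+1), ∑ b ∈ Fintype.piFinset (fun _ : Fin (r+1) => II N),
              |((b k0 : ℤ):ℝ)| * F b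
            ≤ ∑ k0 : Fin (r+1), (5*L*4^r : ℝ) := Finset.sum_le_sum fun k0 _ => hone k0
          _ = ((r:ℝ)+1) * (5*L*4^r) := by
              rw [Finset.sum_const, Finset.card_univ, Fintype.card_fin, nsmul_eq_mul]
              push_cast; ring
      linarith [step1, step2, step3]
    calc ∑ j ∈ S.filter p, t j
        ≤ ∑ j ∈ S.filter p, 2/(N:ℝ) * F (Fin.tail j) := Finset.sum_le_sum hpoint
      _ = 2/(N:ℝ) * ∑ j ∈ S.filter p, F (Fin.tail j) := by rw [Finset.mul_sum]
      _ ≤ 2/(N:ℝ) * (((r:ℝ)+1) * (5*L*4^r)) := by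
          apply mul_le_mul_of_nonneg_left hinner (by positivity)
  have hB : ∑ j ∈ S.filter (fun j => ¬ p j), t j
      ≤ ((r:ℝ)+1) * (5*L*(12*((r:ℝ)+1)^2/N*4^r)) := by
    set g : Fin (r+2) → ℤ → ℝ :=
      fun k x => if k = 0 then |((x:ℤ):ℝ)|⁻¹ else (((x:ℤ):ℝ)^2)⁻¹ with hg
    have hg0 : ∀ k x, 0 ≤ g k x := by
      intro k x; rw [hg]; dsimp only; split <;> positivity
    have htg : ∀ j, t j = ∏ k, g k (j k) := by
      intro j
      have e : ∏ k, g k (j k) = g 0 (j 0) * ∏ k ∈ Finset.univ.erase 0, g k (j k) :=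
        (Finset.mul_prod_erase Finset.univ (fun k => g k (j k)) (Finset.mem_univ 0)).symm
      have e2 : ∏ k ∈ Finset.univ.erase (0 : Fin (r+2)), g k (j k)
          = ∏ k ∈ Finset.univ.erase (0 : Fin (r+2)), (((j k : ℤ):ℝ)^2)⁻¹ :=
        Finset.prod_congr rfl (fun k hk => by
          rw [hg]; dsimp only; rw [if_neg (Finset.ne_of_mem_erase hk)])
      have e3 : g 0 (j 0) = |((j 0 : ℤ):ℝ)|⁻¹ := by simp [hg]
      rw [ht]; dsimp only
      rw [e, e2, e3, hKerase]
    have hsub : S.filter (fun j => ¬ p j) ⊆ (Finset.univ.erase (0 : Fin (r+2))).biUnion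
        (fun k0 => S.filter (fun j => (N:ℤ) < 2*((r:ℤ)+1)*|j k0|)) := by
      intro j hj
      rw [Finset.mem_filter] at hj
      obtain ⟨hjS, hnp⟩ := hj
      have hnp' : ¬ ∀ k : Fin (r+2), k ≠ 0 → 2*((r:ℤ)+1)*|j k| ≤ (N:ℤ) := hnp
      push_neg at hnp'
      obtain ⟨k, hk0, hklt⟩ := hnp'
      rw [Finset.mem_biUnion]
      exact ⟨k, Finset.mem_erase.mpr ⟨hk0, Finset.mem_univ k⟩,
        Finset.mem_filter.mpr ⟨hjS, hklt⟩⟩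
    have h1 : ∑ j ∈ S.filter (fun j => ¬ p j), t j
        ≤ ∑ k0 ∈ Finset.univ.erase (0 : Fin (r+2)),
            ∑ j ∈ S.filter (fun j => (N:ℤ) < 2*((r:ℤ)+1)*|j k0|), t j := by
      refine le_trans (Finset.sum_le_sum_of_subset_of_nonneg hsub (fun j _ _ => ht0 j)) ?_
      exact sum_biUnion_le' _ _ t ht0
    have h2 : ∀ k0 : Fin (r+2), k0 ∈ Finset.univ.erase (0 : Fin (r+2)) →
        ∑ j ∈ S.filter (fun j => (N:ℤ) < 2*((r:ℤ)+1)*|j k0|), t j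
        ≤ 5*L*(12*((r:ℝ)+1)^2/N*4^r) := by
      intro k0 hk0mem
      have hk0 : k0 ≠ 0 := Finset.ne_of_mem_erase hk0mem
      set T : Fin (r+2) → Finset ℤ :=
        fun k => if k = k0 then (II N).filter (fun x => (N:ℤ) < 2*((r:ℤ)+1)*|x|) else II N
        with hT
      have hsubT : S.filter (fun j => (N:ℤ) < 2*((r:ℤ)+1)*|j k0|) ⊆
          Fintype.piFinset T := by
        intro j hj
        rw [Finset.mem_filter, hS, Finset.mem_filter] at hj
        obtain ⟨⟨hmem, hnz, _⟩, hbig⟩ := hj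
        rw [Fintype.mem_piFinset]
        intro k
        rw [hT]; dsimp only
        split_ifs with he
        · subst he
          exact Finset.mem_filter.mpr ⟨Finset.mem_erase.mpr
            ⟨hnz k, (Fintype.mem_piFinset.mp hmem) k⟩, hbig⟩
        · exact Finset.mem_erase.mpr ⟨hnz k, (Fintype.mem_piFinset.mp hmem) k⟩
      have hstep : ∑ j ∈ S.filter (fun j => (N:ℤ) < 2*((r:ℤ)+1)*|j k0|), t j
          ≤ ∏ k, ∑ x ∈ T k, g k x := by
        rw [Finset.prod_univ_sum]
        refine le_trans (le_of_eq (Finset.sum_congr rfl (fun j _ => htg j))) ?_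
        apply Finset.sum_le_sum_of_subset_of_nonneg hsubT
        intro j _ _
        exact Finset.prod_nonneg fun k _ => hg0 k (j k)
      have heval : ∏ k, ∑ x ∈ T k, g k x
          = (∑ x ∈ II N, |((x:ℤ):ℝ)|⁻¹)
            * ((∑ x ∈ (II N).filter (fun x => (N:ℤ) < 2*((r:ℤ)+1)*|x|), (((x:ℤ):ℝ)^2)⁻¹)
              * ∏ k ∈ (Finset.univ.erase (0 : Fin (r+2))).erase k0,
                  ∑ x ∈ II N, (((x:ℤ):ℝ)^2)⁻¹) := by
        rw [← Finset.mul_prod_erase Finset.univ (fun k => ∑ x ∈ T k, g k x)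
          (Finset.mem_univ (0 : Fin (r+2)))]
        have hk0' : k0 ∈ Finset.univ.erase (0 : Fin (r+2)) := hk0mem
        rw [← Finset.mul_prod_erase (Finset.univ.erase (0 : Fin (r+2)))
          (fun k => ∑ x ∈ T k, g k x) hk0']
        congr 1
        · rw [hT, hg]; dsimp only
          rw [if_neg (fun h => hk0 h.symm)]
          apply Finset.sum_congr rfl; intro x _; rw [if_pos rfl]
        congr 1
        · rw [hT, hg]; dsimp only
          rw [if_pos rfl]
          apply Finset.sum_congr rfl; intro x _; rw [if_neg hk0]
        · apply Finset.prod_congr rfl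
          intro k hk
          have hkne0 : k ≠ 0 := Finset.ne_of_mem_erase (Finset.mem_of_mem_erase hk)
          have hknek0 : k ≠ k0 := Finset.ne_of_mem_erase hk
          rw [hT, hg]; dsimp only
          rw [if_neg hknek0]
          apply Finset.sum_congr rfl; intro x _; rw [if_neg hkne0]
      have b0 : ∑ x ∈ II N, |((x:ℤ):ℝ)|⁻¹ ≤ 5*L := sum_abs_inv_le N hN
      have b0' : (0:ℝ) ≤ ∑ x ∈ II N, |((x:ℤ):ℝ)|⁻¹ :=
        Finset.sum_nonneg fun x _ => by positivity
      have bk0 : ∑ x ∈ (II N).filter (fun x => (N:ℤ) < 2*((r:ℤ)+1)*|x|), (((x:ℤ):ℝ)^2)⁻¹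
          ≤ 12*((r:ℝ)+1)^2/N := by
        have hterm : ∀ x ∈ (II N).filter (fun x => (N:ℤ) < 2*((r:ℤ)+1)*|x|),
            (((x:ℤ):ℝ)^2)⁻¹ ≤ (2*((r:ℝ)+1))^2/(N:ℝ)^2 := by
          intro x hx
          rw [Finset.mem_filter, II, Finset.mem_erase] at hx
          obtain ⟨⟨hxne, _⟩, hxbig⟩ := hx
          have hxne' : ((x:ℤ):ℝ) ≠ 0 := Int.cast_ne_zero.mpr hxne
          have hx2 : (0:ℝ) < ((x:ℤ):ℝ)^2 := by positivity
          have hcast : (N:ℝ) < 2*((r:ℝ)+1)*|((x:ℤ):ℝ)| := by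
            rw [← Int.cast_abs]
            exact_mod_cast hxbig
          have h5 : (N:ℝ)^2 ≤ (2*((r:ℝ)+1)*|((x:ℤ):ℝ)|)^2 := by
            nlinarith [abs_nonneg ((x:ℤ):ℝ)]
          rw [mul_pow, sq_abs] at h5
          rw [inv_eq_one_div, div_le_div_iff₀ hx2 (by positivity)]
          nlinarith
        have hcard : (((II N).filter (fun x => (N:ℤ) < 2*((r:ℤ)+1)*|x|)).card : ℝ)
            ≤ 3*(N:ℝ) := by
          have c1 : ((II N).filter (fun x => (N:ℤ) < 2*((r:ℤ)+1)*|x|)).card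
              ≤ (Finset.Icc (-(N:ℤ)) N).card :=
            le_trans (Finset.card_filter_le _ _) (Finset.card_erase_le)
          have c2 : (Finset.Icc (-(N:ℤ)) N).card = 2*N+1 := by
            rw [Int.card_Icc]; omega
          rw [c2] at c1
          have : ((II N).filter (fun x => (N:ℤ) < 2*((r:ℤ)+1)*|x|)).card ≤ 3*N := by omega
          exact_mod_cast le_trans (Nat.cast_le.mpr this) (le_refl _)
        have := Finset.sum_le_card_nsmul _ _ _ hterm
        rw [nsmul_eq_mul] at this
        have h6 : (((II N).filter (fun x => (N:ℤ) < 2*((r:ℤ)+1)*|x|)).card : ℝ)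
            * ((2*((r:ℝ)+1))^2/(N:ℝ)^2) ≤ 3*(N:ℝ) * ((2*((r:ℝ)+1))^2/(N:ℝ)^2) := by
          apply mul_le_mul_of_nonneg_right hcard (by positivity)
        have h7 : 3*(N:ℝ) * ((2*((r:ℝ)+1))^2/(N:ℝ)^2) = 12*((r:ℝ)+1)^2/N := by
          field_simp
          ring
        linarith
      have bk0' : (0:ℝ) ≤ ∑ x ∈ (II N).filter (fun x => (N:ℤ) < 2*((r:ℤ)+1)*|x|),
          (((x:ℤ):ℝ)^2)⁻¹ := Finset.sum_nonneg fun x _ => by positivity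
      have brest : ∏ k ∈ (Finset.univ.erase (0 : Fin (r+2))).erase k0,
          ∑ x ∈ II N, (((x:ℤ):ℝ)^2)⁻¹ ≤ 4^r := by
        have hcarde : ((Finset.univ.erase (0 : Fin (r+2))).erase k0).card = r := by
          rw [Finset.card_erase_of_mem hk0mem,
            Finset.card_erase_of_mem (Finset.mem_univ (0 : Fin (r+2))), Finset.card_univ,
            Fintype.card_fin]
          omega
        calc ∏ k ∈ (Finset.univ.erase (0 : Fin (r+2))).erase k0,
              ∑ x ∈ II N, (((x:ℤ):ℝ)^2)⁻¹
            ≤ ∏ k ∈ (Finset.univ.erase (0 : Fin (r+2))).erase k0, (4:ℝ) := by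
              apply Finset.prod_le_prod
              · intro k _; exact sum_sq_inv_nonneg N _
              · intro k _; exact sum_sq_inv_le N
          _ = 4^r := by rw [Finset.prod_const, hcarde]
      have brest' : (0:ℝ) ≤ ∏ k ∈ (Finset.univ.erase (0 : Fin (r+2))).erase k0,
          ∑ x ∈ II N, (((x:ℤ):ℝ)^2)⁻¹ :=
        Finset.prod_nonneg fun k _ => sum_sq_inv_nonneg N _
      calc ∑ j ∈ S.filter (fun j => (N:ℤ) < 2*((r:ℤ)+1)*|j k0|), t j
          ≤ ∏ k, ∑ x ∈ T k, g k x := hstep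
        _ = (∑ x ∈ II N, |((x:ℤ):ℝ)|⁻¹)
            * ((∑ x ∈ (II N).filter (fun x => (N:ℤ) < 2*((r:ℤ)+1)*|x|), (((x:ℤ):ℝ)^2)⁻¹)
              * ∏ k ∈ (Finset.univ.erase (0 : Fin (r+2))).erase k0,
                  ∑ x ∈ II N, (((x:ℤ):ℝ)^2)⁻¹) := heval
        _ ≤ (5*L) * ((12*((r:ℝ)+1)^2/N) * 4^r) := by
            apply mul_le_mul b0 _ (mul_nonneg bk0' brest') (by positivity)
            exact mul_le_mul bk0 brest brest' (by positivity)
        _ = 5*L*(12*((r:ℝ)+1)^2/N*4^r) := by ring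
    calc ∑ j ∈ S.filter (fun j => ¬ p j), t j
        ≤ ∑ k0 ∈ Finset.univ.erase (0 : Fin (r+2)),
            ∑ j ∈ S.filter (fun j => (N:ℤ) < 2*((r:ℤ)+1)*|j k0|), t j := h1
      _ ≤ ∑ k0 ∈ Finset.univ.erase (0 : Fin (r+2)), (5*L*(12*((r:ℝ)+1)^2/N*4^r)) :=
          Finset.sum_le_sum h2
      _ = ((r:ℝ)+1) * (5*L*(12*((r:ℝ)+1)^2/N*4^r)) := by
          rw [Finset.sum_const, Finset.card_erase_of_mem (Finset.mem_univ (0 : Fin (r+2))),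
            Finset.card_univ, Fintype.card_fin, nsmul_eq_mul]
          push_cast
          ring
  set x : ℝ := (r:ℝ)+1 with hx
  have hx1 : 1 ≤ x := by
    have : (0:ℝ) ≤ (r:ℝ) := Nat.cast_nonneg r
    rw [hx]; linarith
  have hxx : 10*x + 60*x^3 ≤ 70*x^3 := by nlinarith
  have h4 : (0:ℝ) < 4^r := by positivity
  have key : (10*x + 60*x^3) * ((4:ℝ)^r*L/N) ≤ 70*x^3 * ((4:ℝ)^r*L/N) := by
    apply mul_le_mul_of_nonneg_right hxx
    positivity
  calc ∑ j ∈ S.filter p, t j + ∑ j ∈ S.filter (fun j => ¬ p j), t j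
      ≤ 2/(N:ℝ) * (x * (5*L*4^r)) + x * (5*L*(12*x^2/N*4^r)) := by
        exact add_le_add hA hB
    _ = (10*x + 60*x^3) * ((4:ℝ)^r*L/N) := by ring
    _ ≤ 70*x^3 * ((4:ℝ)^r*L/N) := key
    _ = 70 * x^3 * 4^r * L / N := by ring
end

section
/- There exists a constant C > 0 such that for every integer N ≥ 1, ∑_{0<|j|≤N} √( ∑_{0<|l|≤N, |j+l|>N} 1/(j²·l²) ) ≤ C/√N, where j and l range over nonzero integers. -/
lemma aux_sum_inv_sqrt (n : ℕ) :
    ∑ j ∈ Finset.Icc (1:ℤ) (n:ℤ), (Real.sqrt j)⁻¹ ≤ 2 * Real.sqrt n := by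
  induction n with
  | zero => simp
  | succ n ih =>
    have h1 : ((n:ℤ)+1) ∉ Finset.Icc (1:ℤ) (n:ℤ) := by simp
    have h2 : Finset.Icc (1:ℤ) ((n:ℤ)+1) = insert ((n:ℤ)+1) (Finset.Icc (1:ℤ) (n:ℤ)) := by
      ext x; simp [Finset.mem_Icc]; omega
    push_cast
    rw [h2, Finset.sum_insert h1]
    have hb : (0:ℝ) < Real.sqrt (n+1) := Real.sqrt_pos.2 (by positivity)
    have ha : (0:ℝ) ≤ Real.sqrt n := Real.sqrt_nonneg _
    have hab : Real.sqrt n ^ 2 = n := Real.sq_sqrt (by positivity)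
    have hbb : Real.sqrt (n+1) ^ 2 = n+1 := Real.sq_sqrt (by positivity)
    have key : (Real.sqrt ((n:ℝ)+1))⁻¹ ≤ 2 * Real.sqrt (n+1) - 2 * Real.sqrt n := by
      rw [inv_le_iff_one_le_mul₀ hb]
      nlinarith [sq_nonneg (Real.sqrt (n+1) - Real.sqrt n)]
    have := ih
    push_cast at this ⊢
    linarith

lemma aux_sum_inv_sq (M : ℤ) (hM : 1 ≤ M) :
    ∀ N : ℤ, M - 1 ≤ N →
      ∑ l ∈ Finset.Icc M N, (((l:ℝ))^2)⁻¹ ≤ 2/(M:ℝ) - 2/((N:ℝ)+1) := by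
  refine Int.le_induction ?_ ?_
  · have : Finset.Icc M (M-1) = ∅ := by
      apply Finset.Icc_eq_empty; omega
    rw [this]
    push_cast
    simp
  · intro N hN ih
    have h1 : M ≤ N + 1 := by omega
    have h2 : Finset.Icc M (N+1) = insert (N+1) (Finset.Icc M N) := by
      ext x; simp [Finset.mem_Icc]; omega
    have h3 : (N+1) ∉ Finset.Icc M N := by simp
    rw [h2, Finset.sum_insert h3]
    have hN1 : (0:ℝ) < (N:ℝ) + 1 := by
      have : (0:ℤ) < N + 1 := by omega
      exact_mod_cast this
    have hN2 : (0:ℝ) < (N:ℝ) + 2 := by linarith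
    have key : ((((N:ℤ)+1 : ℤ):ℝ)^2)⁻¹ ≤ 2/((N:ℝ)+1) - 2/((N:ℝ)+1+1) := by
      push_cast
      rw [inv_le_iff_one_le_mul₀ (by positivity)]
      have h4 : 2/((N:ℝ)+1) - 2/((N:ℝ)+1+1) = 2/(((N:ℝ)+1)*((N:ℝ)+2)) := by
        field_simp; ring
      rw [h4, div_mul_eq_mul_div, le_div_iff₀ (by positivity)]
      have hN0 : (0:ℝ) ≤ (N:ℝ) := by exact_mod_cast (by omega : (0:ℤ) ≤ N)
      nlinarith
    push_cast at ih key ⊢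
    linarith

set_option maxHeartbeats 1000000 in
lemma aux_pos (N : ℕ) (hN : 1 ≤ N) :
    ∑ j ∈ Finset.Icc (1:ℤ) (N:ℤ),
      Real.sqrt (∑ l ∈ (Finset.Icc (-(N : ℤ)) N).filter
          (fun l => l ≠ 0 ∧ |j + l| > (N : ℤ)),
        1 / ((j : ℝ) ^ 2 * (l : ℝ) ^ 2)) ≤ 8 / Real.sqrt N := by
  have key : ∀ j ∈ Finset.Icc (1:ℤ) (N:ℤ),
      Real.sqrt (∑ l ∈ (Finset.Icc (-(N : ℤ)) N).filter
          (fun l => l ≠ 0 ∧ |j + l| > (N : ℤ)),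
        1 / ((j : ℝ) ^ 2 * (l : ℝ) ^ 2))
      ≤ (2/((N:ℝ)+1)) * ((Real.sqrt (j:ℝ))⁻¹ + (Real.sqrt ((N:ℝ)+1-(j:ℝ)))⁻¹) := by
    intro j hj
    rw [Finset.mem_Icc] at hj
    obtain ⟨hj1, hj2⟩ := hj
    -- identify the filter set
    have hset : (Finset.Icc (-(N : ℤ)) N).filter (fun l => l ≠ 0 ∧ |j + l| > (N : ℤ))
        = Finset.Icc ((N:ℤ)+1-j) N := by
      ext l
      simp only [Finset.mem_filter, Finset.mem_Icc, gt_iff_lt, lt_abs]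
      omega
    rw [hset]
    set a : ℝ := (j:ℝ) with ha_def
    set b : ℝ := (N:ℝ)+1-(j:ℝ) with hb_def
    have ha : (1:ℝ) ≤ a := by rw [ha_def]; exact_mod_cast hj1
    have hb : (1:ℝ) ≤ b := by
      have hjN : (j:ℝ) ≤ (N:ℝ) := by exact_mod_cast hj2
      rw [hb_def]; linarith
    have ha0 : (0:ℝ) < a := by linarith
    have hb0 : (0:ℝ) < b := by linarith
    have hab : a + b = (N:ℝ)+1 := by rw [ha_def, hb_def]; ring
    -- bound the inner sum
    have hsum : ∑ l ∈ Finset.Icc ((N:ℤ)+1-j) N, 1 / ((j : ℝ) ^ 2 * (l : ℝ) ^ 2)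
        = ((j:ℝ)^2)⁻¹ * ∑ l ∈ Finset.Icc ((N:ℤ)+1-j) N, ((l:ℝ)^2)⁻¹ := by
      rw [Finset.mul_sum]
      apply Finset.sum_congr rfl
      intro l _
      rw [one_div, mul_inv]
    have hM : (1:ℤ) ≤ (N:ℤ)+1-j := by omega
    have hbound := aux_sum_inv_sq ((N:ℤ)+1-j) hM (N:ℤ) (by omega)
    have hcast : (((N:ℤ)+1-j : ℤ):ℝ) = b := by push_cast [hb_def]; ring
    rw [hcast] at hbound
    have hinner : ∑ l ∈ Finset.Icc ((N:ℤ)+1-j) N, 1 / ((j : ℝ) ^ 2 * (l : ℝ) ^ 2)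
        ≤ 2 / (a * b * (a+b)) := by
      rw [hsum]
      have h1 : ((j:ℝ)^2)⁻¹ * (2/b - 2/((N:ℝ)+1)) = 2 / (a * b * (a+b)) := by
        rw [← hab, ← ha_def]
        field_simp
        ring
      calc ((j:ℝ)^2)⁻¹ * ∑ l ∈ Finset.Icc ((N:ℤ)+1-j) N, ((l:ℝ)^2)⁻¹
          ≤ ((j:ℝ)^2)⁻¹ * (2/b - 2/((N:ℝ)+1)) := by
            apply mul_le_mul_of_nonneg_left hbound (by positivity)
        _ = 2 / (a * b * (a+b)) := h1
    -- pointwise sqrt bound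
    have hsqrt : Real.sqrt (2 / (a * b * (a+b)))
        ≤ (2/(a+b)) * ((Real.sqrt a)⁻¹ + (Real.sqrt b)⁻¹) := by
      have hsa : Real.sqrt a ^ 2 = a := Real.sq_sqrt ha0.le
      have hsb : Real.sqrt b ^ 2 = b := Real.sq_sqrt hb0.le
      have hsa0 : (0:ℝ) < Real.sqrt a := Real.sqrt_pos.2 ha0
      have hsb0 : (0:ℝ) < Real.sqrt b := Real.sqrt_pos.2 hb0
      rcases le_total a b with h | h
      · have step : Real.sqrt (2 / (a * b * (a+b))) ≤ (2/(a+b)) * (Real.sqrt a)⁻¹ := by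
          have hY : (0:ℝ) ≤ (2/(a+b)) * (Real.sqrt a)⁻¹ := by positivity
          have hX : 2 / (a * b * (a+b)) ≤ ((2/(a+b)) * (Real.sqrt a)⁻¹)^2 := by
            have hY2 : ((2/(a+b)) * (Real.sqrt a)⁻¹)^2 = 4 / ((a+b)^2 * a) := by
              rw [mul_pow, inv_pow, hsa]
              field_simp
              ring
            rw [hY2, div_le_div_iff₀ (by positivity) (by positivity)]
            nlinarith [mul_nonneg (mul_pos ha0 (by linarith : (0:ℝ) < a+b)).le
              (sub_nonneg.2 h)]
          calc Real.sqrt (2 / (a * b * (a+b))) ≤ Real.sqrt (((2/(a+b)) * (Real.sqrt a)⁻¹)^2) :=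
                Real.sqrt_le_sqrt hX
            _ = (2/(a+b)) * (Real.sqrt a)⁻¹ := Real.sqrt_sq hY
        have : (0:ℝ) ≤ (2/(a+b)) * (Real.sqrt b)⁻¹ := by positivity
        nlinarith [step]
      · have step : Real.sqrt (2 / (a * b * (a+b))) ≤ (2/(a+b)) * (Real.sqrt b)⁻¹ := by
          have hY : (0:ℝ) ≤ (2/(a+b)) * (Real.sqrt b)⁻¹ := by positivity
          have hX : 2 / (a * b * (a+b)) ≤ ((2/(a+b)) * (Real.sqrt b)⁻¹)^2 := by
            have hY2 : ((2/(a+b)) * (Real.sqrt b)⁻¹)^2 = 4 / ((a+b)^2 * b) := by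
              rw [mul_pow, inv_pow, hsb]
              field_simp
              ring
            rw [hY2, div_le_div_iff₀ (by positivity) (by positivity)]
            nlinarith [mul_nonneg (mul_pos hb0 (by linarith : (0:ℝ) < a+b)).le
              (sub_nonneg.2 h)]
          calc Real.sqrt (2 / (a * b * (a+b))) ≤ Real.sqrt (((2/(a+b)) * (Real.sqrt b)⁻¹)^2) :=
                Real.sqrt_le_sqrt hX
            _ = (2/(a+b)) * (Real.sqrt b)⁻¹ := Real.sqrt_sq hY
        have : (0:ℝ) ≤ (2/(a+b)) * (Real.sqrt a)⁻¹ := by positivity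
        nlinarith [step]
    calc Real.sqrt (∑ l ∈ Finset.Icc ((N:ℤ)+1-j) N, 1 / ((j : ℝ) ^ 2 * (l : ℝ) ^ 2))
        ≤ Real.sqrt (2 / (a * b * (a+b))) := Real.sqrt_le_sqrt hinner
      _ ≤ (2/(a+b)) * ((Real.sqrt a)⁻¹ + (Real.sqrt b)⁻¹) := hsqrt
      _ = (2/((N:ℝ)+1)) * ((Real.sqrt (j:ℝ))⁻¹ + (Real.sqrt ((N:ℝ)+1-(j:ℝ)))⁻¹) := by
          rw [hab]
  calc ∑ j ∈ Finset.Icc (1:ℤ) (N:ℤ),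
      Real.sqrt (∑ l ∈ (Finset.Icc (-(N : ℤ)) N).filter
          (fun l => l ≠ 0 ∧ |j + l| > (N : ℤ)),
        1 / ((j : ℝ) ^ 2 * (l : ℝ) ^ 2))
      ≤ ∑ j ∈ Finset.Icc (1:ℤ) (N:ℤ),
          (2/((N:ℝ)+1)) * ((Real.sqrt (j:ℝ))⁻¹ + (Real.sqrt ((N:ℝ)+1-(j:ℝ)))⁻¹) :=
        Finset.sum_le_sum key
    _ = (2/((N:ℝ)+1)) * ((∑ j ∈ Finset.Icc (1:ℤ) (N:ℤ), (Real.sqrt (j:ℝ))⁻¹)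
          + ∑ j ∈ Finset.Icc (1:ℤ) (N:ℤ), (Real.sqrt ((N:ℝ)+1-(j:ℝ)))⁻¹) := by
        rw [← Finset.mul_sum, ← Finset.sum_add_distrib]
    _ ≤ 8 / Real.sqrt N := by
        have hre : ∑ j ∈ Finset.Icc (1:ℤ) (N:ℤ), (Real.sqrt ((N:ℝ)+1-(j:ℝ)))⁻¹
            = ∑ j ∈ Finset.Icc (1:ℤ) (N:ℤ), (Real.sqrt (j:ℝ))⁻¹ := by
          apply Finset.sum_nbij' (fun i => (N:ℤ)+1-i) (fun i => (N:ℤ)+1-i)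
          · intro a ha; rw [Finset.mem_Icc] at *; omega
          · intro a ha; rw [Finset.mem_Icc] at *; omega
          · intro a _; omega
          · intro a _; omega
          · intro a ha
            congr 1
            push_cast
            ring
        rw [hre]
        have h1 := aux_sum_inv_sqrt N
        have hsN : (0:ℝ) < Real.sqrt N := Real.sqrt_pos.2 (by exact_mod_cast hN)
        have hNN : Real.sqrt N * Real.sqrt N = N := Real.mul_self_sqrt (by positivity)
        have hsum_nonneg : (0:ℝ) ≤ ∑ j ∈ Finset.Icc (1:ℤ) (N:ℤ), (Real.sqrt (j:ℝ))⁻¹ := by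
          apply Finset.sum_nonneg; intro i _; positivity
        have hstep : (2/((N:ℝ)+1)) * ((∑ j ∈ Finset.Icc (1:ℤ) (N:ℤ), (Real.sqrt (j:ℝ))⁻¹)
            + ∑ j ∈ Finset.Icc (1:ℤ) (N:ℤ), (Real.sqrt (j:ℝ))⁻¹)
            ≤ (2/((N:ℝ)+1)) * (4 * Real.sqrt N) := by
          apply mul_le_mul_of_nonneg_left _ (by positivity)
          linarith
        refine hstep.trans ?_
        rw [div_mul_eq_mul_div, div_le_div_iff₀ (by positivity) hsN]
        nlinarith [Real.sqrt_nonneg (N:ℝ)]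


lemma aux_neg_sym (N : ℕ) (j : ℤ) :
    ∑ l ∈ (Finset.Icc (-(N : ℤ)) N).filter
        (fun l => l ≠ 0 ∧ |(-j) + l| > (N : ℤ)),
      1 / (((-j : ℤ) : ℝ) ^ 2 * (l : ℝ) ^ 2)
    = ∑ l ∈ (Finset.Icc (-(N : ℤ)) N).filter
        (fun l => l ≠ 0 ∧ |j + l| > (N : ℤ)),
      1 / ((j : ℝ) ^ 2 * (l : ℝ) ^ 2) := by
  apply Finset.sum_nbij' (fun l => -l) (fun l => -l)
  · intro a ha
    simp only [Finset.mem_filter, Finset.mem_Icc] at *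
    constructor
    · omega
    constructor
    · omega
    · have := ha.2.2
      have h : j + -a = -(-j + a) := by ring
      rw [h, abs_neg]
      exact this
  · intro a ha
    simp only [Finset.mem_filter, Finset.mem_Icc] at *
    constructor
    · omega
    constructor
    · omega
    · have := ha.2.2
      have h : -j + -a = -(j + a) := by ring
      rw [h, abs_neg]
      exact this
  · intro a _; ring
  · intro a _; ring
  · intro a _
    push_cast
    ring

/-- There is `C > 0` such that for every `N ≥ 1`,
`∑_{0<|j|≤N} √(∑_{0<|l|≤N, |j+l|>N} 1/(j² l²)) ≤ C/√N`. -/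
theorem sum_sqrt_inner_sum_le :
    ∃ C : ℝ, 0 < C ∧ ∀ N : ℕ, 1 ≤ N →
      ∑ j ∈ (Finset.Icc (-(N : ℤ)) N).filter (fun j => j ≠ 0),
        Real.sqrt (∑ l ∈ (Finset.Icc (-(N : ℤ)) N).filter
            (fun l => l ≠ 0 ∧ |j + l| > (N : ℤ)),
          1 / ((j : ℝ) ^ 2 * (l : ℝ) ^ 2))
      ≤ C / Real.sqrt N := by
  refine ⟨16, by norm_num, ?_⟩
  intro N hN
  set f : ℤ → ℝ := fun j =>
    Real.sqrt (∑ l ∈ (Finset.Icc (-(N : ℤ)) N).filter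
        (fun l => l ≠ 0 ∧ |j + l| > (N : ℤ)),
      1 / ((j : ℝ) ^ 2 * (l : ℝ) ^ 2)) with hf
  have hsplit : (Finset.Icc (-(N : ℤ)) N).filter (fun j => j ≠ 0)
      = (Finset.Icc (-(N:ℤ)) (-1)) ∪ (Finset.Icc (1:ℤ) N) := by
    ext x
    simp only [Finset.mem_filter, Finset.mem_Icc, Finset.mem_union]
    omega
  have hdisj : Disjoint (Finset.Icc (-(N:ℤ)) (-1)) (Finset.Icc (1:ℤ) N) := by
    rw [Finset.disjoint_left]
    intro a ha hb
    rw [Finset.mem_Icc] at *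
    omega
  have hnegsum : ∑ j ∈ Finset.Icc (-(N:ℤ)) (-1), f j = ∑ j ∈ Finset.Icc (1:ℤ) N, f j := by
    apply Finset.sum_nbij' (fun i => -i) (fun i => -i)
    · intro a ha; rw [Finset.mem_Icc] at *; omega
    · intro a ha; rw [Finset.mem_Icc] at *; omega
    · intro a _; ring
    · intro a _; ring
    · intro a _
      have h := aux_neg_sym N (-a)
      simp only [neg_neg] at h
      rw [hf]
      exact congrArg Real.sqrt h
  have hpos := aux_pos N hN
  rw [hsplit, Finset.sum_union hdisj]
  have hfpos : ∑ j ∈ Finset.Icc (1:ℤ) N, f j ≤ 8 / Real.sqrt N := hpos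
  rw [hnegsum]
  have : (16:ℝ) / Real.sqrt N = 8 / Real.sqrt N + 8 / Real.sqrt N := by ring
  rw [this]
  exact add_le_add hfpos hfpos
end

section
/- There exists a constant C > 0 such that for every integer N ≥ 2, the sum over pairs of nonzero integers j, l with 0 < |j| ≤ N, 0 < |l| ≤ N and |j + l| > N of |j|/l² is at most C·N·ln N. -/
lemma icc_int_insert (m : ℕ) :
    Finset.Icc (1:ℤ) ((m:ℤ)+1) = insert ((m:ℤ)+1) (Finset.Icc 1 (m:ℤ)) := by
  ext x; simp only [Finset.mem_Icc, Finset.mem_insert]; omega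

lemma harmonic_int_le : ∀ n : ℕ, 1 ≤ n →
    ∑ l ∈ Finset.Icc (1 : ℤ) (n : ℤ), 1 / (l : ℝ) ≤ 1 + Real.log n := by
  intro n
  induction n with
  | zero => omega
  | succ m ih =>
    intro _
    rcases Nat.lt_or_ge m 1 with h | hm
    · interval_cases m
      norm_num
    · have hsum := ih hm
      have hm0 : (0:ℝ) < m := by exact_mod_cast hm
      rw [show ((m+1:ℕ):ℤ) = (m:ℤ)+1 by push_cast; ring, icc_int_insert,
        Finset.sum_insert (by simp)]
      have hlog : 1/((m:ℝ)+1) ≤ Real.log (m+1) - Real.log m := by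
        have hx : (0:ℝ) < (m:ℝ)/((m:ℝ)+1) := by positivity
        have h2 := Real.log_le_sub_one_of_pos hx
        rw [Real.log_div (by positivity) (by positivity)] at h2
        have h3 : Real.log m - Real.log ((m:ℝ)+1) ≤ -(1/((m:ℝ)+1)) := by
          calc Real.log m - Real.log ((m:ℝ)+1) ≤ (m:ℝ)/((m:ℝ)+1) - 1 := h2
          _ = -(1/((m:ℝ)+1)) := by field_simp; ring
        linarith
      push_cast
      linarith

/-- There is `C > 0` such that for every `N ≥ 2`,
`∑_{0<|j|,|l|≤N, |j+l|>N} |j|/l² ≤ C N ln N`. -/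
theorem sum_abs_div_sq_le :
    ∃ C : ℝ, 0 < C ∧ ∀ N : ℕ, 2 ≤ N →
      ∑ q ∈ ((Finset.Icc (-(N : ℤ)) N ×ˢ Finset.Icc (-(N : ℤ)) N).filter
          (fun q => q.1 ≠ 0 ∧ q.2 ≠ 0 ∧ |q.1 + q.2| > (N : ℤ))),
        |(q.1 : ℝ)| / (q.2 : ℝ) ^ 2 ≤ C * N * Real.log N := by
  refine ⟨12, by norm_num, fun N hN => ?_⟩
  set I := Finset.Icc (-(N : ℤ)) (N : ℤ) with hI
  have hNpos : (0:ℝ) < N := by positivity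
  have hN1 : 1 ≤ N := by omega
  have hlog2 : Real.log 2 ≤ Real.log N := by
    apply Real.log_le_log (by norm_num)
    exact_mod_cast hN
  have hlogpos : (1:ℝ)/2 ≤ Real.log N := by
    have := Real.log_two_gt_d9
    linarith
  set g : ℤ → ℝ := fun l => if l = 0 then 0 else 2 * N / |(l:ℝ)| with hg
  -- Step 1: inner-sum bound
  have step1 : ∀ l ∈ I, (∑ j ∈ I, if ((j:ℤ) ≠ 0 ∧ l ≠ 0 ∧ |j + l| > (N:ℤ)) then
      |(j : ℝ)| / (l : ℝ) ^ 2 else 0) ≤ g l := by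
    intro l hl
    rcases eq_or_ne l 0 with rfl | hl0
    · simp [hg]
    · have hlabs : (0:ℝ) < |(l:ℝ)| := by
        simp only [abs_pos]
        exact_mod_cast hl0
      have hlN : |l| ≤ (N:ℤ) := by
        rw [hI, Finset.mem_Icc] at hl; rw [abs_le]; omega
      have hb : (∑ j ∈ I, if ((j:ℤ) ≠ 0 ∧ l ≠ 0 ∧ |j + l| > (N:ℤ)) then
          |(j : ℝ)| / (l : ℝ) ^ 2 else 0) ≤
          ∑ j ∈ I, if ((N:ℤ) - |l| < |j|) then (N:ℝ) / (l:ℝ)^2 else 0 := by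
        apply Finset.sum_le_sum
        intro j hj
        have hjN : |j| ≤ (N:ℤ) := by
          rw [hI, Finset.mem_Icc] at hj; rw [abs_le]; omega
        split_ifs with h1 h2 h2
        · have hle : |(j:ℝ)| ≤ (N:ℝ) := by exact_mod_cast hjN
          gcongr
        · exfalso
          obtain ⟨-, -, h3⟩ := h1
          have := abs_add_le j l
          omega
        · positivity
        · exact le_rfl
      have hR : (∑ j ∈ I, if ((N:ℤ) - |l| < |j|) then (N:ℝ)/(l:ℝ)^2 else 0)
          = ((I.filter (fun j => (N:ℤ) - |l| < |j|)).card : ℝ) * ((N:ℝ)/(l:ℝ)^2) := by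
        rw [← Finset.sum_filter, Finset.sum_const, nsmul_eq_mul]
      rw [hR] at hb
      -- card bound
      have hcard : (I.filter (fun j => (N:ℤ) - |l| < |j|)).card ≤ 2 * |l|.toNat := by
        have hsub : I.filter (fun j => (N:ℤ) - |l| < |j|) ⊆
            Finset.Icc (-(N:ℤ)) (-((N:ℤ) - |l|) - 1) ∪ Finset.Icc ((N:ℤ) - |l| + 1) N := by
          intro j hj
          simp only [hI, Finset.mem_filter, Finset.mem_Icc, Finset.mem_union] at *
          rcases abs_cases j with ⟨he, -⟩ | ⟨he, -⟩ <;> omega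
        calc (I.filter (fun j => (N:ℤ) - |l| < |j|)).card
            ≤ _ := Finset.card_le_card hsub
          _ ≤ (Finset.Icc (-(N:ℤ)) (-((N:ℤ) - |l|) - 1)).card
              + (Finset.Icc ((N:ℤ) - |l| + 1) (N:ℤ)).card := Finset.card_union_le _ _
          _ ≤ 2 * |l|.toNat := by
              rw [Int.card_Icc, Int.card_Icc]
              omega
      have hcardR : ((I.filter (fun j => (N:ℤ) - |l| < |j|)).card : ℝ) ≤ 2 * |(l:ℝ)| := by
        have : ((2 * |l|.toNat : ℕ) : ℝ) = 2 * |(l:ℝ)| := by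
          push_cast [Int.toNat_of_nonneg (abs_nonneg l)]
          norm_num
          exact_mod_cast Int.toNat_of_nonneg (abs_nonneg l)
        calc ((I.filter (fun j => (N:ℤ) - |l| < |j|)).card : ℝ)
            ≤ ((2 * |l|.toNat : ℕ) : ℝ) := by exact_mod_cast hcard
          _ = 2 * |(l:ℝ)| := this
      have hsq : ((l:ℝ))^2 = |(l:ℝ)|^2 := (sq_abs _).symm
      calc (∑ j ∈ I, if ((j:ℤ) ≠ 0 ∧ l ≠ 0 ∧ |j + l| > (N:ℤ)) then
            |(j : ℝ)| / (l : ℝ) ^ 2 else 0)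
          ≤ ((I.filter (fun j => (N:ℤ) - |l| < |j|)).card : ℝ) * ((N:ℝ)/(l:ℝ)^2) := hb
        _ ≤ (2 * |(l:ℝ)|) * ((N:ℝ)/(l:ℝ)^2) := by
            apply mul_le_mul_of_nonneg_right hcardR (by positivity)
        _ = 2 * N / |(l:ℝ)| := by
            rw [hsq]; field_simp
        _ = g l := by simp [hg, hl0]
  -- Step 2: sum of g
  have step2 : ∑ l ∈ I, g l ≤ 4 * N * (1 + Real.log N) := by
    have hsplit : I = Finset.Icc (-(N:ℤ)) (-1) ∪ Finset.Icc (0:ℤ) N := by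
      ext x; simp only [hI, Finset.mem_Icc, Finset.mem_union]; omega
    have hdisj : Disjoint (Finset.Icc (-(N:ℤ)) (-1)) (Finset.Icc (0:ℤ) N) := by
      rw [Finset.disjoint_left]
      intro a ha ha'
      simp only [Finset.mem_Icc] at *
      omega
    have himg : Finset.Icc (-(N:ℤ)) (-1) = (Finset.Icc (1:ℤ) N).image (fun x => -x) := by
      ext x
      simp only [Finset.mem_Icc, Finset.mem_image]
      constructor
      · intro h; exact ⟨-x, by omega, by omega⟩
      · rintro ⟨y, hy, rfl⟩; omega
    have hneg : ∑ l ∈ Finset.Icc (-(N:ℤ)) (-1), g l = ∑ l ∈ Finset.Icc (1:ℤ) N, g l := by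
      rw [himg, Finset.sum_image (by intro a _ b _ h; simp only [neg_inj] at h; omega)]
      apply Finset.sum_congr rfl
      intro x hx
      simp [hg]
    have hzero : ∑ l ∈ Finset.Icc (0:ℤ) N, g l = ∑ l ∈ Finset.Icc (1:ℤ) N, g l := by
      have : Finset.Icc (0:ℤ) N = insert (0:ℤ) (Finset.Icc 1 (N:ℤ)) := by
        ext x; simp only [Finset.mem_Icc, Finset.mem_insert]; omega
      rw [this, Finset.sum_insert (by simp)]
      simp [hg]
    have hpos : ∑ l ∈ Finset.Icc (1:ℤ) N, g l ≤ 2 * N * (1 + Real.log N) := by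
      have he : ∑ l ∈ Finset.Icc (1:ℤ) N, g l = 2 * N * ∑ l ∈ Finset.Icc (1:ℤ) N, 1/(l:ℝ) := by
        rw [Finset.mul_sum]
        apply Finset.sum_congr rfl
        intro x hx
        rw [Finset.mem_Icc] at hx
        have hx0 : x ≠ 0 := by omega
        have hxpos : (0:ℝ) < (x:ℝ) := by exact_mod_cast (by omega : (0:ℤ) < x)
        simp only [hg, if_neg hx0]
        rw [abs_of_pos hxpos]
        ring
      rw [he]
      have := harmonic_int_le N hN1
      have h2N : (0:ℝ) ≤ 2 * N := by positivity
      nlinarith [this]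
    rw [hsplit, Finset.sum_union hdisj, hneg, hzero]
    linarith
  -- combine
  rw [Finset.sum_filter, Finset.sum_product, Finset.sum_comm]
  calc (∑ l ∈ I, ∑ j ∈ I, if ((j:ℤ) ≠ 0 ∧ l ≠ 0 ∧ |j + l| > (N:ℤ)) then
        |(j : ℝ)| / (l : ℝ) ^ 2 else 0)
      ≤ ∑ l ∈ I, g l := Finset.sum_le_sum step1
    _ ≤ 4 * N * (1 + Real.log N) := step2
    _ ≤ 12 * N * Real.log N := by nlinarith
end

section
/- For every integer m ≥ 3 there exists a constant C > 0 such that for every integer N ≥ 1 and every integer J with 1 ≤ J ≤ N, the sum over (m−1)-tuples of positive integers (j_1,…,j_{m−1}) with j_k ≤ N for all k and j_1 + ⋯ + j_{m−1} = J of 1/(j_1 · j_2 · ∏_{k=3}^{m−1} j_k²) is at most C. (For m = 3 the product ∏_{k=3}^{m−1} j_k² is the empty product, equal to 1.) -/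
lemma sum_inv_sq_le' (N : ℕ) : ∑ a ∈ Finset.Icc 1 N, (1 / (a:ℝ)^2) ≤ 2 := by
  have h : ∀ M : ℕ, 1 ≤ M → ∑ a ∈ Finset.Icc 1 M, (1 / (a:ℝ)^2) ≤ 2 - 1/(M:ℝ) := by
    intro M hM
    induction M, hM using Nat.le_induction with
    | base => norm_num
    | succ n hn ih =>
      rw [Finset.sum_Icc_succ_top (by omega)]
      have h1 : (1:ℝ) ≤ (n:ℝ) := by exact_mod_cast hn
      have hstep : 1/((n:ℝ)+1)^2 ≤ 1/(n:ℝ) - 1/((n:ℝ)+1) := by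
        rw [div_sub_div _ _ (by linarith) (by linarith),
          div_le_div_iff₀ (by positivity) (by positivity)]
        nlinarith
      push_cast
      linarith
  rcases Nat.eq_zero_or_pos N with h0 | h1
  · subst h0; norm_num
  · have hN : (0:ℝ) < (N:ℝ) := by exact_mod_cast h1
    have : 0 < 1/(N:ℝ) := by positivity
    linarith [h N h1]

lemma aux_amgm' (x y P : ℝ) (hx : 1 ≤ x) (hy : 1 ≤ y) (hP : 0 < P) :
    1/(x*y*P) ≤ (1/y^2*(1/P) + 1/x^2*(1/P))/2 := by
  have hx0 : 0 < x := by linarith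
  have hy0 : 0 < y := by linarith
  have h2 : 2*(x*y) ≤ x^2+y^2 := by nlinarith [sq_nonneg (x-y)]
  rw [one_div_mul_one_div, one_div_mul_one_div,
    div_add_div _ _ (by positivity) (by positivity), div_div,
    div_le_div_iff₀ (by positivity) (by positivity)]
  have h3 : 0 ≤ x*y*P*P := by positivity
  nlinarith [mul_le_mul_of_nonneg_right h2 h3]

set_option maxHeartbeats 1000000 in
/-- For every `m ≥ 3` there is `C > 0` such that for every
`N ≥ 1` and every `1 ≤ J ≤ N`, the sum over `(m-1)`-tuples of positive
integers `(j_1,…,j_{m-1})` with `j_k ≤ N` and `j_1 + ⋯ + j_{m-1} = J` of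
`1/(j_1 j_2 ∏_{k=3}^{m-1} j_k²)` is at most `C`. -/
theorem sum_fixed_total_le (m : ℕ) (hm : 3 ≤ m) :
    ∃ C : ℝ, 0 < C ∧ ∀ N J : ℕ, 1 ≤ J → J ≤ N →
      ∑ j ∈ (Fintype.piFinset (fun _ : Fin (m - 1) => Finset.Icc 1 N)).filter
          (fun j => ∑ k, j k = J),
        1 / ((j ⟨0, by omega⟩ : ℝ) * (j ⟨1, by omega⟩ : ℝ) *
          ∏ k ∈ Finset.univ.filter (fun k : Fin (m - 1) => 2 ≤ (k : ℕ)), ((j k : ℝ)) ^ 2)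
      ≤ C := by
  classical
  refine ⟨2^m, by positivity, ?_⟩
  intro N J hJ hJN
  have h0 : 0 < m - 1 := by omega
  have h1 : 1 < m - 1 := by omega
  set i0 : Fin (m-1) := ⟨0, h0⟩ with hi0def
  set i1 : Fin (m-1) := ⟨1, h1⟩ with hi1def
  set F := (Fintype.piFinset (fun _ : Fin (m - 1) => Finset.Icc 1 N)).filter
      (fun j => ∑ k, j k = J) with hFdef
  set g : Fin (m-1) → (Fin (m-1) → ℕ) → ℝ :=
    fun i j => ∏ k, (if k = i then (1:ℝ) else 1/(j k:ℝ)^2) with hgdef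
  have key : ∀ i : Fin (m-1), ∑ j ∈ F, g i j ≤ 2^(m-1) := by
    intro i
    set t : Fin (m-1) → Finset ℕ :=
      fun k => if k = i then ({1} : Finset ℕ) else Finset.Icc 1 N with htdef
    have hinj : ∀ a ∈ F, ∀ b ∈ F, Function.update a i 1 = Function.update b i 1 → a = b := by
      intro a ha b hb hab
      have hka : ∀ k : Fin (m-1), k ≠ i → a k = b k := by
        intro k hk
        have := congrFun hab k
        simpa [Function.update_of_ne hk] using this
      have hsa : (∑ k, a k) = J := (Finset.mem_filter.mp ha).2
      have hsb : (∑ k, b k) = J := (Finset.mem_filter.mp hb).2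
      have herase : ∑ k ∈ Finset.univ.erase i, a k = ∑ k ∈ Finset.univ.erase i, b k :=
        Finset.sum_congr rfl (fun k hk => hka k (Finset.mem_erase.mp hk).1)
      have hea : a i + ∑ k ∈ Finset.univ.erase i, a k = J := by
        rw [Finset.add_sum_erase _ _ (Finset.mem_univ i)]; exact hsa
      have heb : b i + ∑ k ∈ Finset.univ.erase i, b k = J := by
        rw [Finset.add_sum_erase _ _ (Finset.mem_univ i)]; exact hsb
      funext k
      by_cases hk : k = i
      · subst hk; omega
      · exact hka k hk
    have hgupd : ∀ j, g i (Function.update j i 1) = g i j := by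
      intro j
      apply Finset.prod_congr rfl
      intro k _
      by_cases hk : k = i
      · subst hk; simp
      · simp [Function.update_of_ne hk, hk]
    have hgnonneg : ∀ j : Fin (m-1) → ℕ, 0 ≤ g i j := by
      intro j
      apply Finset.prod_nonneg
      intro k _
      by_cases hk : k = i <;> simp [hk] <;> positivity
    have hsubset : F.image (fun j => Function.update j i 1) ⊆ Fintype.piFinset t := by
      intro x hx
      rcases Finset.mem_image.mp hx with ⟨j, hj, rfl⟩
      rw [Fintype.mem_piFinset]
      intro k
      by_cases hk : k = i
      · subst hk; simp [htdef]
      · have hjk := (Fintype.mem_piFinset.mp (Finset.mem_filter.mp hj).1) k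
        simp only [Function.update_of_ne hk, htdef, if_neg hk]
        simpa using hjk
    calc ∑ j ∈ F, g i j
        = ∑ x ∈ F.image (fun j => Function.update j i 1), g i x := by
          rw [Finset.sum_image hinj]
          exact Finset.sum_congr rfl (fun j _ => (hgupd j).symm)
      _ ≤ ∑ x ∈ Fintype.piFinset t, g i x :=
          Finset.sum_le_sum_of_subset_of_nonneg hsubset (fun x _ _ => hgnonneg x)
      _ = ∏ k : Fin (m-1), ∑ a ∈ t k, (if k = i then (1:ℝ) else 1/(a:ℝ)^2) :=
          (Finset.prod_univ_sum t (fun k a => if k = i then (1:ℝ) else 1/(a:ℝ)^2)).symm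
      _ ≤ ∏ k : Fin (m-1), (2:ℝ) := by
          apply Finset.prod_le_prod
          · intro k _
            apply Finset.sum_nonneg
            intro a _
            by_cases hk : k = i <;> simp [hk] <;> positivity
          · intro k _
            by_cases hk : k = i
            · subst hk; simp [htdef]
            · simp only [htdef, if_neg hk]
              exact sum_inv_sq_le' N
      _ = 2^(m-1) := by simp [Finset.prod_const]
  have hpoint : ∀ j ∈ F,
      1 / ((j i0 : ℝ) * (j i1 : ℝ) *
          ∏ k ∈ Finset.univ.filter (fun k : Fin (m - 1) => 2 ≤ (k : ℕ)), ((j k : ℝ)) ^ 2)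
        ≤ (g i0 j + g i1 j) / 2 := by
    intro j hj
    have hjk : ∀ k : Fin (m-1), 1 ≤ j k := by
      intro k
      have := (Fintype.mem_piFinset.mp (Finset.mem_filter.mp hj).1) k
      exact (Finset.mem_Icc.mp this).1
    set P : ℝ := ∏ k ∈ Finset.univ.filter (fun k : Fin (m - 1) => 2 ≤ (k : ℕ)), ((j k : ℝ)) ^ 2
      with hPdef
    have hP : 0 < P := by
      apply Finset.prod_pos
      intro k _
      have h := hjk k
      have : (1:ℝ) ≤ (j k : ℝ) := by exact_mod_cast h
      positivity
    have hx : (1:ℝ) ≤ (j i0 : ℝ) := by exact_mod_cast hjk i0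
    have hy : (1:ℝ) ≤ (j i1 : ℝ) := by exact_mod_cast hjk i1
    have hne01 : i0 ≠ i1 := by simp [hi0def, hi1def, Fin.ext_iff]
    have hi0not : i0 ∉ Finset.univ.filter (fun k : Fin (m-1) => 2 ≤ (k:ℕ)) := by
      simp [hi0def]
    have hi1not : i1 ∉ Finset.univ.filter (fun k : Fin (m-1) => 2 ≤ (k:ℕ)) := by
      simp [hi1def]
    have hi0notins : i0 ∉ insert i1 (Finset.univ.filter (fun k : Fin (m-1) => 2 ≤ (k:ℕ))) := by
      simp [hne01, hi0not]
    have huniv : (Finset.univ : Finset (Fin (m-1))) =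
        insert i0 (insert i1 (Finset.univ.filter (fun k : Fin (m-1) => 2 ≤ (k:ℕ)))) := by
      ext k
      simp [hi0def, hi1def, Fin.ext_iff]
      omega
    have hprodne : ∀ i : Fin (m-1), (i:ℕ) < 2 →
        ∏ k ∈ Finset.univ.filter (fun k : Fin (m-1) => 2 ≤ (k:ℕ)),
          (if k = i then (1:ℝ) else 1/(j k:ℝ)^2) = 1/P := by
      intro i hi
      rw [hPdef, one_div, ← Finset.prod_inv_distrib]
      apply Finset.prod_congr rfl
      intro k hk
      have hk2 : 2 ≤ (k:ℕ) := (Finset.mem_filter.mp hk).2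
      have hkne : k ≠ i := by
        intro h; subst h; omega
      simp [hkne, one_div]
    have hg0 : g i0 j = 1/(j i1:ℝ)^2 * (1/P) := by
      rw [hgdef]
      simp only
      rw [huniv, Finset.prod_insert hi0notins, Finset.prod_insert hi1not,
        hprodne i0 (by simp [hi0def])]
      simp [hne01.symm]
    have hg1 : g i1 j = 1/(j i0:ℝ)^2 * (1/P) := by
      rw [hgdef]
      simp only
      rw [huniv, Finset.prod_insert hi0notins, Finset.prod_insert hi1not,
        hprodne i1 (by simp [hi1def])]
      simp [hne01]
    rw [hg0, hg1]
    exact aux_amgm' (j i0 : ℝ) (j i1 : ℝ) P hx hy hP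
  have hle : ∑ j ∈ F,
      1 / ((j i0 : ℝ) * (j i1 : ℝ) *
          ∏ k ∈ Finset.univ.filter (fun k : Fin (m - 1) => 2 ≤ (k : ℕ)), ((j k : ℝ)) ^ 2)
      ≤ (2:ℝ)^m := by
    calc ∑ j ∈ F, 1 / ((j i0 : ℝ) * (j i1 : ℝ) *
            ∏ k ∈ Finset.univ.filter (fun k : Fin (m - 1) => 2 ≤ (k : ℕ)), ((j k : ℝ)) ^ 2)
        ≤ ∑ j ∈ F, (g i0 j + g i1 j) / 2 := Finset.sum_le_sum hpoint
      _ = (∑ j ∈ F, g i0 j + ∑ j ∈ F, g i1 j) / 2 := by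
          rw [← Finset.sum_add_distrib, Finset.sum_div]
      _ ≤ ((2:ℝ)^(m-1) + (2:ℝ)^(m-1)) / 2 := by
          have := key i0
          have := key i1
          linarith
      _ = (2:ℝ)^(m-1) := by ring
      _ ≤ (2:ℝ)^m := by
          apply pow_le_pow_right₀ (by norm_num)
          omega
  exact hle
end
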